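/- arXiv:2011.11427 — 6 statements merged into one kernel-verified Lean document; each statement's English description precedes it below -/
import Mathlib

section
/- Let k ≥ 2 and n ≥ (2k)^{8k²} be integers, and let α, β be real numbers with (2k+1)/(8k+6) < α ≤ 1/4 and 1/2 − 2α ≤ β ≤ α/(2k+1). If G is a C_{2k+1}-free graph on n vertices with e(G) ≥ αn² and minimum degree δ(G) ≥ (1/2 − β)n, then G is bipartite. -/
open SimpleGraph

/-- `G` contains a copy of `H` as a (not necessarily induced) subgraph. -/
def HasSubCopy {α β : Type*} (H : SimpleGraph α) (G : SimpleGraph β) : Prop :=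
  ∃ f : H →g G, Function.Injective f

/-- `G` is `C_m`-free: it contains no copy of the cycle on `m` vertices. -/
def CycleFree (m : ℕ) {β : Type*} (G : SimpleGraph β) : Prop :=
  ¬ HasSubCopy (cycleGraph m) G

/-- A graph is bipartite: its vertex set splits into two independent sets. -/
def IsBipartite {β : Type*} (G : SimpleGraph β) : Prop :=
  ∃ A : Set β, (∀ u ∈ A, ∀ v ∈ A, ¬ G.Adj u v) ∧ (∀ u ∉ A, ∀ v ∉ A, ¬ G.Adj u v)

/- ----------------------------------------------------------------
   Auxiliary theory: walks as functions `ℕ → V`.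
   ---------------------------------------------------------------- -/

section walks

open Finset
open scoped Classical

variable {V : Type*} {G : SimpleGraph V}

/-- `f` is a walk of length `ℓ` in `G` (consecutive values adjacent). -/
def WFun (G : SimpleGraph V) (f : ℕ → V) (ℓ : ℕ) : Prop := ∀ i < ℓ, G.Adj (f i) (f (i + 1))

/-- `G` has an odd closed walk. -/
def HasOddCW (G : SimpleGraph V) : Prop := ∃ ℓ, Odd ℓ ∧ ∃ f : ℕ → V, f ℓ = f 0 ∧ WFun G f ℓ

/-- an injectively embedded cycle of length `m`. -/
def QCyc (G : SimpleGraph V) (m : ℕ) : Prop :=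
  ∃ f : ℕ → V, (∀ i < m, G.Adj (f i) (f ((i + 1) % m))) ∧
    (∀ i < m, ∀ j < m, f i = f j → i = j)

lemma wfun_concat {f g : ℕ → V} {a b : ℕ} (hf : WFun G f a) (hg : WFun G g b)
    (hfg : f a = g 0) :
    ∃ h : ℕ → V, h 0 = f 0 ∧ h (a + b) = g b ∧ WFun G h (a + b) := by
  refine ⟨fun i => if i < a then f i else g (i - a), ?_, ?_, ?_⟩
  · by_cases h0 : 0 < a
    · simp [h0]
    · have : a = 0 := by omega
      subst this
      simpa using hfg.symm
  · have : ¬ a + b < a := by omega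
    simp [this]
  · intro i hi
    by_cases h1 : i < a
    · by_cases h2 : i + 1 < a
      · simpa [h1, h2] using hf i h1
      · have : i + 1 = a := by omega
        have h3 : ¬ i + 1 < a := by omega
        simp only [h1, h3, if_true, if_false]
        rw [this, Nat.sub_self, ← hfg, ← this]
        exact hf i h1
    · have h2 : ¬ i + 1 < a := by omega
      simp only [h1, h2, if_false]
      have : i + 1 - a = (i - a) + 1 := by omega
      rw [this]
      exact hg _ (by omega)

lemma wfun_reverse {f : ℕ → V} {a : ℕ} (hf : WFun G f a) :
    WFun G (fun i => f (a - i)) a := by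
  intro i hi
  have := hf (a - (i+1)) (by omega)
  simp only []
  rw [show a - (i+1) = a - i - 1 from by omega] at this ⊢
  rw [show a - i - 1 + 1 = a - i from by omega] at this
  exact this.symm

/-- `R u v` : there is a walk from `u` to `v`. -/
private def R (G : SimpleGraph V) (u v : V) : Prop :=
  ∃ (a : ℕ) (f : ℕ → V), f 0 = u ∧ f a = v ∧ WFun G f a

private lemma R_refl (u : V) : R G u u := ⟨0, fun _ => u, rfl, rfl, fun i hi => by omega⟩

private lemma R_symm {u v : V} (h : R G u v) : R G v u := by
  obtain ⟨a, f, h0, ha, hw⟩ := h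
  exact ⟨a, fun i => f (a - i), by simpa using ha, by simpa using h0, wfun_reverse hw⟩

private lemma R_trans {u v w : V} (h1 : R G u v) (h2 : R G v w) : R G u w := by
  obtain ⟨a, f, hf0, hfa, hfw⟩ := h1
  obtain ⟨b, g, hg0, hgb, hgw⟩ := h2
  obtain ⟨h, h0, hab, hw⟩ := wfun_concat hfw hgw (hfa.trans hg0.symm)
  exact ⟨a + b, h, h0.trans hf0, hab.trans hgb, hw⟩

private lemma R_of_adj {u v : V} (h : G.Adj u v) : R G u v := by
  refine ⟨1, fun i => if i = 0 then u else v, by simp, by simp, ?_⟩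
  intro i hi
  have : i = 0 := by omega
  simp [this, h]

/-- combine two walks from a common basepoint to adjacent vertices into a closed walk. -/
private lemma closed_of_two_walks {r u v : V} {a b : ℕ} (f g : ℕ → V)
    (hf0 : f 0 = r) (hfa : f a = u) (hfw : WFun G f a)
    (hg0 : g 0 = r) (hgb : g b = v) (hgw : WFun G g b)
    (huv : G.Adj u v) :
    ∃ h : ℕ → V, h (a + 1 + b) = h 0 ∧ WFun G h (a + 1 + b) := by
  obtain ⟨e, he0, he1, hew⟩ : ∃ e : ℕ → V, e 0 = u ∧ e 1 = v ∧ WFun G e 1 := by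
    refine ⟨fun i => if i = 0 then u else v, by simp, by simp, ?_⟩
    intro i hi
    have hi0 : i = 0 := by omega
    simp [hi0, huv]
  obtain ⟨h1, h10, h1a, h1w⟩ := wfun_concat hfw hew (hfa.trans he0.symm)
  have hrw := wfun_reverse hgw
  obtain ⟨h2, h20, h2ab, h2w⟩ := wfun_concat h1w hrw (by simpa [hgb] using h1a.trans he1)
  refine ⟨h2, ?_, h2w⟩
  rw [h20, h10, hf0, h2ab]
  simp [hg0]

lemma isBipartite_of_no_oddCW (h : ¬ HasOddCW G) : _root_.IsBipartite G := by
  classical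
  let s : Setoid V := ⟨R G, ⟨R_refl, R_symm, R_trans⟩⟩
  let rep : V → V := fun v => (@Quotient.mk _ s v).out
  have hrep : ∀ v, R G (rep v) v := by
    intro v
    have : @Quotient.mk _ s ((@Quotient.mk _ s v).out) = @Quotient.mk _ s v :=
      Quotient.out_eq _
    exact @Quotient.exact _ s _ _ this
  have hrep_adj : ∀ u v, G.Adj u v → rep u = rep v := by
    intro u v huv
    have : @Quotient.mk _ s u = @Quotient.mk _ s v := Quotient.sound (R_of_adj huv)
    simp only [rep, this]
  refine ⟨{v | ∃ (a : ℕ) (f : ℕ → V), Even a ∧ f 0 = rep v ∧ f a = v ∧ WFun G f a}, ?_, ?_⟩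
  · rintro u ⟨a, f, hea, hf0, hfa, hfw⟩ v ⟨b, g, heb, hg0, hgb, hgw⟩ huv
    have hru : rep u = rep v := hrep_adj u v huv
    obtain ⟨w, hcl, hw⟩ := closed_of_two_walks f g hf0 hfa hfw (by rw [hg0, hru]) hgb hgw huv
    have hodd : Odd (a + 1 + b) := by
      rcases hea with ⟨x, hx⟩
      rcases heb with ⟨y, hy⟩
      exact ⟨x + y, by omega⟩
    exact h ⟨a + 1 + b, hodd, w, hcl, hw⟩
  · intro u hu v hv huv
    obtain ⟨a, f, hf0, hfa, hfw⟩ := hrep u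
    obtain ⟨b, g, hg0, hgb, hgw⟩ := hrep v
    have hoa : ¬ Even a := fun hea => hu ⟨a, f, hea, hf0, hfa, hfw⟩
    have hob : ¬ Even b := fun heb => hv ⟨b, g, heb, hg0, hgb, hgw⟩
    have hru : rep u = rep v := hrep_adj u v huv
    obtain ⟨w, hcl, hw⟩ := closed_of_two_walks f g hf0 hfa hfw (by rw [hg0, hru]) hgb hgw huv
    have hodd : Odd (a + 1 + b) := by
      rw [Nat.not_even_iff_odd] at hoa hob
      rcases hoa with ⟨x, hx⟩
      rcases hob with ⟨y, hy⟩
      exact ⟨x + y + 1, by omega⟩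
    exact h ⟨a + 1 + b, hodd, w, hcl, hw⟩

/- ------------------------------------------------------------------
   A minimal odd closed walk.
   ------------------------------------------------------------------ -/

lemma exists_min_odd_cycle (h : HasOddCW G) :
    ∃ (g : ℕ) (f : ℕ → V), Odd g ∧ 3 ≤ g ∧ f g = f 0 ∧ WFun G f g ∧
      (∀ i < g, ∀ j < g, f i = f j → i = j) ∧
      (∀ ℓ, Odd ℓ → ℓ < g → ¬ ∃ f' : ℕ → V, f' ℓ = f' 0 ∧ WFun G f' ℓ) := by
  classical
  set S : Set ℕ := {ℓ | Odd ℓ ∧ ∃ f : ℕ → V, f ℓ = f 0 ∧ WFun G f ℓ} with hS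
  have hne : S.Nonempty := h
  obtain ⟨hodd, f, hcl, hwf⟩ := Nat.sInf_mem hne
  set g := sInf S with hg
  have hmin : ∀ ℓ, Odd ℓ → ℓ < g → ¬ ∃ f' : ℕ → V, f' ℓ = f' 0 ∧ WFun G f' ℓ := by
    intro ℓ hℓ hlt hex
    exact absurd (Nat.sInf_le (show ℓ ∈ S from ⟨hℓ, hex⟩)) (by omega)
  have hg1 : g ≠ 1 := by
    intro h1
    have := hwf 0 (by omega)
    rw [h1] at hcl
    rw [hcl] at this
    exact G.irrefl this
  have hg3 : 3 ≤ g := by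
    rcases hodd with ⟨t, ht⟩
    omega
  have haux : ∀ i j, i < j → j < g → f i ≠ f j := by
    intro i j hij hjg heq
    rcases Nat.even_or_odd (j - i) with hev | hod
    · have h1 : WFun G (fun t => f (j + t)) (g - j) := by
        intro t ht
        have := hwf (j + t) (by omega)
        simpa [Nat.add_assoc] using this
      have h2 : WFun G f i := fun t ht => hwf t (by omega)
      obtain ⟨w, hw0, hwab, hww⟩ := wfun_concat h1 h2 (by
        show f (j + (g - j)) = f 0
        rw [Nat.add_sub_cancel' (by omega : j ≤ g), hcl])
      refine hmin (g - j + i) ?_ (by omega) ⟨w, ?_, hww⟩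
      · rcases hodd with ⟨t, ht⟩
        rcases hev with ⟨x, hx⟩
        exact ⟨t - x, by omega⟩
      · rw [hwab, hw0]
        simpa using heq
    · have h1 : WFun G (fun t => f (i + t)) (j - i) := by
        intro t ht
        have := hwf (i + t) (by omega)
        simpa [Nat.add_assoc] using this
      refine hmin (j - i) hod (by omega) ⟨fun t => f (i + t), ?_, h1⟩
      show f (i + (j - i)) = f (i + 0)
      rw [Nat.add_sub_cancel' (by omega : i ≤ j)]
      simpa using heq.symm
  refine ⟨g, f, hodd, hg3, hcl, hwf, ?_, hmin⟩
  intro i hi j hj heq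
  rcases Nat.lt_trichotomy i j with h' | h' | h'
  · exact absurd heq (haux i j h' hj)
  · exact h'
  · exact absurd heq.symm (haux j i h' hi)

lemma cyclic_adj {f : ℕ → V} {g : ℕ} (hg : 1 ≤ g) (hcl : f g = f 0) (hwf : WFun G f g) :
    ∀ i < g, G.Adj (f i) (f ((i + 1) % g)) := by
  intro i hi
  by_cases h : i + 1 < g
  · rw [Nat.mod_eq_of_lt h]
    exact hwf i hi
  · have h1 : i + 1 = g := by omega
    have h2 : (i + 1) % g = 0 := by
      rw [h1, Nat.mod_self]
    rw [h2, ← hcl, ← h1]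
    exact hwf i hi

lemma wfun_around {f : ℕ → V} {g : ℕ} (hg : 1 ≤ g) (hcl : f g = f 0) (hwf : WFun G f g)
    (c d : ℕ) : WFun G (fun t => f ((c + t) % g)) d := by
  intro t _
  have h1 : (c + t) % g < g := Nat.mod_lt _ (by omega)
  have e1 : (c + t) % g % g = (c + t) % g := Nat.mod_mod_of_dvd _ dvd_rfl
  have h2 : (c + (t + 1)) % g = ((c + t) % g + 1) % g := by
    rw [← Nat.add_assoc, Nat.add_mod (c+t) 1 g, Nat.add_mod ((c+t)%g) 1 g, e1]
  simp only []
  rw [h2]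
  exact cyclic_adj hg hcl hwf _ h1

/- ------------------------------------------------------------------
   Any two neighbours on a minimal odd cycle are at distance 2 along it.
   ------------------------------------------------------------------ -/

lemma closed_extend2 {w : ℕ → V} {d : ℕ} (hw : WFun G w d) {v : V}
    (h1 : G.Adj (w d) v) (h2 : G.Adj v (w 0)) :
    ∃ h : ℕ → V, h (d + 2) = h 0 ∧ WFun G h (d + 2) := by
  have hew : WFun G (fun t => if t = 0 then w d else if t = 1 then v else w 0) 2 := by
    intro t ht
    interval_cases t
    · simpa using h1
    · simpa using h2
  obtain ⟨h, h0, hend, hww⟩ := wfun_concat hw hew (by simp)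
  simp only [if_neg (by norm_num : ¬ (2:ℕ) = 0), if_neg (by norm_num : ¬ (2:ℕ) = 1)] at hend
  exact ⟨h, by rw [hend, h0], hww⟩

lemma seg {f : ℕ → V} {g : ℕ} (hodd : Odd g) (hg3 : 3 ≤ g)
    (hcl : f g = f 0) (hwf : WFun G f g)
    (hmin : ∀ ℓ, Odd ℓ → ℓ < g → ¬ ∃ f' : ℕ → V, f' ℓ = f' 0 ∧ WFun G f' ℓ)
    {i j : ℕ} {v : V} (hij : i < j) (hj : j < g)
    (hai : G.Adj (f i) v) (haj : G.Adj (f j) v) :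
    j - i = 2 ∨ j - i = g - 2 := by
  set d := j - i with hd
  have hig : i < g := by omega
  have hw1 : WFun G (fun t => f ((i + t) % g)) d := wfun_around (by omega) hcl hwf i d
  have hend1 : f ((i + d) % g) = f j := by
    rw [show i + d = j by omega, Nat.mod_eq_of_lt hj]
  have hstart1 : f ((i + 0) % g) = f i := by
    rw [Nat.add_zero, Nat.mod_eq_of_lt hig]
  have hA1 : G.Adj ((fun t => f ((i + t) % g)) d) v := by
    show G.Adj (f ((i + d) % g)) v
    rw [hend1]
    exact haj
  have hB1 : G.Adj v ((fun t => f ((i + t) % g)) 0) := by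
    show G.Adj v (f ((i + 0) % g))
    rw [hstart1]
    exact hai.symm
  have hcw1 : ∃ h : ℕ → V, h (d + 2) = h 0 ∧ WFun G h (d + 2) :=
    closed_extend2 hw1 hA1 hB1
  have hw2 : WFun G (fun t => f ((j + t) % g)) (g - d) := wfun_around (by omega) hcl hwf j (g - d)
  have hend2 : f ((j + (g - d)) % g) = f i := by
    rw [show j + (g - d) = g + i by omega, Nat.add_mod_left, Nat.mod_eq_of_lt hig]
  have hstart2 : f ((j + 0) % g) = f j := by
    rw [Nat.add_zero, Nat.mod_eq_of_lt hj]
  have hA2 : G.Adj ((fun t => f ((j + t) % g)) (g - d)) v := by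
    show G.Adj (f ((j + (g - d)) % g)) v
    rw [hend2]
    exact hai
  have hB2 : G.Adj v ((fun t => f ((j + t) % g)) 0) := by
    show G.Adj v (f ((j + 0) % g))
    rw [hstart2]
    exact haj.symm
  have hcw2 : ∃ h : ℕ → V, h ((g - d) + 2) = h 0 ∧ WFun G h ((g - d) + 2) :=
    closed_extend2 hw2 hA2 hB2
  rcases Nat.even_or_odd d with hev | hod
  · have hodd2 : Odd (g - d + 2) := by
      rcases hodd with ⟨x, hx⟩; rcases hev with ⟨y, hy⟩
      exact ⟨x - y + 1, by omega⟩
    have := hmin (g - d + 2) hodd2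
    have hge : ¬ (g - d + 2 < g) := fun hlt => this hlt hcw2
    rcases hev with ⟨y, hy⟩
    left; omega
  · have hodd1 : Odd (d + 2) := by
      rcases hod with ⟨x, hx⟩; exact ⟨x + 1, by omega⟩
    have := hmin (d + 2) hodd1
    have hge : ¬ (d + 2 < g) := fun hlt => this hlt hcw1
    rcases hodd with ⟨x, hx⟩; rcases hod with ⟨y, hy⟩
    right; omega

lemma three_nbrs_false {f : ℕ → V} {g : ℕ} (hodd : Odd g) (hg5 : 5 ≤ g)
    (hcl : f g = f 0) (hwf : WFun G f g)
    (hmin : ∀ ℓ, Odd ℓ → ℓ < g → ¬ ∃ f' : ℕ → V, f' ℓ = f' 0 ∧ WFun G f' ℓ)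
    {v : V} {a b c : ℕ} (hab : a ≠ b) (hbc : b ≠ c) (hac : a ≠ c)
    (ha : a < g) (hb : b < g) (hc : c < g)
    (hA : G.Adj (f a) v) (hB : G.Adj (f b) v) (hC : G.Adj (f c) v) : False := by
  have key : ∀ x y : ℕ, x < y → y < g → G.Adj (f x) v → G.Adj (f y) v →
      y - x = 2 ∨ y - x = g - 2 := fun x y h1 h2 h3 h4 =>
    seg hodd (by omega) hcl hwf hmin h1 h2 h3 h4
  have sorted : ∀ x y z : ℕ, x < y → y < z → z < g →
      G.Adj (f x) v → G.Adj (f y) v → G.Adj (f z) v → False := by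
    intro x y z hxy hyz hz hX hY hZ
    have h1 := key x y hxy (by omega) hX hY
    have h2 := key y z hyz hz hY hZ
    have h3 := key x z (by omega) hz hX hZ
    rcases hodd with ⟨t, ht⟩
    omega
  rcases Nat.lt_trichotomy a b with h1 | h1 | h1
  · rcases Nat.lt_trichotomy b c with h2 | h2 | h2
    · exact sorted a b c h1 h2 hc hA hB hC
    · exact hbc h2
    · rcases Nat.lt_trichotomy a c with h3 | h3 | h3
      · exact sorted a c b h3 h2 hb hA hC hB
      · exact hac h3
      · exact sorted c a b h3 h1 hb hC hA hB
  · exact hab h1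
  · rcases Nat.lt_trichotomy a c with h2 | h2 | h2
    · exact sorted b a c h1 h2 hc hB hA hC
    · exact hac h2
    · rcases Nat.lt_trichotomy b c with h3 | h3 | h3
      · exact sorted b c a h3 h2 ha hB hC hA
      · exact hbc h3
      · exact sorted c b a h3 h1 ha hC hB hA

/- ------------------------------------------------------------------
   Counting: the minimal odd cycle has length < 5.
   ------------------------------------------------------------------ -/

lemma count_le [Fintype V] {Nf : V → Finset V} (hN : ∀ v w, w ∈ Nf v ↔ G.Adj v w)
    {f : ℕ → V} {g : ℕ}
    (hnbr2 : ∀ v : V, (((range g).filter (fun i => G.Adj (f i) v)).card : ℕ) ≤ 2) :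
    ∑ i ∈ range g, (Nf (f i)).card ≤ 2 * Fintype.card V := by
  classical
  have h1 : ∀ i, (Nf (f i)).card = ((univ : Finset V).filter (fun v => G.Adj (f i) v)).card := by
    intro i
    congr 1
    ext w
    simp [hN]
  calc ∑ i ∈ range g, (Nf (f i)).card
      = ∑ i ∈ range g, ∑ v ∈ (univ : Finset V), (if G.Adj (f i) v then 1 else 0) := by
        refine Finset.sum_congr rfl fun i _ => ?_
        rw [h1 i, Finset.card_filter]
    _ = ∑ v ∈ (univ : Finset V), ∑ i ∈ range g, (if G.Adj (f i) v then 1 else 0) :=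
        Finset.sum_comm
    _ = ∑ v ∈ (univ : Finset V), ((range g).filter (fun i => G.Adj (f i) v)).card := by
        refine Finset.sum_congr rfl fun v _ => ?_
        rw [Finset.card_filter]
    _ ≤ ∑ _v ∈ (univ : Finset V), 2 := Finset.sum_le_sum fun v _ => hnbr2 v
    _ = 2 * Fintype.card V := by
        simp [Finset.sum_const, Finset.card_univ, Nat.mul_comm]

lemma five_le_false [Fintype V] {Nf : V → Finset V} (hN : ∀ v w, w ∈ Nf v ↔ G.Adj v w)
    {f : ℕ → V} {g : ℕ} (hodd : Odd g) (hg5 : 5 ≤ g)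
    (hcl : f g = f 0) (hwf : WFun G f g)
    (hmin : ∀ ℓ, Odd ℓ → ℓ < g → ¬ ∃ f' : ℕ → V, f' ℓ = f' 0 ∧ WFun G f' ℓ)
    {D : ℝ} (hD : ∀ v, D ≤ ((Nf v).card : ℝ)) (hD0 : 0 ≤ D)
    (hbig : (2 : ℝ) * Fintype.card V < 5 * D) : False := by
  classical
  have hnbr2 : ∀ v : V, (((range g).filter (fun i => G.Adj (f i) v)).card : ℕ) ≤ 2 := by
    intro v
    by_contra hgt
    push_neg at hgt
    obtain ⟨a, b, c, ha, hb, hc, hab, hac, hbc⟩ := Finset.two_lt_card_iff.mp hgt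
    simp only [Finset.mem_filter, Finset.mem_range] at ha hb hc
    exact three_nbrs_false hodd hg5 hcl hwf hmin hab hbc hac ha.1 hb.1 hc.1 ha.2 hb.2 hc.2
  have hsum := count_le hN hnbr2
  have hlow : (g : ℝ) * D ≤ ∑ i ∈ range g, ((Nf (f i)).card : ℝ) := by
    have := Finset.card_nsmul_le_sum (range g) (fun i => ((Nf (f i)).card : ℝ)) D
      (fun i _ => hD (f i))
    simpa [nsmul_eq_mul] using this
  have hcast : (∑ i ∈ range g, ((Nf (f i)).card : ℝ))
      = ((∑ i ∈ range g, (Nf (f i)).card : ℕ) : ℝ) := by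
    push_cast
    rfl
  have h5 : (5 : ℝ) * D ≤ (g : ℝ) * D := by
    apply mul_le_mul_of_nonneg_right _ hD0
    exact_mod_cast hg5
  have h2 : ((∑ i ∈ range g, (Nf (f i)).card : ℕ) : ℝ) ≤ 2 * Fintype.card V := by
    exact_mod_cast hsum
  linarith

/- ------------------------------------------------------------------
   The lengthening step.
   ------------------------------------------------------------------ -/

lemma mod_small {x m : ℕ} (hm : 0 < m) (hx : x < 2 * m) :
    x % m = if x < m then x else x - m := by
  split_ifs with h
  · exact Nat.mod_eq_of_lt h
  · rw [Nat.mod_eq_sub_mod (by omega)]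
    exact Nat.mod_eq_of_lt (by omega)

lemma Q_step [Fintype V] {Nf : V → Finset V} (hN : ∀ v w, w ∈ Nf v ↔ G.Adj v w)
    {m : ℕ} (hm3 : 3 ≤ m) {D : ℝ}
    (hD : ∀ v, D ≤ ((Nf v).card : ℝ))
    (hnum : (Fintype.card V : ℝ) + 2 * m + 3 ≤ 3 * D)
    (hQ : QCyc G m) : QCyc G (m + 2) := by
  classical
  by_contra hQ2
  obtain ⟨f, hadj, hinj⟩ := hQ
  have hm0 : 0 < m := by omega
  set F : ℕ → V := fun t => f (t % m) with hF
  have hFadj : ∀ t, G.Adj (F t) (F (t + 1)) := by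
    intro t
    have h1 : (t + 1) % m = (t % m + 1) % m := by
      rw [Nat.add_mod t 1 m, Nat.add_mod (t % m) 1 m, Nat.mod_mod_of_dvd _ dvd_rfl]
    show G.Adj (f (t % m)) (f ((t + 1) % m))
    rw [h1]
    exact hadj (t % m) (Nat.mod_lt _ hm0)
  have hFper : ∀ t, F (t + m) = F t := by
    intro t
    show f ((t + m) % m) = f (t % m)
    rw [Nat.add_mod_right]
  have hFval : ∀ t, t < m → F t = f t := by
    intro t ht
    show f (t % m) = f t
    rw [Nat.mod_eq_of_lt ht]
  have hFinj : ∀ s t, s < m → t < m → F s = F t → s = t := by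
    intro s t hs ht h
    rw [hFval s hs, hFval t ht] at h
    exact hinj s hs t ht h
  have haddinj : ∀ j o₁ o₂, o₁ < m → o₂ < m → F (j + o₁) = F (j + o₂) → o₁ = o₂ := by
    intro j o₁ o₂ h1 h2 h
    have e : ∀ o, o < m → (j + o) % m = if j % m + o < m then j % m + o else j % m + o - m := by
      intro o ho
      rw [Nat.add_mod j o m, Nat.mod_eq_of_lt ho]
      exact mod_small hm0 (by have := Nat.mod_lt j hm0; omega)
    have h' : (j + o₁) % m = (j + o₂) % m := by
      have := hinj ((j + o₁) % m) (Nat.mod_lt _ hm0) ((j + o₂) % m) (Nat.mod_lt _ hm0) h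
      exact this
    rw [e o₁ h1, e o₂ h2] at h'
    have hj := Nat.mod_lt j hm0
    split_ifs at h' <;> omega
  -- the vertex set of the cycle
  set Cfin : Finset V := (range m).image f with hCfin
  have hCmem : ∀ t, F t ∈ Cfin := by
    intro t
    exact Finset.mem_image.mpr ⟨t % m, Finset.mem_range.mpr (Nat.mod_lt _ hm0), rfl⟩
  have hCcard : Cfin.card ≤ m := le_trans Finset.card_image_le (by simp)
  set X : ℕ → Finset V := fun j => Nf (F j) \ Cfin with hX
  have hXadj : ∀ j a, a ∈ X j → G.Adj (F j) a ∧ a ∉ Cfin := by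
    intro j a ha
    rw [hX] at ha
    simp only [Finset.mem_sdiff] at ha
    exact ⟨(hN _ _).mp ha.1, ha.2⟩
  have hXper : ∀ j, X (j + m) = X j := by
    intro j
    simp only [hX, hFper]
  have hXcard : ∀ j, D - m ≤ ((X j).card : ℝ) := by
    intro j
    have h1 : (Nf (F j)).card ≤ (X j).card + Cfin.card := Finset.card_le_card_sdiff_add_card
    have h2 := hD (F j)
    have : ((Nf (F j)).card : ℝ) ≤ ((X j).card : ℝ) + m := by
      calc ((Nf (F j)).card : ℝ) ≤ ((X j).card : ℝ) + (Cfin.card : ℝ) := by exact_mod_cast h1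
        _ ≤ ((X j).card : ℝ) + m := by
            have : (Cfin.card : ℝ) ≤ m := by exact_mod_cast hCcard
            linarith
    linarith
  have hDub : D ≤ (Fintype.card V : ℝ) := by
    refine le_trans (hD (F 0)) ?_
    exact_mod_cast Finset.card_le_univ _
  -- no edges between consecutive neighborhoods
  have hnoedge : ∀ j a b, a ∈ X j → b ∈ X (j + 1) → a ≠ b → ¬ G.Adj a b := by
    intro j a b ha hb hab hedge
    apply hQ2
    set f' : ℕ → V := fun t => if t = 0 then F j else if t = 1 then a else if t = 2 then b
      else F (j + (t - 2)) with hf'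
    have hval0 : f' 0 = F j := by simp [hf']
    have hval1 : f' 1 = a := by norm_num [hf']
    have hval2 : f' 2 = b := by norm_num [hf']
    have hvalF : ∀ t, t ≠ 0 → t ≠ 1 → t ≠ 2 → f' t = F (j + (t - 2)) := by
      intro t h0 h1 h2
      simp [hf', h0, h1, h2]
    refine ⟨f', ?_, ?_⟩
    · intro i hi
      by_cases h0 : i = 0
      · subst h0
        rw [show (0 + 1) % (m + 2) = 1 from Nat.mod_eq_of_lt (by omega), hval0, hval1]
        exact (hXadj j a ha).1
      by_cases h1 : i = 1
      · subst h1
        rw [show (1 + 1) % (m + 2) = 2 from Nat.mod_eq_of_lt (by omega), hval1, hval2]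
        exact hedge
      by_cases h2 : i = 2
      · subst h2
        rw [show (2 + 1) % (m + 2) = 3 from Nat.mod_eq_of_lt (by omega), hval2,
          hvalF 3 (by omega) (by omega) (by omega), show j + (3 - 2) = j + 1 from by omega]
        exact ((hXadj (j + 1) b hb).1).symm
      by_cases hlast : i = m + 1
      · subst hlast
        rw [show (m + 1 + 1) % (m + 2) = 0 from by simp, hval0,
          hvalF (m + 1) (by omega) (by omega) (by omega)]
        have := hFadj (j + (m - 1))
        rw [show j + (m - 1) + 1 = j + m from by omega, hFper j] at this
        rw [show m + 1 - 2 = m - 1 from by omega]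
        exact this
      · have h3 : 3 ≤ i := by omega
        have him : i ≤ m := by omega
        rw [show (i + 1) % (m + 2) = i + 1 from Nat.mod_eq_of_lt (by omega),
          hvalF i (by omega) (by omega) (by omega),
          hvalF (i + 1) (by omega) (by omega) (by omega),
          show j + (i + 1 - 2) = j + (i - 2) + 1 from by omega]
        exact hFadj (j + (i - 2))
    · -- injectivity
      intro s hs t ht hst
      have key : ∀ u, u < m + 2 → u ≠ 1 → u ≠ 2 → ∃ o, o < m ∧ f' u = F (j + o) ∧
          (u = 0 → o = 0) ∧ (u ≠ 0 → o = u - 2) := by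
        intro u hu h1 h2
        by_cases h0 : u = 0
        · subst h0
          exact ⟨0, by omega, by rw [hval0]; rw [Nat.add_zero], by omega, by omega⟩
        · exact ⟨u - 2, by omega, hvalF u h0 h1 h2, by omega, fun _ => rfl⟩
      have hanotC := (hXadj j a ha).2
      have hbnotC := (hXadj (j + 1) b hb).2
      by_cases hs1 : s = 1 <;> by_cases ht1 : t = 1
      · omega
      · exfalso
        rw [hs1, hval1] at hst
        by_cases ht2 : t = 2
        · rw [ht2, hval2] at hst
          exact hab hst
        · obtain ⟨o, ho, hfo, -, -⟩ := key t ht ht1 ht2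
          rw [hfo] at hst
          exact hanotC (hst ▸ hCmem (j + o))
      · exfalso
        rw [ht1, hval1] at hst
        by_cases hs2 : s = 2
        · rw [hs2, hval2] at hst
          exact hab hst.symm
        · obtain ⟨o, ho, hfo, -, -⟩ := key s hs hs1 hs2
          rw [hfo] at hst
          exact hanotC (hst.symm ▸ hCmem (j + o))
      · by_cases hs2 : s = 2 <;> by_cases ht2 : t = 2
        · omega
        · exfalso
          rw [hs2, hval2] at hst
          obtain ⟨o, ho, hfo, -, -⟩ := key t ht ht1 ht2
          rw [hfo] at hst
          exact hbnotC (hst ▸ hCmem (j + o))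
        · exfalso
          rw [ht2, hval2] at hst
          obtain ⟨o, ho, hfo, -, -⟩ := key s hs hs1 hs2
          rw [hfo] at hst
          exact hbnotC (hst.symm ▸ hCmem (j + o))
        · obtain ⟨o₁, ho₁, hfo₁, hz₁, hnz₁⟩ := key s hs hs1 hs2
          obtain ⟨o₂, ho₂, hfo₂, hz₂, hnz₂⟩ := key t ht ht1 ht2
          rw [hfo₁, hfo₂] at hst
          have := haddinj j o₁ o₂ ho₁ ho₂ hst
          by_cases hs0 : s = 0 <;> by_cases ht0 : t = 0 <;>
            [skip; skip; skip; skip] <;>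
            first
            | omega
            | (have e1 := hz₁ ; have e2 := hz₂ ; have e3 := hnz₁ ; have e4 := hnz₂ ; omega)
  -- sizes of second-neighborhood intersections
  have hXne : ∀ j, ∃ x, x ∈ X j := by
    intro j
    have h := hXcard j
    have hDm : (1 : ℝ) ≤ D - m := by linarith
    have h1 : (1 : ℝ) ≤ ((X j).card : ℝ) := by linarith
    have h2 : 1 ≤ (X j).card := by exact_mod_cast h1
    obtain ⟨x, hx⟩ := Finset.card_pos.mp (show 0 < (X j).card by omega)
    exact ⟨x, hx⟩
  have hUnion : ∀ j, ((X (j + (m - 1)) ∪ X (j + 1)).card : ℝ) ≤ Fintype.card V + 1 - D := by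
    intro j
    obtain ⟨a0, ha0⟩ := hXne j
    have hsub : Nf a0 ∩ (X (j + (m - 1)) ∪ X (j + 1)) ⊆ {a0} := by
      intro w hw
      rw [Finset.mem_inter, Finset.mem_union] at hw
      obtain ⟨hw1, hw2⟩ := hw
      have hadj0 : G.Adj a0 w := (hN a0 w).mp hw1
      rw [Finset.mem_singleton]
      by_contra hne
      rcases hw2 with h | h
      · have hXj : a0 ∈ X (j + (m - 1) + 1) := by
          rw [show j + (m - 1) + 1 = j + m from by omega, hXper]
          exact ha0
        exact hnoedge (j + (m - 1)) w a0 h hXj hne hadj0.symm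
      · exact hnoedge j a0 w ha0 h (fun hh => hne hh.symm) hadj0
    have h1 : (Nf a0 ∪ (X (j + (m - 1)) ∪ X (j + 1))).card
        + (Nf a0 ∩ (X (j + (m - 1)) ∪ X (j + 1))).card
        = (Nf a0).card + (X (j + (m - 1)) ∪ X (j + 1)).card :=
      Finset.card_union_add_card_inter _ _
    have h2 : (Nf a0 ∪ (X (j + (m - 1)) ∪ X (j + 1))).card ≤ Fintype.card V :=
      Finset.card_le_univ _
    have h3 : (Nf a0 ∩ (X (j + (m - 1)) ∪ X (j + 1))).card ≤ 1 :=
      le_trans (Finset.card_le_card hsub) (by simp)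
    have h4 := hD a0
    have h1' : ((Nf a0 ∪ (X (j + (m - 1)) ∪ X (j + 1))).card : ℝ)
        + ((Nf a0 ∩ (X (j + (m - 1)) ∪ X (j + 1))).card : ℝ)
        = ((Nf a0).card : ℝ) + ((X (j + (m - 1)) ∪ X (j + 1)).card : ℝ) := by
      exact_mod_cast h1
    have h2' : ((Nf a0 ∪ (X (j + (m - 1)) ∪ X (j + 1))).card : ℝ) ≤ Fintype.card V := by
      exact_mod_cast h2
    have h3' : ((Nf a0 ∩ (X (j + (m - 1)) ∪ X (j + 1))).card : ℝ) ≤ 1 := by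
      exact_mod_cast h3
    linarith
  have hInter : ∀ j, (2 : ℝ) ≤ ((X (j + (m - 1)) ∩ X (j + 1)).card : ℝ) := by
    intro j
    have h1 := hXcard (j + (m - 1))
    have h2 := hXcard (j + 1)
    have h3 := hUnion j
    have h4 : (X (j + (m - 1)) ∩ X (j + 1)).card + (X (j + (m - 1)) ∪ X (j + 1)).card
        = (X (j + (m - 1))).card + (X (j + 1)).card :=
      Finset.card_inter_add_card_union _ _
    have h4' : ((X (j + (m - 1)) ∩ X (j + 1)).card : ℝ)
        + ((X (j + (m - 1)) ∪ X (j + 1)).card : ℝ)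
        = ((X (j + (m - 1))).card : ℝ) + ((X (j + 1)).card : ℝ) := by exact_mod_cast h4
    linarith
  -- pick the two detour vertices
  have hS1 : (2 : ℝ) ≤ ((X (m - 1) ∩ X 1).card : ℝ) := by
    have := hInter 0
    rw [Nat.zero_add, Nat.zero_add] at this
    exact this
  have hS2 : (2 : ℝ) ≤ ((X 0 ∩ X 2).card : ℝ) := by
    have := hInter 1
    rw [show 1 + (m - 1) = 0 + m from by omega, hXper, show (1:ℕ) + 1 = 2 from rfl] at this
    exact this
  have hS1' : 1 ≤ (X (m - 1) ∩ X 1).card := by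
    have : (1 : ℝ) ≤ ((X (m - 1) ∩ X 1).card : ℝ) := by linarith
    exact_mod_cast this
  obtain ⟨a, hamem⟩ := Finset.card_pos.mp (by omega : 0 < (X (m - 1) ∩ X 1).card)
  have hS2' : 1 < (X 0 ∩ X 2).card := by
    have : (1 : ℝ) < ((X 0 ∩ X 2).card : ℝ) := by linarith
    exact_mod_cast this
  obtain ⟨b, hbmem, hba⟩ := Finset.exists_mem_ne hS2' a
  have ha1 : a ∈ X (m - 1) := (Finset.mem_inter.mp hamem).1
  have ha2 : a ∈ X 1 := (Finset.mem_inter.mp hamem).2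
  have hb1 : b ∈ X 0 := (Finset.mem_inter.mp hbmem).1
  have hb2 : b ∈ X 2 := (Finset.mem_inter.mp hbmem).2
  -- build the cycle of length m + 2
  apply hQ2
  set f'' : ℕ → V := fun t => if t = 1 then b else if t = m then a
    else if t = m + 1 then F 1 else F t with hf''
  have hw1 : f'' 1 = b := by norm_num [hf'']
  have hwm : f'' m = a := by
    show (if m = 1 then b else if m = m then a else if m = m + 1 then F 1 else F m) = a
    rw [if_neg (by omega : ¬ m = 1), if_pos rfl]
  have hwm1 : f'' (m + 1) = F 1 := by
    show (if m + 1 = 1 then b else if m + 1 = m then a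
      else if m + 1 = m + 1 then F 1 else F (m + 1)) = F 1
    rw [if_neg (by omega : ¬ m + 1 = 1), if_neg (by omega : ¬ m + 1 = m), if_pos rfl]
  have hwF : ∀ t, t ≠ 1 → t ≠ m → t ≠ m + 1 → f'' t = F t := by
    intro t h1 h2 h3
    simp only [hf'', if_neg h1, if_neg h2, if_neg h3]
  refine ⟨f'', ?_, ?_⟩
  · intro i hi
    by_cases h0 : i = 0
    · subst h0
      rw [show (0 + 1) % (m + 2) = 1 from Nat.mod_eq_of_lt (by omega),
        hwF 0 (by omega) (by omega) (by omega), hw1]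
      exact (hXadj 0 b hb1).1
    by_cases h1 : i = 1
    · subst h1
      rw [show (1 + 1) % (m + 2) = 2 from Nat.mod_eq_of_lt (by omega), hw1,
        hwF 2 (by omega) (by omega) (by omega)]
      exact ((hXadj 2 b hb2).1).symm
    by_cases hm1 : i = m - 1
    · subst hm1
      have e : (m - 1 + 1) % (m + 2) = m := by
        rw [show m - 1 + 1 = m from by omega]
        exact Nat.mod_eq_of_lt (by omega)
      rw [e, hwF (m - 1) (by omega) (by omega) (by omega), hwm]
      exact (hXadj (m - 1) a ha1).1
    by_cases hmEq : i = m
    · rw [hmEq]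
      rw [show (m + 1) % (m + 2) = m + 1 from Nat.mod_eq_of_lt (by omega), hwm, hwm1]
      exact ((hXadj 1 a ha2).1).symm
    by_cases hmm : i = m + 1
    · subst hmm
      rw [show (m + 1 + 1) % (m + 2) = 0 from by simp, hwm1,
        hwF 0 (by omega) (by omega) (by omega)]
      exact (hFadj 0).symm
    · have h2i : 2 ≤ i := by omega
      have him : i ≤ m - 2 := by omega
      rw [show (i + 1) % (m + 2) = i + 1 from Nat.mod_eq_of_lt (by omega),
        hwF i (by omega) (by omega) (by omega),
        hwF (i + 1) (by omega) (by omega) (by omega)]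
      exact hFadj i
  · intro s hs t ht hst
    have key2 : ∀ u, u < m + 2 → u ≠ 1 → u ≠ m → ∃ o, o < m ∧ f'' u = F o ∧
        (u = m + 1 → o = 1) ∧ (u ≠ m + 1 → o = u) := by
      intro u hu h1 h2
      by_cases h3 : u = m + 1
      · exact ⟨1, by omega, by rw [h3, hwm1], fun _ => rfl, by omega⟩
      · exact ⟨u, by omega, hwF u h1 h2 h3, by omega, fun _ => rfl⟩
    have hanotC : a ∉ Cfin := (hXadj (m - 1) a ha1).2
    have hbnotC : b ∉ Cfin := (hXadj 0 b hb1).2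
    by_cases hs1 : s = 1 <;> by_cases ht1 : t = 1
    · omega
    · exfalso
      rw [hs1, hw1] at hst
      by_cases htm : t = m
      · rw [htm, hwm] at hst
        exact hba hst
      · obtain ⟨o, ho, hfo, -, -⟩ := key2 t ht ht1 htm
        rw [hfo] at hst
        exact hbnotC (hst ▸ hCmem o)
    · exfalso
      rw [ht1, hw1] at hst
      by_cases hsm : s = m
      · rw [hsm, hwm] at hst
        exact hba hst.symm
      · obtain ⟨o, ho, hfo, -, -⟩ := key2 s hs hs1 hsm
        rw [hfo] at hst
        exact hbnotC (hst.symm ▸ hCmem o)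
    · by_cases hsm : s = m <;> by_cases htm : t = m
      · omega
      · exfalso
        rw [hsm, hwm] at hst
        obtain ⟨o, ho, hfo, -, -⟩ := key2 t ht ht1 htm
        rw [hfo] at hst
        exact hanotC (hst ▸ hCmem o)
      · exfalso
        rw [htm, hwm] at hst
        obtain ⟨o, ho, hfo, -, -⟩ := key2 s hs hs1 hsm
        rw [hfo] at hst
        exact hanotC (hst.symm ▸ hCmem o)
      · obtain ⟨o₁, ho₁, hfo₁, hz₁, hnz₁⟩ := key2 s hs hs1 hsm
        obtain ⟨o₂, ho₂, hfo₂, hz₂, hnz₂⟩ := key2 t ht ht1 htm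
        rw [hfo₁, hfo₂] at hst
        have := hFinj o₁ o₂ ho₁ ho₂ hst
        by_cases hs0 : s = m + 1 <;> by_cases ht0 : t = m + 1 <;> omega


lemma hasSubCopy_of_QCyc {M : ℕ} (hM : 3 ≤ M) (h : QCyc G M) :
    HasSubCopy (cycleGraph M) G := by
  obtain ⟨f, hadj, hinj⟩ := h
  have hM0 : 0 < M := by omega
  haveI : NeZero M := ⟨by omega⟩
  have hval1 : ((1 : Fin M) : ℕ) = 1 := by
    rw [Fin.val_one']
    exact Nat.mod_eq_of_lt (by omega)
  have key : ∀ u v : Fin M, v = u + 1 → G.Adj (f u.val) (f v.val) := by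
    intro u v huv
    have : v.val = (u.val + 1) % M := by
      rw [huv, Fin.add_def, hval1]
    rw [this]
    exact hadj u.val u.isLt
  refine ⟨⟨fun u => f u.val, ?_⟩, ?_⟩
  · intro u v huv
    rw [cycleGraph_adj'] at huv
    rcases huv with h1 | h1
    · -- (u - v).val = 1, so u = v + 1
      have : u = v + 1 := by
        have e : u - v = 1 := by
          apply Fin.ext
          rw [h1, hval1]
        have := sub_eq_iff_eq_add.mp e
        rw [this]
        exact add_comm _ _
      exact (key v u this).symm
    · have : v = u + 1 := by
        have e : v - u = 1 := by
          apply Fin.ext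
          rw [h1, hval1]
        have := sub_eq_iff_eq_add.mp e
        rw [this]
        exact add_comm _ _
      exact key u v this
  · intro u v huv
    exact Fin.ext (hinj u.val u.isLt v.val v.isLt huv)

end walks

theorem stmt_3 (k : ℕ) (hk : 2 ≤ k) (n : ℕ) (hn : (2 * k) ^ (8 * k ^ 2) ≤ n)
    (α β : ℝ) (hα₁ : (2 * (k : ℝ) + 1) / (8 * k + 6) < α) (hα₂ : α ≤ 1 / 4)
    (hβ₁ : 1 / 2 - 2 * α ≤ β) (hβ₂ : β ≤ α / (2 * k + 1))
    (G : SimpleGraph (Fin n)) (hG : CycleFree (2 * k + 1) G)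
    (he : α * (n : ℝ) ^ 2 ≤ (G.edgeSet.ncard : ℝ))
    (hδ : ∀ v : Fin n, (1 / 2 - β) * n ≤ ((G.neighborSet v).ncard : ℝ)) :
    _root_.IsBipartite G := by
  classical
  by_contra hbip
  have hoddcw : HasOddCW G := by
    by_contra h
    exact hbip (isBipartite_of_no_oddCW h)
  -- numeric facts
  have hk' : (2 : ℝ) ≤ (k : ℝ) := by exact_mod_cast hk
  have hn8 : 8 * k ^ 3 ≤ n := by
    calc 8 * k ^ 3 = (2 * k) ^ 3 := by ring
      _ ≤ (2 * k) ^ (8 * k ^ 2) := Nat.pow_le_pow_right (by omega)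
          (by
            have h4 : 2 * 2 ≤ k * k := Nat.mul_le_mul hk hk
            have : k * k = k ^ 2 := by ring
            omega)
      _ ≤ n := hn
  have hn1 : 1 ≤ n := by
    have hkpos : 0 < k ^ 3 := pow_pos (by omega) 3
    omega
  have hn1' : (1 : ℝ) ≤ (n : ℝ) := by exact_mod_cast hn1
  have hn0' : (0 : ℝ) ≤ (n : ℝ) := by linarith
  have hpos : (0 : ℝ) < 2 * (k : ℝ) + 1 := by linarith
  have hβ20 : β ≤ 1 / 20 := by
    have h1 : α / (2 * (k : ℝ) + 1) ≤ (1 / 4) / (2 * (k : ℝ) + 1) :=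
      (div_le_div_iff_of_pos_right hpos).mpr hα₂
    have h2 : (1 / 4 : ℝ) / (2 * (k : ℝ) + 1) ≤ 1 / 20 := by
      rw [div_le_iff₀ hpos]
      linarith
    linarith [hβ₂]
  set D : ℝ := (1 / 2 - β) * n with hD_def
  have hDlow : (9 / 20 : ℝ) * n ≤ D := by
    rw [hD_def]
    have h : (9 / 20 : ℝ) ≤ 1 / 2 - β := by linarith
    exact mul_le_mul_of_nonneg_right h hn0'
  have hD0 : (0 : ℝ) ≤ D := by linarith [hDlow]
  -- the neighbourhood finsets
  set Nf : Fin n → Finset (Fin n) := fun v => (G.neighborSet v).toFinite.toFinset with hNf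
  have hN : ∀ v w, w ∈ Nf v ↔ G.Adj v w := by
    intro v w
    simp [hNf, Set.Finite.mem_toFinset]
  have hD : ∀ v, D ≤ ((Nf v).card : ℝ) := by
    intro v
    have h := hδ v
    rwa [Set.ncard_eq_toFinset_card _ (G.neighborSet v).toFinite] at h
  have hcard : (Fintype.card (Fin n) : ℝ) = (n : ℝ) := by simp
  -- the minimal odd closed walk has length 3
  obtain ⟨g, f, hodd, hg3, hcl, hwf, hinjc, hmin⟩ := exists_min_odd_cycle hoddcw
  have hg5 : g < 5 := by
    by_contra h5
    push_neg at h5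
    refine five_le_false hN hodd h5 hcl hwf hmin hD hD0 ?_
    rw [hcard]
    linarith
  have hgeq : g = 3 := by
    rcases hodd with ⟨t, ht⟩
    omega
  rw [hgeq] at hcl hwf hinjc
  have hQ3 : QCyc G 3 := ⟨f, cyclic_adj (by omega) hcl hwf, hinjc⟩
  -- numeric hypothesis for every lengthening step
  have hnumAll : ∀ m : ℕ, m ≤ 2 * k - 1 →
      (Fintype.card (Fin n) : ℝ) + 2 * m + 3 ≤ 3 * D := by
    intro m hm
    rw [hcard]
    have hm' : (m : ℝ) ≤ 2 * (k : ℝ) - 1 := by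
      have h1 : (m : ℝ) ≤ ((2 * k - 1 : ℕ) : ℝ) := by exact_mod_cast hm
      have h2 : ((2 * k - 1 : ℕ) : ℝ) = 2 * (k : ℝ) - 1 := by
        rw [Nat.cast_sub (by omega)]
        push_cast
        ring
      linarith [h2 ▸ h1]
    have hn8' : (8 : ℝ) * (k : ℝ) ^ 3 ≤ (n : ℝ) := by exact_mod_cast hn8
    have hkey : (4 : ℝ) * (k : ℝ) + 1 ≤ (7 / 20) * ((8 : ℝ) * (k : ℝ) ^ 3) := by
      nlinarith [hk', sq_nonneg ((k : ℝ) - 2)]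
    linarith [hDlow, hkey, hn8', hm']
  -- lengthen 3 → 5 → ⋯ → 2k+1
  have hQall : ∀ t : ℕ, 2 * t + 3 ≤ 2 * k + 1 → QCyc G (2 * t + 3) := by
    intro t
    induction t with
    | zero => intro _; exact hQ3
    | succ s ih =>
      intro hle
      have hQs := ih (by omega)
      have hstep := Q_step hN (by omega : 3 ≤ 2 * s + 3) hD
        (hnumAll (2 * s + 3) (by omega)) hQs
      rw [show 2 * (s + 1) + 3 = (2 * s + 3) + 2 from by ring]
      exact hstep
  have hQ2k1 : QCyc G (2 * k + 1) := by
    have h := hQall (k - 1) (by omega)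
    rw [show 2 * (k - 1) + 3 = 2 * k + 1 from by omega] at h
    exact h
  exact hG (hasSubCopy_of_QCyc (by omega) hQ2k1)
end

section
/- For every integer k ≥ 2, every real α with 0 < α < 1/2, and every integer n ≥ 36k/α, there exists a C_{2k+1}-free graph G on n vertices that belongs to the class 𝒢_{k,α}(n); that is, G is C_{2k+1}-free and V(G) admits a partition into X_1,…,X_t,X_{t+1}, Y_1,…,Y_t,Y_{t+1}, Z_1,…,Z_t (with t = ⌈√(αn/(4k))⌉) satisfying properties (i)–(v) of the class 𝒢_{k,α}(n). -/
open SimpleGraph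

/-- `G` belongs to the class `𝒢_{k,α}(n)`: with `t = ⌈√(αn/(4k))⌉`, the vertex set of `G`
can be partitioned into `X_1, …, X_{t+1}, Y_1, …, Y_{t+1}, Z_1, …, Z_t` satisfying
properties (i)–(v). Here `X, Y : Fin (t+1) → Set (Fin n)` (indices `i` with `(i : ℕ) < t`
play the role of `X_1, …, X_t` and `Fin.last t` that of `X_{t+1}`), `Z : Fin t → Set (Fin n)`,
and `z i` lists the vertices `z^i_1, …, z^i_{2k-1}` of the path through `Z_i`
(0-indexed: `z i 0 = z^i_1`, `z i (2k-2) = z^i_{2k-1}`). -/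
def InGClass (k : ℕ) (α : ℝ) (n : ℕ) (G : SimpleGraph (Fin n)) : Prop :=
  ∃ t : ℕ, t = ⌈Real.sqrt (α * n / (4 * k))⌉₊ ∧
    ∃ (X Y : Fin (t + 1) → Set (Fin n)) (Z : Fin t → Set (Fin n)) (z : Fin t → ℕ → Fin n),
      -- the parts are pairwise disjoint and cover the vertex set
      (∀ i j, i ≠ j → Disjoint (X i) (X j)) ∧
      (∀ i j, i ≠ j → Disjoint (Y i) (Y j)) ∧
      (∀ i j, i ≠ j → Disjoint (Z i) (Z j)) ∧
      (∀ i j, Disjoint (X i) (Y j)) ∧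
      (∀ (i : Fin (t + 1)) (j : Fin t), Disjoint (X i) (Z j)) ∧
      (∀ (i : Fin (t + 1)) (j : Fin t), Disjoint (Y i) (Z j)) ∧
      ((⋃ i, X i) ∪ (⋃ i, Y i) ∪ (⋃ i, Z i) = Set.univ) ∧
      -- (i): `|Z_i| = 2k-1` and `G[Z_i]` contains a path of length `2k-2` through all of `Z_i`
      (∀ i : Fin t, (Z i).ncard = 2 * k - 1 ∧
        (∀ j₁, j₁ < 2 * k - 1 → ∀ j₂, j₂ < 2 * k - 1 → z i j₁ = z i j₂ → j₁ = j₂) ∧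
        {v | ∃ j < 2 * k - 1, z i j = v} = Z i ∧
        (∀ j, j + 1 < 2 * k - 1 → G.Adj (z i j) (z i (j + 1)))) ∧
      -- (ii): sizes of `X_i, Y_i` for `i ≤ t`, and `X_{t+1}, Y_{t+1}` balanced
      (∀ i : Fin (t + 1), (i : ℕ) < t →
        (X i).ncard = ⌊(α * n - (2 * (k : ℝ) - 1) * t) / (2 * t)⌋₊ ∧
        (Y i).ncard = ⌊(α * n - (2 * (k : ℝ) - 1) * t) / (2 * t)⌋₊) ∧
      ((X (Fin.last t)).ncard ≤ (Y (Fin.last t)).ncard + 1 ∧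
        (Y (Fin.last t)).ncard ≤ (X (Fin.last t)).ncard + 1) ∧
      -- (iii): the union of the `X_i` and the union of the `Y_i` are independent sets
      (∀ u ∈ ⋃ i, X i, ∀ v ∈ ⋃ i, X i, ¬ G.Adj u v) ∧
      (∀ u ∈ ⋃ i, Y i, ∀ v ∈ ⋃ i, Y i, ¬ G.Adj u v) ∧
      -- (iv): no edges between `X_i` and `Y_i` for `i ≤ t`; `X_{t+1}`-`Y_{t+1}` complete;
      -- `X_i`-`Y_j` complete for `i ≠ j`
      (∀ i : Fin (t + 1), (i : ℕ) < t → ∀ x ∈ X i, ∀ y ∈ Y i, ¬ G.Adj x y) ∧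
      (∀ x ∈ X (Fin.last t), ∀ y ∈ Y (Fin.last t), G.Adj x y) ∧
      (∀ i j : Fin (t + 1), i ≠ j → ∀ x ∈ X i, ∀ y ∈ Y j, G.Adj x y) ∧
      -- (v): `z^i_1` is joined to all of `X_i` and `z^i_{2k-1}` to all of `Y_i`
      (∀ i : Fin t, (∀ x ∈ X i.castSucc, G.Adj (z i 0) x) ∧
        (∀ y ∈ Y i.castSucc, G.Adj (z i (2 * k - 2)) y))

section AuxDefs

/-- block arithmetic helpers -/
lemma mulb {w i t : ℕ} (h : i < t) : w*i + w ≤ w*t := by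
  have h2 : w*(i+1) ≤ w*t := Nat.mul_le_mul (le_refl w) h
  rw [Nat.mul_add, Nat.mul_one] at h2; exact h2

lemma blockeq {w i j a : ℕ} (h1 : w*i ≤ a) (h2 : a < w*i + w) (h3 : w*j ≤ a)
    (h4 : a < w*j + w) : i = j := by
  rcases lt_trichotomy i j with h|h|h
  · have := mulb (w:=w) h; omega
  · exact h
  · have := mulb (w:=w) h; omega

lemma blockoff {K i j p q : ℕ} (hp : p < K) (hq : q < K) (h : K*i + p = K*j + q) :
    i = j ∧ p = q := by
  have hij : i = j := blockeq (w:=K) (a := K*i+p) (by omega) (by omega) (by omega) (by omega)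
  subst hij
  exact ⟨rfl, by omega⟩

/-- the adjacency relation of our construction -/
def adjR (t m K r1 a b : ℕ) : Prop :=
  (∃ i, i < t ∧ ∃ j, j < t ∧ i ≠ j ∧ m*i ≤ a ∧ a < m*i + m ∧ m*(t+j) ≤ b ∧ b < m*(t+j) + m) ∨
  (∃ i, i < t ∧ m*i ≤ a ∧ a < m*i + m ∧ m*(2*t) + K*t + r1 ≤ b) ∨
  (∃ j, j < t ∧ m*(2*t) + K*t ≤ a ∧ a < m*(2*t) + K*t + r1 ∧ m*(t+j) ≤ b ∧ b < m*(t+j) + m) ∨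
  (m*(2*t) + K*t ≤ a ∧ a < m*(2*t) + K*t + r1 ∧ m*(2*t) + K*t + r1 ≤ b) ∨
  (∃ i, i < t ∧ ∃ p, p + 1 < K ∧ a = m*(2*t) + K*i + p ∧ b = m*(2*t) + K*i + p + 1) ∨
  (∃ i, i < t ∧ a = m*(2*t) + K*i ∧ m*i ≤ b ∧ b < m*i + m) ∨
  (∃ i, i < t ∧ a = m*(2*t) + K*i + (K-1) ∧ m*(t+i) ≤ b ∧ b < m*(t+i) + m)

/-- the graph of the construction -/
def myG (n t m K r1 : ℕ) : SimpleGraph (Fin n) :=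
  SimpleGraph.fromRel (fun u v => adjR t m K r1 u.val v.val)

lemma myG_adj {n t m K r1 : ℕ} {u v : Fin n} :
    (myG n t m K r1).Adj u v ↔ u ≠ v ∧ (adjR t m K r1 u.val v.val ∨ adjR t m K r1 v.val u.val) :=
  Iff.rfl

end AuxDefs

section Neighbors

variable {n t m K r1 : ℕ}

/-- neighbors of an internal path vertex -/
lemma nbr_internal (hK : 3 ≤ K) {i p : ℕ} (hi : i < t) (hp1 : 1 ≤ p) (hp2 : p ≤ K-2)
    {u w : Fin n} (hu : u.val = m*(2*t) + K*i + p) (h : (myG n t m K r1).Adj u w) :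
    w.val = m*(2*t) + K*i + (p-1) ∨ w.val = m*(2*t) + K*i + (p+1) := by
  have hmt : m*t ≤ m*(2*t) := Nat.mul_le_mul (le_refl m) (by omega)
  have hKt : K*i + K ≤ K*t := mulb hi
  obtain ⟨hne, h|h⟩ := myG_adj.mp h
  · rcases h with ⟨i',hi',j',hj',hne',h1,h2,h3,h4⟩|⟨i',hi',h1,h2,h3⟩|⟨j',hj',h1,h2,h3,h4⟩|⟨h1,h2,h3⟩|⟨i',hi',p',hp',h1,h2⟩|⟨i',hi',h1,h2,h3⟩|⟨i',hi',h1,h2,h3⟩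
    · have := mulb (w:=m) hi'; omega
    · have := mulb (w:=m) hi'; omega
    · omega
    · omega
    · have hb : K*i + p = K*i' + p' := by omega
      obtain ⟨rfl, rfl⟩ := blockoff (by omega) (by omega) hb
      right; omega
    · have hb : K*i + p = K*i' + 0 := by omega
      obtain ⟨rfl, h0⟩ := blockoff (by omega) (by omega) hb
      omega
    · have hb : K*i + p = K*i' + (K-1) := by omega
      obtain ⟨rfl, h0⟩ := blockoff (by omega) (by omega) hb
      omega
  · rcases h with ⟨i',hi',j',hj',hne',h1,h2,h3,h4⟩|⟨i',hi',h1,h2,h3⟩|⟨j',hj',h1,h2,h3,h4⟩|⟨h1,h2,h3⟩|⟨i',hi',p',hp',h1,h2⟩|⟨i',hi',h1,h2,h3⟩|⟨i',hi',h1,h2,h3⟩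
    · have := mulb (w:=m) (show t+j' < 2*t by omega); omega
    · omega
    · have := mulb (w:=m) (show t+j' < 2*t by omega); omega
    · omega
    · have hb : K*i + p = K*i' + (p'+1) := by omega
      obtain ⟨rfl, h0⟩ := blockoff (by omega) (by omega) hb
      left; omega
    · have := mulb (w:=m) hi'; omega
    · have := mulb (w:=m) (show t+i' < 2*t by omega); omega

/-- neighbors of the last path vertex -/
lemma nbr_last (hK : 3 ≤ K) {i : ℕ} (hi : i < t)
    {u w : Fin n} (hu : u.val = m*(2*t) + K*i + (K-1)) (h : (myG n t m K r1).Adj u w) :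
    w.val = m*(2*t) + K*i + (K-2) ∨ (m*(t+i) ≤ w.val ∧ w.val < m*(t+i) + m) := by
  have hmt : m*t ≤ m*(2*t) := Nat.mul_le_mul (le_refl m) (by omega)
  have hKt : K*i + K ≤ K*t := mulb hi
  obtain ⟨hne, h|h⟩ := myG_adj.mp h
  · rcases h with ⟨i',hi',j',hj',hne',h1,h2,h3,h4⟩|⟨i',hi',h1,h2,h3⟩|⟨j',hj',h1,h2,h3,h4⟩|⟨h1,h2,h3⟩|⟨i',hi',p',hp',h1,h2⟩|⟨i',hi',h1,h2,h3⟩|⟨i',hi',h1,h2,h3⟩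
    · have := mulb (w:=m) hi'; omega
    · have := mulb (w:=m) hi'; omega
    · omega
    · omega
    · have hb : K*i + (K-1) = K*i' + p' := by omega
      obtain ⟨rfl, h0⟩ := blockoff (by omega) (by omega) hb
      omega
    · have hb : K*i + (K-1) = K*i' + 0 := by omega
      obtain ⟨rfl, h0⟩ := blockoff (by omega) (by omega) hb
      omega
    · have hb : K*i + (K-1) = K*i' + (K-1) := by omega
      obtain ⟨rfl, h0⟩ := blockoff (by omega) (by omega) hb
      right; exact ⟨h2, h3⟩
  · rcases h with ⟨i',hi',j',hj',hne',h1,h2,h3,h4⟩|⟨i',hi',h1,h2,h3⟩|⟨j',hj',h1,h2,h3,h4⟩|⟨h1,h2,h3⟩|⟨i',hi',p',hp',h1,h2⟩|⟨i',hi',h1,h2,h3⟩|⟨i',hi',h1,h2,h3⟩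
    · have := mulb (w:=m) (show t+j' < 2*t by omega); omega
    · omega
    · have := mulb (w:=m) (show t+j' < 2*t by omega); omega
    · omega
    · have hb : K*i + (K-1) = K*i' + (p'+1) := by omega
      obtain ⟨rfl, h0⟩ := blockoff (by omega) (by omega) hb
      left; omega
    · have := mulb (w:=m) hi'; omega
    · have := mulb (w:=m) (show t+i' < 2*t by omega); omega

/-- neighbors of the first path vertex -/
lemma nbr_first (hK : 3 ≤ K) {i : ℕ} (hi : i < t)
    {u w : Fin n} (hu : u.val = m*(2*t) + K*i) (h : (myG n t m K r1).Adj u w) :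
    w.val = m*(2*t) + K*i + 1 ∨ (m*i ≤ w.val ∧ w.val < m*i + m) := by
  have hmt : m*t ≤ m*(2*t) := Nat.mul_le_mul (le_refl m) (by omega)
  have hKt : K*i + K ≤ K*t := mulb hi
  obtain ⟨hne, h|h⟩ := myG_adj.mp h
  · rcases h with ⟨i',hi',j',hj',hne',h1,h2,h3,h4⟩|⟨i',hi',h1,h2,h3⟩|⟨j',hj',h1,h2,h3,h4⟩|⟨h1,h2,h3⟩|⟨i',hi',p',hp',h1,h2⟩|⟨i',hi',h1,h2,h3⟩|⟨i',hi',h1,h2,h3⟩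
    · have := mulb (w:=m) hi'; omega
    · have := mulb (w:=m) hi'; omega
    · omega
    · omega
    · have hb : K*i + 0 = K*i' + p' := by omega
      obtain ⟨rfl, h0⟩ := blockoff (by omega) (by omega) hb
      left; omega
    · have hb : K*i + 0 = K*i' + 0 := by omega
      obtain ⟨rfl, h0⟩ := blockoff (by omega) (by omega) hb
      right; exact ⟨h2, h3⟩
    · have hb : K*i + 0 = K*i' + (K-1) := by omega
      obtain ⟨rfl, h0⟩ := blockoff (by omega) (by omega) hb
      omega
  · rcases h with ⟨i',hi',j',hj',hne',h1,h2,h3,h4⟩|⟨i',hi',h1,h2,h3⟩|⟨j',hj',h1,h2,h3,h4⟩|⟨h1,h2,h3⟩|⟨i',hi',p',hp',h1,h2⟩|⟨i',hi',h1,h2,h3⟩|⟨i',hi',h1,h2,h3⟩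
    · have := mulb (w:=m) (show t+j' < 2*t by omega); omega
    · omega
    · have := mulb (w:=m) (show t+j' < 2*t by omega); omega
    · omega
    · have hb : K*i + 0 = K*i' + (p'+1) := by omega
      obtain ⟨rfl, h0⟩ := blockoff (by omega) (by omega) hb
      omega
    · have := mulb (w:=m) hi'; omega
    · have := mulb (w:=m) (show t+i' < 2*t by omega); omega

/-- no edges between `X_i` and `Y_i` -/
lemma no_XiYi {i : ℕ} (hi : i < t) {x y : Fin n}
    (hx1 : m*i ≤ x.val) (hx2 : x.val < m*i + m)
    (hy1 : m*(t+i) ≤ y.val) (hy2 : y.val < m*(t+i) + m) :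
    ¬ (myG n t m K r1).Adj x y := by
  intro h
  have hmt : m*t ≤ m*(2*t) := Nat.mul_le_mul (le_refl m) (by omega)
  have hxi : m*i + m ≤ m*t := mulb hi
  have hyi : m*(t+i) + m ≤ m*(2*t) := mulb (show t+i < 2*t by omega)
  have hti : m*t ≤ m*(t+i) := Nat.mul_le_mul (le_refl m) (by omega)
  obtain ⟨hne, h|h⟩ := myG_adj.mp h
  · rcases h with ⟨i',hi',j',hj',hne',h1,h2,h3,h4⟩|⟨i',hi',h1,h2,h3⟩|⟨j',hj',h1,h2,h3,h4⟩|⟨h1,h2,h3⟩|⟨i',hi',p',hp',h1,h2⟩|⟨i',hi',h1,h2,h3⟩|⟨i',hi',h1,h2,h3⟩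
    · have e1 : i' = i := blockeq h1 h2 (by omega) (by omega)
      have e2 : t+j' = t+i := blockeq h3 h4 (by omega) (by omega)
      omega
    · omega
    · omega
    · omega
    · omega
    · omega
    · omega
  · rcases h with ⟨i',hi',j',hj',hne',h1,h2,h3,h4⟩|⟨i',hi',h1,h2,h3⟩|⟨j',hj',h1,h2,h3,h4⟩|⟨h1,h2,h3⟩|⟨i',hi',p',hp',h1,h2⟩|⟨i',hi',h1,h2,h3⟩|⟨i',hi',h1,h2,h3⟩
    · have := mulb (w:=m) hi'; omega
    · have := mulb (w:=m) hi'; omega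
    · omega
    · omega
    · omega
    · omega
    · have := mulb (w:=m) (show t+i' < 2*t by omega); omega

end Neighbors
section Color

/-- the colouring used for the parity argument -/
def colorN (t m K r1 a : ℕ) : ℕ :=
  if a < m*t then 0 else if a < m*(2*t) then 1
  else if a < m*(2*t) + K*t then (a - m*(2*t)) % K + 1
  else if a < m*(2*t) + K*t + r1 then 0 else 1

variable {n t m K r1 : ℕ}

lemma colorN_Xblk {i a : ℕ} (hi : i < t) (h1 : m*i ≤ a) (h2 : a < m*i + m) :
    colorN t m K r1 a = 0 := by
  have := mulb (w:=m) hi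
  simp only [colorN, if_pos (show a < m*t by omega)]

lemma colorN_XL {a : ℕ} (h1 : m*(2*t) + K*t ≤ a) (h2 : a < m*(2*t) + K*t + r1) :
    colorN t m K r1 a = 0 := by
  have hmt : m*t ≤ m*(2*t) := Nat.mul_le_mul (le_refl m) (by omega)
  simp only [colorN]
  rw [if_neg (by omega), if_neg (by omega), if_neg (by omega), if_pos (by omega)]

lemma colorN_Yblk {i a : ℕ} (hi : i < t) (h1 : m*(t+i) ≤ a) (h2 : a < m*(t+i) + m) :
    colorN t m K r1 a = 1 := by
  have h3 : m*(t+i) + m ≤ m*(2*t) := mulb (show t+i < 2*t by omega)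
  have h4 : m*t ≤ m*(t+i) := Nat.mul_le_mul (le_refl m) (by omega)
  simp only [colorN]
  rw [if_neg (by omega), if_pos (by omega)]

lemma colorN_YL {a : ℕ} (h1 : m*(2*t) + K*t + r1 ≤ a) :
    colorN t m K r1 a = 1 := by
  have hmt : m*t ≤ m*(2*t) := Nat.mul_le_mul (le_refl m) (by omega)
  simp only [colorN]
  rw [if_neg (by omega), if_neg (by omega), if_neg (by omega), if_neg (by omega)]

lemma colorN_Z {i p a : ℕ} (hi : i < t) (hp : p < K) (ha : a = m*(2*t) + K*i + p) :
    colorN t m K r1 a = p + 1 := by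
  have hmt : m*t ≤ m*(2*t) := Nat.mul_le_mul (le_refl m) (by omega)
  have hKt : K*i + K ≤ K*t := mulb hi
  simp only [colorN]
  rw [if_neg (by omega), if_neg (by omega), if_pos (by omega)]
  have h2 : a - m*(2*t) = K*i + p := by omega
  rw [h2, Nat.mul_add_mod, Nat.mod_eq_of_lt hp]

/-- every edge is properly coloured unless it is a `z_last`–`Y_i` edge -/
lemma adj_color (hK : 3 ≤ K) {u v : Fin n} (h : (myG n t m K r1).Adj u v) :
    (colorN t m K r1 u.val + colorN t m K r1 v.val) % 2 = 1 ∨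
    (∃ i, i < t ∧
      ((u.val = m*(2*t) + K*i + (K-1) ∧ m*(t+i) ≤ v.val ∧ v.val < m*(t+i) + m) ∨
       (v.val = m*(2*t) + K*i + (K-1) ∧ m*(t+i) ≤ u.val ∧ u.val < m*(t+i) + m))) := by
  have main : ∀ a b : ℕ, adjR t m K r1 a b →
      (colorN t m K r1 a + colorN t m K r1 b) % 2 = 1 ∨
      (∃ i, i < t ∧ a = m*(2*t) + K*i + (K-1) ∧ m*(t+i) ≤ b ∧ b < m*(t+i) + m) := by
    intro a b h
    rcases h with ⟨i',hi',j',hj',hne',h1,h2,h3,h4⟩|⟨i',hi',h1,h2,h3⟩|⟨j',hj',h1,h2,h3,h4⟩|⟨h1,h2,h3⟩|⟨i',hi',p',hp',h1,h2⟩|⟨i',hi',h1,h2,h3⟩|⟨i',hi',h1,h2,h3⟩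
    · rw [colorN_Xblk hi' h1 h2, colorN_Yblk hj' h3 h4]; left; norm_num
    · rw [colorN_Xblk hi' h1 h2, colorN_YL h3]; left; norm_num
    · rw [colorN_XL h1 h2, colorN_Yblk hj' h3 h4]; left; norm_num
    · rw [colorN_XL h1 h2, colorN_YL h3]; left; norm_num
    · rw [colorN_Z hi' (show p' < K by omega) h1,
        colorN_Z hi' (show p'+1 < K by omega) (show b = m*(2*t)+K*i'+(p'+1) by omega)]
      left; omega
    · rw [colorN_Z hi' (show 0 < K by omega) (by omega), colorN_Xblk hi' h2 h3]; left; norm_num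
    · exact Or.inr ⟨i', hi', h1, h2, h3⟩
  obtain ⟨hne, h|h⟩ := myG_adj.mp h
  · rcases main _ _ h with h'|⟨i,hi,h'⟩
    · exact Or.inl h'
    · exact Or.inr ⟨i, hi, Or.inl h'⟩
  · rcases main _ _ h with h'|⟨i,hi,h'⟩
    · left; omega
    · exact Or.inr ⟨i, hi, Or.inr h'⟩

end Color
section Free
open scoped Fin.NatCast Fin.CommRing

variable {n t m K r1 : ℕ}

lemma fin_cast_inj {K q q' : ℕ} (hq : q < K+2) (hq' : q' < K+2)
    (h : (q : Fin (K+2)) = (q' : Fin (K+2))) : q = q' := by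
  have h1 : q % (K+2) = q' % (K+2) := by
    rw [← Fin.val_natCast q (K+2), ← Fin.val_natCast q' (K+2), h]
  rw [Nat.mod_eq_of_lt hq, Nat.mod_eq_of_lt hq'] at h1
  exact h1

lemma idx_inj {K : ℕ} (b d : Fin (K+2)) (hd : d = 1 ∨ d = -1) {q q' : ℕ}
    (hq : q < K+2) (hq' : q' < K+2)
    (h : b + (q : Fin (K+2)) * d = b + (q' : Fin (K+2)) * d) : q = q' := by
  have h2 : (q : Fin (K+2)) * d = (q' : Fin (K+2)) * d := add_left_cancel h
  apply fin_cast_inj hq hq'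
  rcases hd with rfl|rfl
  · simpa using h2
  · have := congrArg (fun x => x * (-1)) h2
    simpa using this

lemma last_eq {K : ℕ} (b d : Fin (K+2)) :
    b + ((K+1 : ℕ) : Fin (K+2)) * d = b - d := by
  have h : ((K+1 : ℕ) : Fin (K+2)) = -1 := by
    have h0 : ((K+2 : ℕ) : Fin (K+2)) = 0 := by
      simp [Fin.ext_iff]
    push_cast at h0 ⊢
    linear_combination h0
  rw [h]; ring

lemma cast2_of_odd {x : ℕ} (hx : x % 2 = 1) : ((x : ℕ) : ZMod 2) = 1 := by
  rw [← ZMod.natCast_mod x 2, hx]; exact Nat.cast_one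

lemma cast2_of_even {x : ℕ} (hx : x % 2 = 0) : ((x : ℕ) : ZMod 2) = 0 := by
  rw [← ZMod.natCast_mod x 2, hx]; exact Nat.cast_zero

/-- the path chase: a copy of `C_{K+2}` hitting the end of a `Z`-path next to its
internal vertex must wrap around the whole path, producing an `X_i`–`Y_i` edge. -/
lemma chase_contra (hK : 3 ≤ K) (f : cycleGraph (K+2) →g myG n t m K r1)
    (hinj : Function.Injective f) (b d : Fin (K+2)) (hd : d = 1 ∨ d = -1)
    {i : ℕ} (hi : i < t)
    (h0 : (f b).val = m*(2*t) + K*i + (K-1))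
    (h1 : (f (b + d)).val = m*(2*t) + K*i + (K-2))
    (h2 : m*(t+i) ≤ (f (b - d)).val ∧ (f (b - d)).val < m*(t+i) + m) : False := by
  have hadj : ∀ a : Fin (K+2), (myG n t m K r1).Adj (f a) (f (a+1)) := fun a =>
    f.map_adj (by rw [cycleGraph_adj]; right; exact add_sub_cancel_left a 1)
  have hadjd : ∀ x : Fin (K+2), (myG n t m K r1).Adj (f x) (f (x + d)) := by
    rcases hd with rfl|rfl
    · exact hadj
    · intro x
      have h := (hadj (x + -1)).symm
      have e : x + -1 + 1 = x := by ring
      rw [e] at h; exact h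
  have hstep : ∀ q : ℕ, b + ((q+1 : ℕ) : Fin (K+2)) * d = b + (q : Fin (K+2)) * d + d := by
    intro q; push_cast; ring
  have hadjq : ∀ q : ℕ, (myG n t m K r1).Adj (f (b + (q : Fin (K+2)) * d))
      (f (b + ((q+1 : ℕ) : Fin (K+2)) * d)) := by
    intro q; rw [hstep q]; exact hadjd _
  have chase : ∀ q, q ≤ K-1 → (f (b + (q : Fin (K+2)) * d)).val = m*(2*t) + K*i + (K-1-q) := by
    intro q
    induction q using Nat.strong_induction_on with
    | _ q IH =>
      intro hq
      match q, hq with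
      | 0, _ => simp only [Nat.cast_zero, zero_mul, add_zero, Nat.sub_zero]; exact h0
      | 1, _ =>
        simp only [Nat.cast_one, one_mul]
        have e : K-1-1 = K-2 := by omega
        rw [e]; exact h1
      | (q'+2), hq =>
        have ih1 := IH (q'+1) (by omega) (by omega)
        have ih0 := IH q' (by omega) (by omega)
        have hadjx := hadjq (q'+1)
        have hx := nbr_internal hK hi (show 1 ≤ K-1-(q'+1) by omega)
          (show K-1-(q'+1) ≤ K-2 by omega) ih1 hadjx
        rcases hx with h'|h'
        · rw [h']; omega
        · exfalso
          have hfe : f (b + ((q'+1+1 : ℕ) : Fin (K+2)) * d) = f (b + ((q' : ℕ) : Fin (K+2)) * d) := by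
            apply Fin.val_injective
            rw [h', ih0]; omega
          have := idx_inj b d hd (show q'+1+1 < K+2 by omega) (show q' < K+2 by omega) (hinj hfe)
          omega
  have hK1 := chase (K-1) (le_refl _)
  have hadjx := hadjq (K-1)
  have eK : K-1+1 = K := by omega
  rw [eK] at hadjx
  have hfirst := nbr_first hK hi (show (f (b + ((K-1 : ℕ) : Fin (K+2)) * d)).val = m*(2*t) + K*i by omega) hadjx
  rcases hfirst with h'|h'
  · have hK2 := chase (K-2) (by omega)
    have hfe : f (b + ((K : ℕ) : Fin (K+2)) * d) = f (b + ((K-2 : ℕ) : Fin (K+2)) * d) := by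
      apply Fin.val_injective
      rw [h', hK2]; omega
    have := idx_inj b d hd (show K < K+2 by omega) (show K-2 < K+2 by omega) (hinj hfe)
    omega
  · have hadjy := hadjq K
    have eK1 : K + 1 = K + 1 := rfl
    rw [last_eq b d] at hadjy
    exact no_XiYi hi h'.1 h'.2 h2.1 h2.2 hadjy

theorem myG_cycleFree (n t m K r1 : ℕ) (hK : 3 ≤ K) (hKodd : K % 2 = 1) :
    CycleFree (K+2) (myG n t m K r1) := by
  rintro ⟨f, hinj⟩
  have hadj : ∀ a : Fin (K+2), (myG n t m K r1).Adj (f a) (f (a+1)) := fun a =>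
    f.map_adj (by rw [cycleGraph_adj]; right; exact add_sub_cancel_left a 1)
  classical
  -- Step A: find a `z`-last vertex on the cycle with exactly one `Y_i` neighbour
  have hA : ∃ b : Fin (K+2), ∃ i, i < t ∧ (f b).val = m*(2*t) + K*i + (K-1) ∧
      ¬((m*(t+i) ≤ (f (b+1)).val ∧ (f (b+1)).val < m*(t+i)+m) ∧
        (m*(t+i) ≤ (f (b-1)).val ∧ (f (b-1)).val < m*(t+i)+m)) := by
    by_contra hcon
    push_neg at hcon
    set Zl : Fin (K+2) → Prop := fun a => ∃ i, i < t ∧ (f a).val = m*(2*t) + K*i + (K-1)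
      with hZl
    have hpoint : ∀ a : Fin (K+2),
        ((colorN t m K r1 (f a).val + colorN t m K r1 (f (a+1)).val + 1 : ℕ) : ZMod 2)
        = (if Zl a then (1 : ZMod 2) else 0) + (if Zl (a+1) then 1 else 0) := by
      intro a
      by_cases hz1 : Zl a <;> by_cases hz2 : Zl (a+1)
      · exfalso
        obtain ⟨i, hi, hv⟩ := id hz1
        obtain ⟨i2, hi2, hv2⟩ := id hz2
        have hY := (hcon a i hi hv).1
        have h3 : m*(t+i) + m ≤ m*(2*t) := mulb (show t+i < 2*t by omega)
        omega
      · obtain ⟨i, hi, hv⟩ := id hz1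
        have hY := (hcon a i hi hv).1
        have hc1 : colorN t m K r1 (f a).val = (K-1)+1 := colorN_Z hi (by omega) hv
        have hc2 : colorN t m K r1 (f (a+1)).val = 1 := colorN_Yblk hi hY.1 hY.2
        rw [if_pos hz1, if_neg hz2, cast2_of_odd (by omega)]
        norm_num
      · obtain ⟨i, hi, hv⟩ := id hz2
        have hY' := (hcon (a+1) i hi hv).2
        have e : a + 1 - 1 = a := by ring
        rw [e] at hY'
        have hc1 : colorN t m K r1 (f a).val = 1 := colorN_Yblk hi hY'.1 hY'.2
        have hc2 : colorN t m K r1 (f (a+1)).val = (K-1)+1 := colorN_Z hi (by omega) hv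
        rw [if_neg hz1, if_pos hz2, cast2_of_odd (by omega)]
        norm_num
      · rcases adj_color hK (hadj a) with h'|⟨i, hi, h'|h'⟩
        · rw [if_neg hz1, if_neg hz2, cast2_of_even (by omega)]
          norm_num
        · exact absurd ⟨i, hi, h'.1⟩ hz1
        · exact absurd ⟨i, hi, h'.1⟩ hz2
    have hself : ∀ x : ZMod 2, x + x = 0 := by decide
    have hsum1 : ∑ a : Fin (K+2),
        ((colorN t m K r1 (f a).val + colorN t m K r1 (f (a+1)).val + 1 : ℕ) : ZMod 2) = 1 := by
      simp only [Nat.cast_add, Nat.cast_one]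
      rw [Finset.sum_add_distrib, Finset.sum_add_distrib]
      have e1 : ∑ a : Fin (K+2), ((colorN t m K r1 (f (a+1)).val : ℕ) : ZMod 2)
          = ∑ a : Fin (K+2), ((colorN t m K r1 (f a).val : ℕ) : ZMod 2) :=
        Fintype.sum_equiv (Equiv.addRight (1 : Fin (K+2))) _ _ (fun a => rfl)
      rw [e1, hself, zero_add]
      simp only [Finset.sum_const, Finset.card_univ, Fintype.card_fin, nsmul_eq_mul, mul_one]
      exact cast2_of_odd (by omega)
    have hsum2 : ∑ a : Fin (K+2),
        ((if Zl a then (1:ZMod 2) else 0) + (if Zl (a+1) then 1 else 0)) = 0 := by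
      rw [Finset.sum_add_distrib]
      have e1 : ∑ a : Fin (K+2), (if Zl (a+1) then (1:ZMod 2) else 0)
          = ∑ a : Fin (K+2), (if Zl a then (1:ZMod 2) else 0) :=
        Fintype.sum_equiv (Equiv.addRight (1 : Fin (K+2))) _ _ (fun a => rfl)
      rw [e1, hself]
    rw [Fintype.sum_congr _ _ hpoint, hsum2] at hsum1
    exact zero_ne_one hsum1
  obtain ⟨b, i, hi, hzl, hbad⟩ := hA
  have htwo : b + 1 ≠ b - 1 := by
    intro h
    have h' : b + ((1:ℕ) : Fin (K+2)) * 1 = b + ((K+1:ℕ) : Fin (K+2)) * 1 := by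
      rw [last_eq b 1]
      simpa using h
    have := idx_inj b 1 (Or.inl rfl) (show 1 < K+2 by omega) (show K+1 < K+2 by omega) h'
    omega
  have hadjp : (myG n t m K r1).Adj (f b) (f (b+1)) := hadj b
  have hadjm : (myG n t m K r1).Adj (f b) (f (b-1)) := by
    have h := hadj (b-1)
    have e : b - 1 + 1 = b := by ring
    rw [e] at h; exact h.symm
  have hp := nbr_last hK hi hzl hadjp
  have hm := nbr_last hK hi hzl hadjm
  rcases hp with hz1|hY1
  · rcases hm with hz2|hY2
    · exact htwo (hinj (Fin.val_injective (hz1.trans hz2.symm)))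
    · exact chase_contra hK f hinj b 1 (Or.inl rfl) hi hzl hz1 ⟨hY2.1, hY2.2⟩
  · rcases hm with hz2|hY2
    · refine chase_contra hK f hinj b (-1) (Or.inr rfl) hi hzl ?_ ?_
      · have e : b + (-1 : Fin (K+2)) = b - 1 := by ring
        rw [e]; exact hz2
      · have e : b - (-1 : Fin (K+2)) = b + 1 := by ring
        rw [e]; exact ⟨hY1.1, hY1.2⟩
    · exact hbad ⟨hY1, hY2⟩

end Free
section Sizes

lemma ncard_interval {n : ℕ} (lo hi : ℕ) (h : hi ≤ n) (h2 : lo ≤ hi) :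
    {v : Fin n | lo ≤ v.val ∧ v.val < hi}.ncard = hi - lo := by
  have himg : {v : Fin n | lo ≤ v.val ∧ v.val < hi}
      = (fun j : Fin (hi - lo) => (⟨lo + j.val, by have := j.isLt; omega⟩ : Fin n)) '' Set.univ := by
    ext v
    simp only [Set.mem_setOf_eq, Set.image_univ, Set.mem_range]
    constructor
    · rintro ⟨hl, hr⟩
      refine ⟨⟨v.val - lo, by omega⟩, ?_⟩
      apply Fin.val_injective
      simp only []
      omega
    · rintro ⟨j, rfl⟩
      have := j.isLt
      simp only []
      omega
  have hinj : Function.Injective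
      (fun j : Fin (hi - lo) => (⟨lo + j.val, by have := j.isLt; omega⟩ : Fin n)) := by
    intro a b hab
    apply Fin.val_injective
    have := congrArg Fin.val hab
    simpa using this
  rw [himg, Set.ncard_image_of_injective _ hinj, Set.ncard_univ]
  simp

lemma adjR_no_XX {t m K r1 a b : ℕ} (hK : 1 ≤ K)
    (ha : a < m*t ∨ (m*(2*t)+K*t ≤ a ∧ a < m*(2*t)+K*t+r1))
    (hb : b < m*t ∨ (m*(2*t)+K*t ≤ b ∧ b < m*(2*t)+K*t+r1))
    (h : adjR t m K r1 a b) : False := by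
  have hmt : m*t ≤ m*(2*t) := Nat.mul_le_mul (le_refl m) (by omega)
  rcases h with ⟨i',hi',j',hj',hne',h1,h2,h3,h4⟩|⟨i',hi',h1,h2,h3⟩|⟨j',hj',h1,h2,h3,h4⟩|⟨h1,h2,h3⟩|⟨i',hi',p',hp',h1,h2⟩|⟨i',hi',h1,h2,h3⟩|⟨i',hi',h1,h2,h3⟩
  · have e1 := mulb (w:=m) (show t+j' < 2*t by omega)
    have e2 : m*t ≤ m*(t+j') := Nat.mul_le_mul (le_refl m) (by omega)
    omega
  · omega
  · have e1 := mulb (w:=m) (show t+j' < 2*t by omega)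
    have e2 : m*t ≤ m*(t+j') := Nat.mul_le_mul (le_refl m) (by omega)
    omega
  · omega
  · have e1 := mulb (w:=K) hi'
    omega
  · have e1 := mulb (w:=K) hi'
    omega
  · have e1 := mulb (w:=K) hi'
    omega

lemma adjR_no_YY {t m K r1 a b : ℕ} (hK : 1 ≤ K)
    (ha : (m*t ≤ a ∧ a < m*(2*t)) ∨ m*(2*t)+K*t+r1 ≤ a)
    (hb : (m*t ≤ b ∧ b < m*(2*t)) ∨ m*(2*t)+K*t+r1 ≤ b)
    (h : adjR t m K r1 a b) : False := by
  have hmt : m*t ≤ m*(2*t) := Nat.mul_le_mul (le_refl m) (by omega)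
  rcases h with ⟨i',hi',j',hj',hne',h1,h2,h3,h4⟩|⟨i',hi',h1,h2,h3⟩|⟨j',hj',h1,h2,h3,h4⟩|⟨h1,h2,h3⟩|⟨i',hi',p',hp',h1,h2⟩|⟨i',hi',h1,h2,h3⟩|⟨i',hi',h1,h2,h3⟩
  · have e1 := mulb (w:=m) hi'
    omega
  · have e1 := mulb (w:=m) hi'
    omega
  · omega
  · omega
  · have e1 := mulb (w:=K) hi'
    omega
  · have e1 := mulb (w:=K) hi'
    omega
  · have e1 := mulb (w:=K) hi'
    omega

end Sizes
section Parts

def XS (n t m K r1 : ℕ) (i : Fin (t+1)) : Set (Fin n) :=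
  if (i:ℕ) < t then {v : Fin n | m*(i:ℕ) ≤ v.val ∧ v.val < m*(i:ℕ) + m}
  else {v : Fin n | m*(2*t) + K*t ≤ v.val ∧ v.val < m*(2*t) + K*t + r1}

def YS (n t m K r1 : ℕ) (i : Fin (t+1)) : Set (Fin n) :=
  if (i:ℕ) < t then {v : Fin n | m*(t+(i:ℕ)) ≤ v.val ∧ v.val < m*(t+(i:ℕ)) + m}
  else {v : Fin n | m*(2*t) + K*t + r1 ≤ v.val}

def ZS (n t m K : ℕ) (i : Fin t) : Set (Fin n) :=
  {v : Fin n | m*(2*t) + K*(i:ℕ) ≤ v.val ∧ v.val < m*(2*t) + K*(i:ℕ) + K}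

def zf (n t m K : ℕ) (hn : 0 < n) (i : Fin t) (j : ℕ) : Fin n :=
  if h : m*(2*t) + K*(i:ℕ) + min j (K-1) < n then ⟨_, h⟩ else ⟨0, hn⟩

variable {n t m K r1 : ℕ}

lemma XS_lt {i : Fin (t+1)} (hi : (i:ℕ) < t) :
    XS n t m K r1 i = {v : Fin n | m*(i:ℕ) ≤ v.val ∧ v.val < m*(i:ℕ) + m} := if_pos hi

lemma XS_last {i : Fin (t+1)} (hi : ¬ (i:ℕ) < t) :
    XS n t m K r1 i = {v : Fin n | m*(2*t) + K*t ≤ v.val ∧ v.val < m*(2*t) + K*t + r1} :=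
  if_neg hi

lemma YS_lt {i : Fin (t+1)} (hi : (i:ℕ) < t) :
    YS n t m K r1 i = {v : Fin n | m*(t+(i:ℕ)) ≤ v.val ∧ v.val < m*(t+(i:ℕ)) + m} := if_pos hi

lemma YS_last {i : Fin (t+1)} (hi : ¬ (i:ℕ) < t) :
    YS n t m K r1 i = {v : Fin n | m*(2*t) + K*t + r1 ≤ v.val} := if_neg hi

lemma zf_val {hn : 0 < n} {i : Fin t} {j : ℕ} (h : m*(2*t) + K*(i:ℕ) + min j (K-1) < n) :
    (zf n t m K hn i j).val = m*(2*t) + K*(i:ℕ) + min j (K-1) := by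
  rw [zf, dif_pos h]

end Parts
set_option maxHeartbeats 1000000 in
theorem stmt_4 (k : ℕ) (hk : 2 ≤ k) (α : ℝ) (hα₁ : 0 < α) (hα₂ : α < 1 / 2)
    (n : ℕ) (hn : 36 * (k : ℝ) / α ≤ n) :
    ∃ G : SimpleGraph (Fin n), CycleFree (2 * k + 1) G ∧ InGClass k α n G := by
  -- numeric setup
  have hkR : (2:ℝ) ≤ k := by exact_mod_cast hk
  have hn36 : 36 * (k:ℝ) ≤ α * n := by
    rw [div_le_iff₀ hα₁] at hn
    linarith [hn]
  obtain ⟨s, hs⟩ : ∃ s', s' = Real.sqrt (α * n / (4 * k)) := ⟨_, rfl⟩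
  have hsnn : 0 ≤ s := hs ▸ Real.sqrt_nonneg _
  have hs2 : s^2 = α * n / (4*k) := by
    rw [hs]; exact Real.sq_sqrt (by positivity)
  have h9 : (9:ℝ) ≤ s^2 := by
    rw [hs2, le_div_iff₀ (by positivity)]
    nlinarith
  have hs3 : (3:ℝ) ≤ s := by nlinarith
  obtain ⟨t, ht⟩ : ∃ t', t' = ⌈Real.sqrt (α * ↑n / (4 * ↑k))⌉₊ := ⟨_, rfl⟩
  have ht1 : 1 ≤ t := by
    rw [ht, ← hs]
    exact Nat.ceil_pos.mpr (by linarith)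
  have htle : (t:ℝ) < s + 1 := by
    rw [ht, ← hs]
    exact Nat.ceil_lt_add_one hsnn
  have hαn : α * (n:ℝ) = 4*k*s^2 := by
    rw [hs2]; field_simp
  have hkt : 2*(k:ℝ)*t ≤ α * n := by
    have hsq : (0:ℝ) ≤ 2*s^2 - s - 1 := by nlinarith
    have h2 : 2*(k:ℝ)*(s+1) ≤ 4*k*s^2 := by
      nlinarith [mul_nonneg (show (0:ℝ) ≤ 2*k by linarith) hsq]
    have h1 : 2*(k:ℝ)*t ≤ 2*k*(s+1) := by
      nlinarith [mul_nonneg (show (0:ℝ) ≤ 2*k by linarith)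
        (show (0:ℝ) ≤ s + 1 - t by linarith)]
    linarith
  obtain ⟨K, hK⟩ : ∃ K', K' = 2*k - 1 := ⟨_, rfl⟩
  have hK3 : 3 ≤ K := by omega
  have hKodd : K % 2 = 1 := by omega
  have hKcast : ((K:ℕ):ℝ) = 2*(k:ℝ)-1 := by
    rw [hK]; push_cast [Nat.cast_sub (by omega : 1 ≤ 2*k)]; ring
  obtain ⟨m, hm⟩ : ∃ m', m' = ⌊(α * ↑n - (2 * (k:ℝ) - 1) * ↑t) / (2 * ↑t)⌋₊ := ⟨_, rfl⟩
  have htpos : (0:ℝ) < 2*(t:ℝ) := by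
    have : (1:ℝ) ≤ t := by exact_mod_cast ht1
    linarith
  have hm_le : (m:ℝ) * (2*t) ≤ α*n - (2*(k:ℝ)-1)*t := by
    by_cases hE : 0 ≤ (α * ↑n - (2 * (k:ℝ) - 1) * ↑t) / (2 * ↑t)
    · have h1 : (m:ℝ) ≤ (α * ↑n - (2 * (k:ℝ) - 1) * ↑t) / (2 * ↑t) := by
        rw [hm]; exact Nat.floor_le hE
      calc (m:ℝ) * (2*t) ≤ ((α * ↑n - (2 * (k:ℝ) - 1) * ↑t) / (2 * ↑t)) * (2*t) := by
              apply mul_le_mul_of_nonneg_right h1 (by linarith)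
        _ = α * ↑n - (2 * (k:ℝ) - 1) * ↑t := by field_simp
    · have hm0 : m = 0 := by
        rw [hm]; exact Nat.floor_eq_zero.mpr (by
          push_neg at hE
          calc (α * ↑n - (2 * (k:ℝ) - 1) * ↑t) / (2 * ↑t) < 0 := hE
            _ < 1 := by norm_num)
      rw [hm0]
      push_cast
      have hktR : (2*(k:ℝ)-1)*t ≤ 2*(k:ℝ)*t := by
        have h0t : (0:ℝ) ≤ t := by positivity
        nlinarith
      linarith
  have hCnR : ((m*(2*t) + K*t : ℕ) : ℝ) ≤ α * n := by
    push_cast [hKcast]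
    have hktR : (2*(k:ℝ)-1)*t ≤ 2*(k:ℝ)*t := by
      have h0t : (0:ℝ) ≤ t := by positivity
      nlinarith
    linarith [hm_le]
  have hCn : m*(2*t) + K*t ≤ n := by
    have h2 : ((m*(2*t) + K*t : ℕ) : ℝ) ≤ (n:ℝ) := by
      have hann : α * (n:ℝ) ≤ n := by nlinarith [show (0:ℝ) ≤ (n:ℝ) from Nat.cast_nonneg n]
      linarith
    exact_mod_cast h2
  have hn0 : 0 < n := by
    have : (0:ℝ) < (n:ℝ) := by nlinarith
    exact_mod_cast this
  obtain ⟨r1, hr1⟩ : ∃ r', r' = (n - (m*(2*t) + K*t)) - (n - (m*(2*t) + K*t))/2 := ⟨_, rfl⟩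
  have hmt : m*t ≤ m*(2*t) := Nat.mul_le_mul (le_refl m) (by omega)
  have hzv : ∀ (i : Fin t) (j : ℕ),
      (zf n t m K hn0 i j).val = m*(2*t) + K*(i:ℕ) + min j (K-1) := by
    intro i j
    refine zf_val ?_
    have h1 := mulb (w:=K) i.isLt
    have h2 : min j (K-1) ≤ K-1 := min_le_right _ _
    omega
  refine ⟨myG n t m K r1, ?_, ?_⟩
  · have e : 2*k+1 = K+2 := by omega
    rw [e]; exact myG_cycleFree n t m K r1 hK3 hKodd
  refine ⟨t, ht, XS n t m K r1, YS n t m K r1, ZS n t m K, zf n t m K hn0,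
    ?_, ?_, ?_, ?_, ?_, ?_, ?_, ?_, ?_, ?_, ?_, ?_, ?_, ?_, ?_, ?_⟩
  · -- X disjoint
    intro i j hij
    rw [Set.disjoint_left]
    intro v hv1 hv2
    by_cases hi : (i:ℕ) < t <;> by_cases hj : (j:ℕ) < t
    · rw [XS_lt hi] at hv1; rw [XS_lt hj] at hv2
      exact hij (Fin.ext (blockeq (w:=m) hv1.1 hv1.2 hv2.1 hv2.2))
    · rw [XS_lt hi] at hv1; rw [XS_last hj] at hv2
      have := mulb (w:=m) hi
      simp only [Set.mem_setOf_eq] at hv1 hv2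
      omega
    · rw [XS_last hi] at hv1; rw [XS_lt hj] at hv2
      have := mulb (w:=m) hj
      simp only [Set.mem_setOf_eq] at hv1 hv2
      omega
    · exact hij (Fin.ext (by omega))
  · -- Y disjoint
    intro i j hij
    rw [Set.disjoint_left]
    intro v hv1 hv2
    by_cases hi : (i:ℕ) < t <;> by_cases hj : (j:ℕ) < t
    · rw [YS_lt hi] at hv1; rw [YS_lt hj] at hv2
      have := blockeq (w:=m) hv1.1 hv1.2 hv2.1 hv2.2
      exact hij (Fin.ext (by omega))
    · rw [YS_lt hi] at hv1; rw [YS_last hj] at hv2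
      have := mulb (w:=m) (show t+(i:ℕ) < 2*t by omega)
      simp only [Set.mem_setOf_eq] at hv1 hv2
      omega
    · rw [YS_last hi] at hv1; rw [YS_lt hj] at hv2
      have := mulb (w:=m) (show t+(j:ℕ) < 2*t by omega)
      simp only [Set.mem_setOf_eq] at hv1 hv2
      omega
    · exact hij (Fin.ext (by omega))
  · -- Z disjoint
    intro i j hij
    rw [Set.disjoint_left]
    intro v hv1 hv2
    simp only [ZS, Set.mem_setOf_eq] at hv1 hv2
    have := blockeq (w:=K) (show K*(i:ℕ) ≤ v.val - m*(2*t) by omega)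
      (by omega) (show K*(j:ℕ) ≤ v.val - m*(2*t) by omega) (by omega)
    exact hij (Fin.ext this)
  · -- X Y disjoint
    intro i j
    rw [Set.disjoint_left]
    intro v hv1 hv2
    by_cases hi : (i:ℕ) < t <;> by_cases hj : (j:ℕ) < t
    · rw [XS_lt hi] at hv1; rw [YS_lt hj] at hv2
      simp only [Set.mem_setOf_eq] at hv1 hv2
      have h1 := mulb (w:=m) hi
      have h2 : m*t ≤ m*(t+(j:ℕ)) := Nat.mul_le_mul (le_refl m) (by omega)
      omega
    · rw [XS_lt hi] at hv1; rw [YS_last hj] at hv2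
      simp only [Set.mem_setOf_eq] at hv1 hv2
      have h1 := mulb (w:=m) hi
      omega
    · rw [XS_last hi] at hv1; rw [YS_lt hj] at hv2
      simp only [Set.mem_setOf_eq] at hv1 hv2
      have h2 := mulb (w:=m) (show t+(j:ℕ) < 2*t by omega)
      omega
    · rw [XS_last hi] at hv1; rw [YS_last hj] at hv2
      simp only [Set.mem_setOf_eq] at hv1 hv2
      omega
  · -- X Z disjoint
    intro i j
    rw [Set.disjoint_left]
    intro v hv1 hv2
    simp only [ZS, Set.mem_setOf_eq] at hv2
    have h1 := mulb (w:=K) j.isLt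
    by_cases hi : (i:ℕ) < t
    · rw [XS_lt hi] at hv1
      simp only [Set.mem_setOf_eq] at hv1
      have h2 := mulb (w:=m) hi
      omega
    · rw [XS_last hi] at hv1
      simp only [Set.mem_setOf_eq] at hv1
      omega
  · -- Y Z disjoint
    intro i j
    rw [Set.disjoint_left]
    intro v hv1 hv2
    simp only [ZS, Set.mem_setOf_eq] at hv2
    have h1 := mulb (w:=K) j.isLt
    by_cases hi : (i:ℕ) < t
    · rw [YS_lt hi] at hv1
      simp only [Set.mem_setOf_eq] at hv1
      have h2 := mulb (w:=m) (show t+(i:ℕ) < 2*t by omega)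
      omega
    · rw [YS_last hi] at hv1
      simp only [Set.mem_setOf_eq] at hv1
      omega
  · -- cover
    ext v
    simp only [Set.mem_union, Set.mem_iUnion, Set.mem_univ, iff_true]
    have hvn : v.val < n := v.isLt
    rcases lt_or_ge v.val (m*t) with hv|hv
    · have hm0 : 0 < m := by
        rcases Nat.eq_zero_or_pos m with h|h
        · rw [h] at hv; simp at hv
        · exact h
      have hdm : m * (v.val / m) + v.val % m = v.val := Nat.div_add_mod _ _
      have hmod : v.val % m < m := Nat.mod_lt _ hm0
      have hdiv : v.val / m < t := by
        by_contra hc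
        push_neg at hc
        have : m*t ≤ m*(v.val / m) := Nat.mul_le_mul (le_refl m) hc
        omega
      refine Or.inl (Or.inl ⟨⟨v.val / m, by omega⟩, ?_⟩)
      rw [XS_lt (show ((⟨v.val / m, by omega⟩ : Fin (t+1)):ℕ) < t from hdiv)]
      refine ⟨?_, ?_⟩
      · show m * (v.val / m) ≤ v.val
        omega
      · show v.val < m * (v.val / m) + m
        omega
    rcases lt_or_ge v.val (m*(2*t)) with hv2|hv2
    · have hm0 : 0 < m := by
        rcases Nat.eq_zero_or_pos m with h|h
        · rw [h] at hv2; simp at hv2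
        · exact h
      have hdm : m * ((v.val - m*t) / m) + (v.val - m*t) % m = v.val - m*t := Nat.div_add_mod _ _
      have hmod : (v.val - m*t) % m < m := Nat.mod_lt _ hm0
      have h2t : m*(2*t) = m*t + m*t := by ring
      have hdiv : (v.val - m*t) / m < t := by
        by_contra hc
        push_neg at hc
        have : m*t ≤ m*((v.val - m*t) / m) := Nat.mul_le_mul (le_refl m) hc
        omega
      refine Or.inl (Or.inr ⟨⟨(v.val - m*t) / m, by omega⟩, ?_⟩)
      rw [YS_lt (show ((⟨(v.val - m*t) / m, by omega⟩ : Fin (t+1)):ℕ) < t from hdiv)]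
      have he : m*(t + (v.val - m*t)/m) = m*t + m*((v.val - m*t)/m) := by ring
      refine ⟨?_, ?_⟩
      · show m * (t + (v.val - m*t) / m) ≤ v.val
        omega
      · show v.val < m * (t + (v.val - m*t) / m) + m
        omega
    rcases lt_or_ge v.val (m*(2*t) + K*t) with hv3|hv3
    · have hK0 : 0 < K := by omega
      have hdm : K * ((v.val - m*(2*t)) / K) + (v.val - m*(2*t)) % K = v.val - m*(2*t) :=
        Nat.div_add_mod _ _
      have hmod : (v.val - m*(2*t)) % K < K := Nat.mod_lt _ hK0
      have hdiv : (v.val - m*(2*t)) / K < t := by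
        by_contra hc
        push_neg at hc
        have : K*t ≤ K*((v.val - m*(2*t)) / K) := Nat.mul_le_mul (le_refl K) hc
        omega
      refine Or.inr ⟨⟨(v.val - m*(2*t)) / K, hdiv⟩, ?_, ?_⟩
      · show m*(2*t) + K * ((v.val - m*(2*t)) / K) ≤ v.val
        omega
      · show v.val < m*(2*t) + K * ((v.val - m*(2*t)) / K) + K
        omega
    rcases lt_or_ge v.val (m*(2*t) + K*t + r1) with hv4|hv4
    · refine Or.inl (Or.inl ⟨⟨t, by omega⟩, ?_⟩)
      rw [XS_last (show ¬((⟨t, by omega⟩ : Fin (t+1)):ℕ) < t from by simp)]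
      exact ⟨hv3, hv4⟩
    · refine Or.inl (Or.inr ⟨⟨t, by omega⟩, ?_⟩)
      rw [YS_last (show ¬((⟨t, by omega⟩ : Fin (t+1)):ℕ) < t from by simp)]
      exact hv4
  · -- (i) : Z parts
    intro i
    have hKi := mulb (w:=K) i.isLt
    refine ⟨?_, ?_, ?_, ?_⟩
    · rw [show ZS n t m K i = {v : Fin n |
          m*(2*t) + K*(i:ℕ) ≤ v.val ∧ v.val < m*(2*t) + K*(i:ℕ) + K} from rfl,
        ncard_interval _ _ (by omega) (by omega)]
      omega
    · intro j₁ hj₁ j₂ hj₂ he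
      have hv := congrArg Fin.val he
      rw [hzv, hzv, min_eq_left (by omega), min_eq_left (by omega)] at hv
      omega
    · ext v
      simp only [ZS, Set.mem_setOf_eq]
      constructor
      · rintro ⟨j, hj, rfl⟩
        rw [hzv, min_eq_left (by omega)]
        omega
      · rintro ⟨h1, h2⟩
        refine ⟨v.val - (m*(2*t) + K*(i:ℕ)), by omega, ?_⟩
        apply Fin.val_injective
        rw [hzv, min_eq_left (by omega)]
        omega
    · intro j hj
      refine myG_adj.mpr ⟨?_, Or.inl ?_⟩
      · intro h
        have hv := congrArg Fin.val h
        rw [hzv, hzv, min_eq_left (by omega), min_eq_left (by omega)] at hv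
        omega
      · refine Or.inr (Or.inr (Or.inr (Or.inr (Or.inl ⟨(i:ℕ), i.isLt, j, by omega, ?_, ?_⟩))))
        · rw [hzv, min_eq_left (by omega)]
        · rw [hzv, min_eq_left (by omega)]
          omega
  · -- (ii)
    intro i hi
    rw [XS_lt hi, YS_lt hi]
    have h1 := mulb (w:=m) hi
    have h2 := mulb (w:=m) (show t+(i:ℕ) < 2*t by omega)
    constructor
    · rw [ncard_interval _ _ (by omega) (by omega)]
      have e : m*(i:ℕ) + m - m*(i:ℕ) = m := by omega
      rw [e]; exact hm
    · rw [ncard_interval _ _ (by omega) (by omega)]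
      have e : m*(t+(i:ℕ)) + m - m*(t+(i:ℕ)) = m := by omega
      rw [e]; exact hm
  · -- balanced
    have hlast : ¬ ((Fin.last t : Fin (t+1)):ℕ) < t := by simp
    rw [XS_last hlast, YS_last hlast]
    have hYeq : {v : Fin n | m*(2*t) + K*t + r1 ≤ v.val}
        = {v : Fin n | m*(2*t) + K*t + r1 ≤ v.val ∧ v.val < n} := by
      ext v; simp [v.isLt]
    rw [hYeq, ncard_interval _ _ (le_refl n) (by omega),
      ncard_interval _ _ (by omega) (by omega)]
    omega
  · -- X independent
    intro u hu v hv hadj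
    simp only [Set.mem_iUnion] at hu hv
    obtain ⟨i, hu⟩ := hu
    obtain ⟨j, hv⟩ := hv
    have hru : u.val < m*t ∨ (m*(2*t)+K*t ≤ u.val ∧ u.val < m*(2*t)+K*t+r1) := by
      by_cases hi : (i:ℕ) < t
      · rw [XS_lt hi] at hu
        have := mulb (w:=m) hi
        simp only [Set.mem_setOf_eq] at hu
        omega
      · rw [XS_last hi] at hu
        simp only [Set.mem_setOf_eq] at hu
        omega
    have hrv : v.val < m*t ∨ (m*(2*t)+K*t ≤ v.val ∧ v.val < m*(2*t)+K*t+r1) := by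
      by_cases hj : (j:ℕ) < t
      · rw [XS_lt hj] at hv
        have := mulb (w:=m) hj
        simp only [Set.mem_setOf_eq] at hv
        omega
      · rw [XS_last hj] at hv
        simp only [Set.mem_setOf_eq] at hv
        omega
    obtain ⟨hne, h|h⟩ := myG_adj.mp hadj
    · exact adjR_no_XX (by omega) hru hrv h
    · exact adjR_no_XX (by omega) hrv hru h
  · -- Y independent
    intro u hu v hv hadj
    simp only [Set.mem_iUnion] at hu hv
    obtain ⟨i, hu⟩ := hu
    obtain ⟨j, hv⟩ := hv
    have hru : (m*t ≤ u.val ∧ u.val < m*(2*t)) ∨ m*(2*t)+K*t+r1 ≤ u.val := by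
      by_cases hi : (i:ℕ) < t
      · rw [YS_lt hi] at hu
        have h1 := mulb (w:=m) (show t+(i:ℕ) < 2*t by omega)
        have h2 : m*t ≤ m*(t+(i:ℕ)) := Nat.mul_le_mul (le_refl m) (by omega)
        simp only [Set.mem_setOf_eq] at hu
        omega
      · rw [YS_last hi] at hu
        simp only [Set.mem_setOf_eq] at hu
        omega
    have hrv : (m*t ≤ v.val ∧ v.val < m*(2*t)) ∨ m*(2*t)+K*t+r1 ≤ v.val := by
      by_cases hj : (j:ℕ) < t
      · rw [YS_lt hj] at hv
        have h1 := mulb (w:=m) (show t+(j:ℕ) < 2*t by omega)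
        have h2 : m*t ≤ m*(t+(j:ℕ)) := Nat.mul_le_mul (le_refl m) (by omega)
        simp only [Set.mem_setOf_eq] at hv
        omega
      · rw [YS_last hj] at hv
        simp only [Set.mem_setOf_eq] at hv
        omega
    obtain ⟨hne, h|h⟩ := myG_adj.mp hadj
    · exact adjR_no_YY (by omega) hru hrv h
    · exact adjR_no_YY (by omega) hrv hru h
  · -- (iv) a
    intro i hi x hx y hy
    rw [XS_lt hi] at hx; rw [YS_lt hi] at hy
    simp only [Set.mem_setOf_eq] at hx hy
    exact no_XiYi hi hx.1 hx.2 hy.1 hy.2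
  · -- (iv) b
    intro x hx y hy
    have hlast : ¬ ((Fin.last t : Fin (t+1)):ℕ) < t := by simp
    rw [XS_last hlast] at hx; rw [YS_last hlast] at hy
    simp only [Set.mem_setOf_eq] at hx hy
    refine myG_adj.mpr ⟨?_, Or.inl ?_⟩
    · intro h
      have := congrArg Fin.val h
      omega
    · exact Or.inr (Or.inr (Or.inr (Or.inl ⟨hx.1, hx.2, hy⟩)))
  · -- (iv) c
    intro i j hij x hx y hy
    by_cases hi : (i:ℕ) < t <;> by_cases hj : (j:ℕ) < t
    · rw [XS_lt hi] at hx; rw [YS_lt hj] at hy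
      simp only [Set.mem_setOf_eq] at hx hy
      have h1 := mulb (w:=m) hi
      have h2 : m*t ≤ m*(t+(j:ℕ)) := Nat.mul_le_mul (le_refl m) (by omega)
      refine myG_adj.mpr ⟨?_, Or.inl ?_⟩
      · intro h
        have := congrArg Fin.val h
        omega
      · exact Or.inl ⟨(i:ℕ), hi, (j:ℕ), hj,
          fun h => hij (Fin.ext h), hx.1, hx.2, hy.1, hy.2⟩
    · rw [XS_lt hi] at hx; rw [YS_last hj] at hy
      simp only [Set.mem_setOf_eq] at hx hy
      have h1 := mulb (w:=m) hi
      refine myG_adj.mpr ⟨?_, Or.inl ?_⟩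
      · intro h
        have := congrArg Fin.val h
        omega
      · exact Or.inr (Or.inl ⟨(i:ℕ), hi, hx.1, hx.2, hy⟩)
    · rw [XS_last hi] at hx; rw [YS_lt hj] at hy
      simp only [Set.mem_setOf_eq] at hx hy
      have h2 := mulb (w:=m) (show t+(j:ℕ) < 2*t by omega)
      refine myG_adj.mpr ⟨?_, Or.inl ?_⟩
      · intro h
        have := congrArg Fin.val h
        omega
      · exact Or.inr (Or.inr (Or.inl ⟨(j:ℕ), hj, hx.1, hx.2, hy.1, hy.2⟩))
    · exact absurd (Fin.ext (show (i:ℕ) = (j:ℕ) from by omega)) hij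
  · -- (v)
    intro i
    have hci : ((i.castSucc : Fin (t+1)):ℕ) = (i:ℕ) := rfl
    have hKi := mulb (w:=K) i.isLt
    constructor
    · intro x hx
      rw [XS_lt (show ((i.castSucc : Fin (t+1)):ℕ) < t from hci ▸ i.isLt)] at hx
      rw [hci] at hx
      simp only [Set.mem_setOf_eq] at hx
      have h1 := mulb (w:=m) i.isLt
      refine myG_adj.mpr ⟨?_, Or.inl ?_⟩
      · intro h
        have hv := congrArg Fin.val h
        rw [hzv] at hv
        have h3 : min 0 (K-1) ≤ K-1 := min_le_right _ _
        omega
      · refine Or.inr (Or.inr (Or.inr (Or.inr (Or.inr (Or.inl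
          ⟨(i:ℕ), i.isLt, ?_, hx.1, hx.2⟩)))))
        rw [hzv]
        omega
    · intro y hy
      rw [YS_lt (show ((i.castSucc : Fin (t+1)):ℕ) < t from hci ▸ i.isLt)] at hy
      rw [hci] at hy
      simp only [Set.mem_setOf_eq] at hy
      have h1 := mulb (w:=m) (show t+(i:ℕ) < 2*t by omega)
      have h2 : m*t ≤ m*(t+(i:ℕ)) := Nat.mul_le_mul (le_refl m) (by omega)
      refine myG_adj.mpr ⟨?_, Or.inl ?_⟩
      · intro h
        have hv := congrArg Fin.val h
        rw [hzv] at hv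
        have h3 : min (2*k-2) (K-1) ≤ K-1 := min_le_right _ _
        omega
      · refine Or.inr (Or.inr (Or.inr (Or.inr (Or.inr (Or.inr
          ⟨(i:ℕ), i.isLt, ?_, hy.1, hy.2⟩)))))
        rw [hzv, show 2*k-2 = K-1 from by omega, min_self]
end

section
/- Let k ≥ 2 be an integer, let α be a real number with 0 < α < 1/2, and let n ≥ 36k/α be an integer. If G is a maximal C_{2k+1}-free graph on n vertices belonging to the class 𝒢_{k,α}(n), then e(G) ≥ n²/4 − 2√(kα)·n^{3/2}, and every induced complete bipartite subgraph of G has at most (1 − α/4)n vertices. -/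
open SimpleGraph

/-- `G` is a maximal `C_m`-free graph. -/
def MaximalCycleFree (m : ℕ) {β : Type*} (G : SimpleGraph β) : Prop :=
  CycleFree m G ∧
    ∀ v w : β, v ≠ w → ¬ G.Adj v w →
      HasSubCopy (cycleGraph m) (G ⊔ fromEdgeSet {s(v, w)})

/-- The induced subgraph of `G` on `S` is a complete bipartite graph. -/
def IsInducedCompleteBipartiteOn {β : Type*} (G : SimpleGraph β) (S : Set β) : Prop :=
  ∃ A B : Set β, Disjoint A B ∧ A ∪ B = S ∧
    ∀ u ∈ S, ∀ v ∈ S, (G.Adj u v ↔ ((u ∈ A ∧ v ∈ B) ∨ (u ∈ B ∧ v ∈ A)))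

private lemma le_of_sq_le_sq'' {a b : ℝ} (ha : 0 ≤ a) (hb : 0 ≤ b) (h : a^2 ≤ b^2) : a ≤ b := by
  nlinarith

private lemma num_facts {k α n t s0 w s : ℝ}
    (hK2 : 2 ≤ k) (hα₁ : 0 < α) (hα₂ : α < 1/2) (h36 : 36 * k ≤ α * n)
    (hn0 : 0 < n)
    (hs00 : 0 ≤ s0) (hs0sq : 4 * k * s0 ^ 2 = α * n)
    (htlb : s0 ≤ t) (htub : t < s0 + 1)
    (hw0 : 0 ≤ w) (hw2 : w ^ 2 = k * α)
    (hs0n : 0 ≤ s) (hs2 : s ^ 2 = n) :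
    3 ≤ s0 ∧
    w * s ≤ 2 * k * t ∧
    6 * k ≤ w * s ∧
    w * s ≤ α * n / 6 ∧
    (2 * k - 1) * t ≤ (3/2) * (w * s) + 3 * k ∧
    (2 * k + 1) * t ≤ α * n / 3 := by
  have hK0 : (0:ℝ) < k := by linarith
  have h9 : 9 ≤ s0 ^ 2 := by nlinarith
  have hs03 : 3 ≤ s0 := by nlinarith [h9]
  have ht0 : (0:ℝ) ≤ t := le_trans hs00 htlb
  have hws0 : 0 ≤ w * s := mul_nonneg hw0 hs0n
  have hwssq : (w * s) ^ 2 = k * α * n := by rw [mul_pow, hw2, hs2]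
  have hks0 : (2 * k * s0) ^ 2 = k * α * n := by linear_combination k * hs0sq
  have hws1 : w * s ≤ 2 * k * t := by
    apply le_of_sq_le_sq'' hws0 (mul_nonneg (by linarith) ht0)
    rw [hwssq, ← hks0]
    nlinarith [mul_nonneg (sub_nonneg.2 htlb) (by linarith : (0:ℝ) ≤ t + s0), sq_nonneg k]
  have hws2 : 2 * k * s0 ≤ w * s := by
    apply le_of_sq_le_sq'' (mul_nonneg (by linarith) hs00) hws0
    rw [hwssq, hks0]
  have h6k : 6 * k ≤ w * s := by
    apply le_of_sq_le_sq'' (by linarith) hws0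
    rw [hwssq]; nlinarith
  have hwsub : w * s ≤ α * n / 6 := by
    apply le_of_sq_le_sq'' hws0 (by positivity)
    rw [hwssq, div_pow]
    rw [le_div_iff₀ (by norm_num)]
    nlinarith [mul_pos hα₁ hn0]
  have fD : (2 * k - 1) * t ≤ (3/2) * (w * s) + 3 * k := by nlinarith
  have hTt : (2 * k + 1) * t ≤ α * n / 3 := by
    rw [le_div_iff₀ (by norm_num)]
    nlinarith [hws2, htub, hwsub]
  exact ⟨hs03, hws1, h6k, hwsub, fD, hTt⟩

set_option maxHeartbeats 1600000 in
private lemma part1_arith {k α nR T M AR BR eR w s : ℝ}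
    (hK2 : 2 ≤ k) (hα₁ : 0 < α) (hα₂ : α < 1/2) (h36 : 36*k ≤ α*nR) (hn0 : 0 < nR)
    (hT0 : 0 < T) (hM0 : 0 ≤ M) (hw0 : 0 ≤ w) (hs0 : 0 ≤ s)
    (hw2 : w^2 = k*α) (hs2 : s^2 = nR)
    (hws1 : w*s ≤ 2*k*T) (h6k : 6*k ≤ w*s)
    (fD : (2*k-1)*T ≤ (3/2)*(w*s)+3*k)
    (hMub : M ≤ α*nR/(2*T))
    (h1 : AR*BR ≤ eR + T*(M*M))
    (h2 : AR + BR + T*(2*k-1) = nR)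
    (b1 : AR ≤ BR + 1) (b2 : BR ≤ AR + 1) :
    nR^2/4 - 2*w*(nR*s) ≤ eR := by
  have hK0 : (0:ℝ) < k := by linarith
  have hws0 : 0 ≤ w * s := mul_nonneg hw0 hs0
  have hwssq : (w * s) ^ 2 = k * α * nR := by rw [mul_pow, hw2, hs2]
  have h4 : T * (M * M) ≤ w * nR * s / 4 := by
    have e1 : T * (M * M) ≤ α^2 * nR^2 / (4 * T) := by
      have hmm : M * M ≤ (α * nR / (2 * T)) * (α * nR / (2 * T)) :=
        mul_le_mul hMub hMub hM0 (by positivity)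
      calc T * (M * M) ≤ T * ((α * nR / (2 * T)) * (α * nR / (2 * T))) :=
            mul_le_mul_of_nonneg_left hmm hT0.le
        _ = α^2 * nR^2 / (4 * T) := by field_simp; ring
    have e2 : α^2 * nR^2 / (4 * T) ≤ w * nR * s / 4 := by
      rw [div_le_div_iff₀ (by positivity) (by norm_num)]
      have hprod : (w * nR * s) * (w * s) ≤ (w * nR * s) * (2 * k * T) :=
        mul_le_mul_of_nonneg_left hws1 (mul_nonneg (mul_nonneg hw0 hn0.le) hs0)
      have hid : nR * (w * s) ^ 2 = k * α * nR ^ 2 := by rw [hwssq]; ring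
      have hpos : 0 < k * α * nR ^ 2 := by positivity
      apply le_of_mul_le_mul_left ?_ hK0
      nlinarith [hprod, hid, hpos, hα₂]
    linarith
  have hD0 : 0 ≤ (2*k-1)*T := mul_nonneg (by linarith) hT0.le
  have h9 : 2 * nR * ((2*k-1)*T) ≤ 2 * nR * ((3/2)*(w*s)+3*k) :=
    mul_le_mul_of_nonneg_left fD (by positivity)
  have h7 : 6*k*nR ≤ w*nR*s := by nlinarith
  have h8 : (1:ℝ) ≤ w*nR*s := by nlinarith
  have hsqeq : (AR + BR)^2 = (nR - (2*k-1)*T)^2 := by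
    rw [show AR + BR = nR - (2*k-1)*T by linarith]
  have hdiff : (AR - BR)^2 ≤ 1 := by nlinarith [b1, b2]
  have hid2 : 4*(AR*BR) = (AR + BR)^2 - (AR - BR)^2 := by ring
  have key1 : (nR - (2*k-1)*T)^2 - 1 ≤ 4*(AR*BR) := by
    rw [hid2, hsqeq]; linarith
  have key2 : (nR - (2*k-1)*T)^2 = nR^2 - 2*nR*((2*k-1)*T) + ((2*k-1)*T)^2 := by ring
  nlinarith [h1, h4, key1, key2, h9, h7, h8, sq_nonneg ((2*k-1)*T)]

private lemma part2_case2_arith {k α nR T M SR : ℝ}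
    (hα₁ : 0 < α) (hα₂ : α < 1/2) (hn0 : 0 < nR) (hK2 : 2 ≤ k)
    (hT3 : 3 ≤ T) (hM0 : 0 ≤ M)
    (hMub : M ≤ α*nR/(2*T)) (hTt : (2*k+1)*T ≤ α*nR/3)
    (hS : SR ≤ M + M + T*(2*k-1)) : SR ≤ (1 - α/4)*nR := by
  have hT0 : (0:ℝ) < T := by linarith
  have hM6 : M ≤ α*nR/6 := by
    have : α*nR/(2*T) ≤ α*nR/6 := by
      apply div_le_div_of_nonneg_left _ (by norm_num) (by linarith)
      nlinarith
    linarith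
  have hD : T*(2*k-1) ≤ α*nR/3 := by nlinarith
  nlinarith

private lemma part2_case1_arith {α nR T M SR : ℝ}
    (hα₁ : 0 < α) (hα₂ : α < 1/2) (hn0 : 0 ≤ nR)
    (htm : α*nR/3 ≤ T*M) (hS : SR + T*M ≤ nR) : SR ≤ (1 - α/4)*nR := by
  nlinarith [mul_nonneg hα₁.le hn0]

open Finset in
private lemma aux_pairs_le_edges {n : ℕ} (G : SimpleGraph (Fin n))
    (XU YU : Finset (Fin n)) (hd : Disjoint XU YU)
    (P : Finset (Fin n × Fin n)) (hsub : P ⊆ XU ×ˢ YU)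
    (hadj : ∀ p ∈ P, G.Adj p.1 p.2) :
    P.card ≤ G.edgeSet.ncard := by
  classical
  rw [Set.ncard_eq_toFinset_card G.edgeSet (Set.toFinite _)]
  have hinj : Set.InjOn (fun p : Fin n × Fin n => s(p.1, p.2)) P := by
    intro p hp q hq hpq
    simp only [Sym2.eq_iff] at hpq
    have hp' := Finset.mem_product.mp (hsub hp)
    have hq' := Finset.mem_product.mp (hsub hq)
    rcases hpq with ⟨h1, h2⟩ | ⟨h1, h2⟩
    · exact Prod.ext h1 h2
    · exact absurd hq'.2 (Finset.disjoint_left.mp hd (h1 ▸ hp'.1))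
  calc P.card = (P.image fun p => s(p.1, p.2)).card :=
        (Finset.card_image_of_injOn hinj).symm
    _ ≤ _ := by
        apply Finset.card_le_card
        intro e he
        simp only [Finset.mem_image] at he
        obtain ⟨p, hp, rfl⟩ := he
        rw [Set.Finite.mem_toFinset]
        exact hadj p hp

set_option maxHeartbeats 2000000 in
theorem stmt_5 (k : ℕ) (hk : 2 ≤ k) (α : ℝ) (hα₁ : 0 < α) (hα₂ : α < 1 / 2)
    (n : ℕ) (hn : 36 * (k : ℝ) / α ≤ n) (G : SimpleGraph (Fin n))
    (hmax : MaximalCycleFree (2 * k + 1) G) (hclass : InGClass k α n G) :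
    (n : ℝ) ^ 2 / 4 - 2 * Real.sqrt (k * α) * (n : ℝ) ^ ((3 : ℝ) / 2) ≤
      (G.edgeSet.ncard : ℝ) ∧
    ∀ S : Set (Fin n), IsInducedCompleteBipartiteOn G S →
      (S.ncard : ℝ) ≤ (1 - α / 4) * n := by
  classical
  obtain ⟨t, ht, X, Y, Z, z, hXX, hYY, hZZ, hXY, hXZ, hYZ, hcover, hZi, hsize, hbal,
    hXind, hYind, hXYi, hlastXY, hXYij, hzv⟩ := hclass
  set m : ℕ := ⌊(α * n - (2 * (k:ℝ) - 1) * t) / (2 * t)⌋₊ with hm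
  -- ===== basic real facts =====
  have hK2 : (2:ℝ) ≤ (k:ℝ) := by exact_mod_cast hk
  have hK0 : (0:ℝ) < (k:ℝ) := by linarith
  have h36 : 36 * (k:ℝ) ≤ α * n := by
    have h := (div_le_iff₀ hα₁).mp hn
    nlinarith [h]
  have hn0R : (0:ℝ) < n := by nlinarith
  have hnn : (0:ℝ) ≤ n := hn0R.le
  set s0 : ℝ := Real.sqrt (α * n / (4 * k)) with hs0def
  have hq0 : (0:ℝ) ≤ α * n / (4 * k) := by positivity
  have hs00 : 0 ≤ s0 := Real.sqrt_nonneg _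
  have hs0sq : s0 ^ 2 = α * n / (4 * k) := Real.sq_sqrt hq0
  have hs0sq' : 4 * (k:ℝ) * s0 ^ 2 = α * n := by
    rw [hs0sq]; field_simp
  have htlb : s0 ≤ (t:ℝ) := by rw [ht]; exact Nat.le_ceil _
  have htub : (t:ℝ) < s0 + 1 := by rw [ht]; exact Nat.ceil_lt_add_one hs00
  set w : ℝ := Real.sqrt ((k:ℝ) * α) with hwdef
  set s : ℝ := Real.sqrt n with hsdef
  have hw0 : 0 ≤ w := Real.sqrt_nonneg _
  have hs0n : 0 ≤ s := Real.sqrt_nonneg _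
  have hw2 : w ^ 2 = (k:ℝ) * α := Real.sq_sqrt (by positivity)
  have hs2 : s ^ 2 = (n:ℝ) := Real.sq_sqrt hnn
  obtain ⟨hs03, hws1, h6k, hwsub, fD, hTt⟩ :=
    num_facts hK2 hα₁ hα₂ h36 hn0R hs00 hs0sq' htlb htub hw0 hw2 hs0n hs2
  have ht3R : (3:ℝ) ≤ (t:ℝ) := le_trans hs03 htlb
  have ht0R : (0:ℝ) < (t:ℝ) := by linarith
  have hnum0 : 0 ≤ α * n - (2 * (k:ℝ) - 1) * (t:ℝ) := by nlinarith
  have hM0 : (0:ℝ) ≤ (m:ℝ) := Nat.cast_nonneg m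
  have hmub : (m:ℝ) ≤ α * n / (2 * t) := by
    have h1 : (m:ℝ) ≤ (α * n - (2 * (k:ℝ) - 1) * t) / (2 * t) := by
      rw [hm]; exact Nat.floor_le (by positivity)
    have h2 : (α * n - (2 * (k:ℝ) - 1) * t) / (2 * t) ≤ α * n / (2 * t) := by
      exact (div_le_div_iff_of_pos_right (by positivity)).mpr
        (by nlinarith [mul_nonneg (by linarith : (0:ℝ) ≤ 2*(k:ℝ)-1) ht0R.le])
    linarith
  have hmlb : (α * n - (2 * (k:ℝ) - 1) * t) / (2 * t) < (m:ℝ) + 1 := by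
    rw [hm]; exact Nat.lt_floor_add_one _
  have htm : α * n / 3 ≤ (t:ℝ) * m := by
    have h1 : α * n - (2 * (k:ℝ) - 1) * t < ((m:ℝ) + 1) * (2 * t) :=
      (div_lt_iff₀ (by positivity)).mp hmlb
    nlinarith
  have h32 : (n : ℝ) ^ ((3 : ℝ) / 2) = (n:ℝ) * s := by
    rw [hsdef, show ((3:ℝ)/2) = 1 + 1/2 by norm_num, Real.rpow_add hn0R, Real.rpow_one,
      Real.sqrt_eq_rpow]
  -- ===== Finset versions =====
  set FX : Fin (t+1) → Finset (Fin n) := fun i => (X i).toFinite.toFinset with hFX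
  set FY : Fin (t+1) → Finset (Fin n) := fun i => (Y i).toFinite.toFinset with hFY
  set FZ : Fin t → Finset (Fin n) := fun i => (Z i).toFinite.toFinset with hFZ
  have hmemFX : ∀ i v, v ∈ FX i ↔ v ∈ X i := fun i v => Set.Finite.mem_toFinset _
  have hmemFY : ∀ i v, v ∈ FY i ↔ v ∈ Y i := fun i v => Set.Finite.mem_toFinset _
  have hmemFZ : ∀ i v, v ∈ FZ i ↔ v ∈ Z i := fun i v => Set.Finite.mem_toFinset _
  have hcX : ∀ i, (FX i).card = (X i).ncard := fun i => (Set.ncard_eq_toFinset_card _ _).symm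
  have hcY : ∀ i, (FY i).card = (Y i).ncard := fun i => (Set.ncard_eq_toFinset_card _ _).symm
  have hcZ : ∀ i, (FZ i).card = (Z i).ncard := fun i => (Set.ncard_eq_toFinset_card _ _).symm
  set XU := Finset.univ.biUnion FX with hXUdef
  set YU := Finset.univ.biUnion FY with hYUdef
  set ZU := Finset.univ.biUnion FZ with hZUdef
  set AN := ∑ i, (FX i).card with hANdef
  set BN := ∑ i, (FY i).card with hBNdef
  have hXUcard : XU.card = AN :=
    Finset.card_biUnion fun a _ b _ hab => Set.Finite.disjoint_toFinset.mpr (hXX a b hab)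
  have hYUcard : YU.card = BN :=
    Finset.card_biUnion fun a _ b _ hab => Set.Finite.disjoint_toFinset.mpr (hYY a b hab)
  have hZUcard : ZU.card = t * (2 * k - 1) := by
    rw [Finset.card_biUnion fun a _ b _ hab => Set.Finite.disjoint_toFinset.mpr (hZZ a b hab)]
    rw [Finset.sum_congr rfl fun i _ => by rw [hcZ, (hZi i).1]]
    rw [Finset.sum_const, Finset.card_univ, Fintype.card_fin, smul_eq_mul]
  have hdXY : Disjoint XU YU := by
    rw [hXUdef, Finset.disjoint_biUnion_left]
    intro i _
    rw [hYUdef, Finset.disjoint_biUnion_right]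
    intro j _
    exact Set.Finite.disjoint_toFinset.mpr (hXY i j)
  have hdXZ : Disjoint XU ZU := by
    rw [hXUdef, Finset.disjoint_biUnion_left]
    intro i _
    rw [hZUdef, Finset.disjoint_biUnion_right]
    intro j _
    exact Set.Finite.disjoint_toFinset.mpr (hXZ i j)
  have hdYZ : Disjoint YU ZU := by
    rw [hYUdef, Finset.disjoint_biUnion_left]
    intro i _
    rw [hZUdef, Finset.disjoint_biUnion_right]
    intro j _
    exact Set.Finite.disjoint_toFinset.mpr (hYZ i j)
  have hunion : XU ∪ YU ∪ ZU = Finset.univ := by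
    apply Finset.eq_univ_of_forall
    intro v
    have hv : v ∈ (⋃ i, X i) ∪ (⋃ i, Y i) ∪ (⋃ i, Z i) := hcover.symm ▸ Set.mem_univ v
    simp only [Set.mem_union, Set.mem_iUnion] at hv
    rw [hXUdef, hYUdef, hZUdef]
    simp only [Finset.mem_union, Finset.mem_biUnion, Finset.mem_univ, true_and]
    rcases hv with (⟨i, hi⟩ | ⟨i, hi⟩) | ⟨i, hi⟩
    · exact Or.inl (Or.inl ⟨i, (hmemFX i v).mpr hi⟩)
    · exact Or.inl (Or.inr ⟨i, (hmemFY i v).mpr hi⟩)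
    · exact Or.inr ⟨i, (hmemFZ i v).mpr hi⟩
  have hnABZ : AN + BN + t * (2 * k - 1) = n := by
    have h1 : (XU ∪ YU ∪ ZU).card = n := by
      rw [hunion, Finset.card_univ, Fintype.card_fin]
    rw [Finset.card_union_of_disjoint (by
        rw [Finset.disjoint_union_left]; exact ⟨hdXZ, hdYZ⟩),
      Finset.card_union_of_disjoint hdXY, hXUcard, hYUcard, hZUcard] at h1
    exact h1
  have hcastXsize : ∀ i : Fin (t+1), (i : ℕ) < t → (FX i).card = m ∧ (FY i).card = m := by
    intro i hi
    rw [hcX, hcY]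
    exact hsize i hi
  have hAN : AN = t * m + (FX (Fin.last t)).card := by
    rw [hANdef, Fin.sum_univ_castSucc]
    congr 1
    rw [Finset.sum_congr rfl fun i _ => (hcastXsize i.castSucc (by simpa using i.isLt)).1]
    rw [Finset.sum_const, Finset.card_univ, Fintype.card_fin, smul_eq_mul]
  have hBN : BN = t * m + (FY (Fin.last t)).card := by
    rw [hBNdef, Fin.sum_univ_castSucc]
    congr 1
    rw [Finset.sum_congr rfl fun i _ => (hcastXsize i.castSucc (by simpa using i.isLt)).2]
    rw [Finset.sum_const, Finset.card_univ, Fintype.card_fin, smul_eq_mul]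
  have hbal1 : AN ≤ BN + 1 := by
    have b := hbal.1
    rw [← hcX, ← hcY] at b
    omega
  have hbal2 : BN ≤ AN + 1 := by
    have b := hbal.2
    rw [← hcX, ← hcY] at b
    omega
  -- ===== edge counting =====
  have hedgecount : AN * BN ≤ G.edgeSet.ncard + t * (m * m) := by
    set base : Finset (Fin (t+1) × Fin (t+1)) := Finset.univ ×ˢ Finset.univ with hbase
    set goodP := base.filter (fun p => p.1 ≠ p.2 ∨ p.1 = Fin.last t) with hgoodP
    set PB := goodP.biUnion (fun p => FX p.1 ×ˢ FY p.2) with hPB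
    have hPBsub : PB ⊆ XU ×ˢ YU := by
      intro q hq
      simp only [hPB, Finset.mem_biUnion, Finset.mem_product] at hq
      obtain ⟨p, _, h1, h2⟩ := hq
      rw [Finset.mem_product, hXUdef, hYUdef]
      exact ⟨Finset.mem_biUnion.mpr ⟨p.1, Finset.mem_univ _, h1⟩,
        Finset.mem_biUnion.mpr ⟨p.2, Finset.mem_univ _, h2⟩⟩
    have hPBadj : ∀ q ∈ PB, G.Adj q.1 q.2 := by
      intro q hq
      simp only [hPB, Finset.mem_biUnion] at hq
      obtain ⟨p, hp, hq2⟩ := hq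
      rw [Finset.mem_product] at hq2
      have h1 : q.1 ∈ X p.1 := (hmemFX _ _).mp hq2.1
      have h2 : q.2 ∈ Y p.2 := (hmemFY _ _).mp hq2.2
      have hp' : p.1 ≠ p.2 ∨ p.1 = Fin.last t := by
        have := (Finset.mem_filter.mp hp).2
        exact this
      by_cases hne : p.1 = p.2
      · rcases hp' with h | h
        · exact absurd hne h
        · refine hlastXY q.1 (h ▸ h1) q.2 ?_
          rw [← hne] at h2
          exact h ▸ h2
      · exact hXYij p.1 p.2 hne q.1 h1 q.2 h2
    have hPBcard : PB.card = ∑ p ∈ goodP, (FX p.1).card * (FY p.2).card := by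
      rw [hPB, Finset.card_biUnion]
      · exact Finset.sum_congr rfl fun p _ => Finset.card_product _ _
      · intro p _ q _ hpq
        rw [Function.onFun, Finset.disjoint_left]
        intro a ha hb
        rw [Finset.mem_product] at ha hb
        have e1 : p.1 = q.1 := by
          by_contra hne
          exact Finset.disjoint_left.mp
            (Set.Finite.disjoint_toFinset.mpr (hXX p.1 q.1 hne)) ha.1 hb.1
        have e2 : p.2 = q.2 := by
          by_contra hne
          exact Finset.disjoint_left.mp
            (Set.Finite.disjoint_toFinset.mpr (hYY p.2 q.2 hne)) ha.2 hb.2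
        exact hpq (Prod.ext e1 e2)
    have hedge1 : ∑ p ∈ goodP, (FX p.1).card * (FY p.2).card ≤ G.edgeSet.ncard := by
      rw [← hPBcard]
      exact aux_pairs_le_edges G XU YU hdXY PB hPBsub hPBadj
    have hsum_all : ∑ p ∈ base, (FX p.1).card * (FY p.2).card = AN * BN := by
      rw [hbase, Finset.sum_product]
      rw [hANdef, hBNdef, Finset.sum_mul_sum]
    have hbadsum : ∑ p ∈ base.filter (fun p => ¬ (p.1 ≠ p.2 ∨ p.1 = Fin.last t)),
        (FX p.1).card * (FY p.2).card = t * (m * m) := by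
      have hbadeq : base.filter (fun p => ¬ (p.1 ≠ p.2 ∨ p.1 = Fin.last t)) =
          (Finset.univ.filter (fun i : Fin (t+1) => i ≠ Fin.last t)).image (fun i => (i, i)) := by
        ext q
        constructor
        · intro hq
          obtain ⟨hqb, hq2⟩ := Finset.mem_filter.mp hq
          push_neg at hq2
          obtain ⟨h1, h2⟩ := hq2
          refine Finset.mem_image.mpr ⟨q.1, Finset.mem_filter.mpr ⟨Finset.mem_univ _, h2⟩, ?_⟩
          exact Prod.ext rfl h1
        · intro hq
          obtain ⟨i, hi, hEq⟩ := Finset.mem_image.mp hq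
          obtain ⟨-, hine⟩ := Finset.mem_filter.mp hi
          refine Finset.mem_filter.mpr ⟨?_, ?_⟩
          · rw [hbase]
            rw [← hEq]
            exact Finset.mem_product.mpr ⟨Finset.mem_univ _, Finset.mem_univ _⟩
          · rw [← hEq]
            push_neg
            exact ⟨rfl, hine⟩
      rw [hbadeq, Finset.sum_image (by intro a _ b _ h; simpa using h)]
      have hconst : ∀ i ∈ Finset.univ.filter (fun i : Fin (t+1) => i ≠ Fin.last t),
          (FX i).card * (FY i).card = m * m := by
        intro i hi
        have hilt : (i:ℕ) < t := Fin.val_lt_last (Finset.mem_filter.mp hi).2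
        rw [(hcastXsize i hilt).1, (hcastXsize i hilt).2]
      rw [Finset.sum_congr rfl hconst, Finset.sum_const, smul_eq_mul,
        Finset.filter_ne', Finset.card_erase_of_mem (Finset.mem_univ _),
        Finset.card_univ, Fintype.card_fin]
      congr 1
    have hsplit := Finset.sum_filter_add_sum_filter_not base
      (fun p => p.1 ≠ p.2 ∨ p.1 = Fin.last t)
      (fun p => (FX p.1).card * (FY p.2).card)
    calc AN * BN = ∑ p ∈ goodP, (FX p.1).card * (FY p.2).card + t * (m * m) := by
          rw [← hsum_all, ← hsplit, hbadsum]
      _ ≤ G.edgeSet.ncard + t * (m * m) := by omega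
  have hcast2k : ((2 * k - 1 : ℕ) : ℝ) = 2 * (k:ℝ) - 1 := by
    have h1 : 1 ≤ 2 * k := by omega
    push_cast [h1]
    ring
  constructor
  · -- part 1
    rw [h32]
    have hc1 : ((AN:ℝ)) * BN ≤ (G.edgeSet.ncard : ℝ) + (t:ℝ) * ((m:ℝ) * m) := by
      exact_mod_cast hedgecount
    have hc2 : (AN:ℝ) + BN + (t:ℝ) * (2 * (k:ℝ) - 1) = n := by
      rw [← hcast2k]
      exact_mod_cast hnABZ
    have b1 : (AN:ℝ) ≤ BN + 1 := by exact_mod_cast hbal1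
    have b2 : (BN:ℝ) ≤ AN + 1 := by exact_mod_cast hbal2
    have := part1_arith hK2 hα₁ hα₂ h36 hn0R ht0R hM0 hw0 hs0n hw2 hs2 hws1 h6k fD
      hmub hc1 hc2 b1 b2
    linarith [this]
  · -- part 2
    intro S hS
    obtain ⟨A', B', hd', hu', hiff⟩ := hS
    by_cases hC : ∃ i : Fin (t+1), (i : ℕ) < t ∧ (S ∩ X i).Nonempty ∧ (S ∩ Y i).Nonempty
    · obtain ⟨i, hit, ⟨x, hxS, hxX⟩, ⟨y, hyS, hyY⟩⟩ := hC
      have hxy : ¬ G.Adj x y := hXYi i hit x hxX y hyY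
      have hnd : ∀ u, u ∈ A' → u ∈ B' → False := fun u h1 h2 =>
        Set.disjoint_left.mp hd' h1 h2
      have hside : ∀ v ∈ S, ∀ a ∈ S, ∀ b ∈ S, ¬ G.Adj a b → G.Adj v b → G.Adj v a := by
        intro v hv a ha b hb hab hvb
        have h1 := hiff a ha b hb
        have h2 := hiff v hv b hb
        have h3 := hiff v hv a ha
        have hma : a ∈ A' ∪ B' := hu'.symm ▸ ha
        rw [Set.mem_union] at hma
        rcases h2.mp hvb with ⟨hvA, hbB⟩ | ⟨hvB, hbA⟩
        · have haB : a ∈ B' := by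
            rcases hma with h | h
            · exact absurd (h1.mpr (Or.inl ⟨h, hbB⟩)) hab
            · exact h
          exact h3.mpr (Or.inl ⟨hvA, haB⟩)
        · have haA : a ∈ A' := by
            rcases hma with h | h
            · exact h
            · exact absurd (h1.mpr (Or.inr ⟨h, hbA⟩)) hab
          exact h3.mpr (Or.inr ⟨hvB, haA⟩)
      have hsub2 : S ⊆ X i ∪ Y i ∪ ⋃ j, Z j := by
        intro v hv
        have hvU : v ∈ (⋃ j, X j) ∪ (⋃ j, Y j) ∪ (⋃ j, Z j) := hcover.symm ▸ Set.mem_univ v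
        rcases hvU with (hvX | hvY) | hvZ
        · obtain ⟨j, hvj⟩ := Set.mem_iUnion.mp hvX
          by_cases hji : j = i
          · exact Or.inl (Or.inl (hji ▸ hvj))
          · exfalso
            have hadjvy : G.Adj v y := hXYij j i hji v hvj y hyY
            have hadjvx : G.Adj v x := hside v hv x hxS y hyS hxy hadjvy
            exact hXind v (Set.mem_iUnion.mpr ⟨j, hvj⟩) x (Set.mem_iUnion.mpr ⟨i, hxX⟩) hadjvx
        · obtain ⟨j, hvj⟩ := Set.mem_iUnion.mp hvY
          by_cases hji : j = i
          · exact Or.inl (Or.inr (hji ▸ hvj))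
          · exfalso
            have hadjvx : G.Adj v x := (hXYij i j (fun h => hji h.symm) x hxX v hvj).symm
            have hyx : ¬ G.Adj y x := fun h => hxy h.symm
            have hadjvy : G.Adj v y := hside v hv y hyS x hxS hyx hadjvx
            exact hYind v (Set.mem_iUnion.mpr ⟨j, hvj⟩) y (Set.mem_iUnion.mpr ⟨i, hyY⟩) hadjvy
        · exact Or.inr hvZ
      have hZUn : (⋃ j, Z j).ncard = t * (2 * k - 1) := by
        have hfeq : (⋃ j, Z j).toFinite.toFinset = ZU := by
          ext v
          simp only [Set.Finite.mem_toFinset, Set.mem_iUnion, hZUdef, Finset.mem_biUnion,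
            Finset.mem_univ, true_and]
          constructor
          · rintro ⟨j, hj⟩; exact ⟨j, (hmemFZ j v).mpr hj⟩
          · rintro ⟨j, hj⟩; exact ⟨j, (hmemFZ j v).mp hj⟩
        rw [Set.ncard_eq_toFinset_card _ (Set.toFinite _), hfeq, hZUcard]
      have hcard2 : S.ncard ≤ m + m + t * (2 * k - 1) := by
        calc S.ncard ≤ (X i ∪ Y i ∪ ⋃ j, Z j).ncard :=
              Set.ncard_le_ncard hsub2 (Set.toFinite _)
          _ ≤ (X i ∪ Y i).ncard + (⋃ j, Z j).ncard := Set.ncard_union_le _ _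
          _ ≤ (X i).ncard + (Y i).ncard + (⋃ j, Z j).ncard := by
              have := Set.ncard_union_le (X i) (Y i)
              omega
          _ ≤ m + m + t * (2 * k - 1) := by
              rw [(hsize i hit).1, (hsize i hit).2, hZUn]
      have hcastS : (S.ncard : ℝ) ≤ (m:ℝ) + m + (t:ℝ) * (2 * (k:ℝ) - 1) := by
        have := hcard2
        have hc : ((m + m + t * (2 * k - 1) : ℕ) : ℝ)
            = (m:ℝ) + m + (t:ℝ) * (2 * (k:ℝ) - 1) := by
          push_cast [hcast2k]
          ring
        calc (S.ncard : ℝ) ≤ ((m + m + t * (2 * k - 1) : ℕ) : ℝ) := by exact_mod_cast this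
          _ = _ := hc
      exact part2_case2_arith hα₁ hα₂ hn0R hK2 ht3R hM0 hmub hTt hcastS
    · have hC' : ∀ i : Fin (t+1), (i : ℕ) < t → (S ∩ X i).Nonempty → ¬ (S ∩ Y i).Nonempty :=
        fun i h1 h2 h3 => hC ⟨i, h1, h2, h3⟩
      clear hC
      set W : Fin t → Set (Fin n) :=
        fun i => if (S ∩ X i.castSucc).Nonempty then Y i.castSucc else X i.castSucc with hW
      have hilt : ∀ i : Fin t, ((i.castSucc : Fin (t+1)) : ℕ) < t := by
        intro i; simpa using i.isLt
      have hWval : ∀ i, ((S ∩ X i.castSucc).Nonempty ∧ W i = Y i.castSucc) ∨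
          (¬ (S ∩ X i.castSucc).Nonempty ∧ W i = X i.castSucc) := by
        intro i
        by_cases h : (S ∩ X i.castSucc).Nonempty
        · exact Or.inl ⟨h, by rw [hW]; simp only [if_pos h]⟩
        · exact Or.inr ⟨h, by rw [hW]; simp only [if_neg h]⟩
      have hWeither : ∀ i, W i = Y i.castSucc ∨ W i = X i.castSucc := by
        intro i
        rcases hWval i with h | h
        · exact Or.inl h.2
        · exact Or.inr h.2
      have hWS : ∀ i, ∀ v ∈ W i, v ∉ S := by
        intro i v hvW hvS
        rcases hWval i with ⟨hx, h⟩ | ⟨hne, h⟩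
        · rw [h] at hvW
          have hemp := hC' i.castSucc (hilt i) hx
          rw [Set.not_nonempty_iff_eq_empty] at hemp
          exact absurd (Set.mem_inter hvS hvW) (hemp ▸ Set.notMem_empty v)
        · rw [h] at hvW
          exact hne ⟨v, Set.mem_inter hvS hvW⟩
      have hWcard : ∀ i, (W i).ncard = m := by
        intro i
        rcases hWeither i with h | h
        · rw [h]; exact (hsize i.castSucc (hilt i)).2
        · rw [h]; exact (hsize i.castSucc (hilt i)).1
      have hWdisj : ∀ i j : Fin t, i ≠ j → Disjoint (W i) (W j) := by
        intro i j hij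
        have hcs : i.castSucc ≠ j.castSucc := fun h => hij (Fin.castSucc_inj.mp h)
        rcases hWeither i with h1 | h1 <;> rcases hWeither j with h2 | h2 <;> rw [h1, h2]
        · exact hYY _ _ hcs
        · exact (hXY j.castSucc i.castSucc).symm
        · exact hXY i.castSucc j.castSucc
        · exact hXX _ _ hcs
      set FW : Fin t → Finset (Fin n) := fun i => (W i).toFinite.toFinset with hFW
      set FWU := Finset.univ.biUnion FW with hFWU
      set FS := S.toFinite.toFinset with hFS
      have hFWUcard : FWU.card = t * m := by
        rw [hFWU, Finset.card_biUnion fun a _ b _ hab =>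
          Set.Finite.disjoint_toFinset.mpr (hWdisj a b hab)]
        rw [Finset.sum_congr rfl fun i _ => by
          rw [show (FW i).card = (W i).ncard from
            (Set.ncard_eq_toFinset_card _ _).symm, hWcard]]
        rw [Finset.sum_const, Finset.card_univ, Fintype.card_fin, smul_eq_mul]
      have hdisjSW : Disjoint FS FWU := by
        rw [Finset.disjoint_right]
        intro v hvW hvS
        rw [hFWU, Finset.mem_biUnion] at hvW
        obtain ⟨i, _, hvi⟩ := hvW
        exact hWS i v (Set.Finite.mem_toFinset _ |>.mp hvi) (Set.Finite.mem_toFinset _ |>.mp hvS)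
      have hcount : S.ncard + t * m ≤ n := by
        have h1 : (FS ∪ FWU).card ≤ n := by
          calc (FS ∪ FWU).card ≤ (Finset.univ : Finset (Fin n)).card :=
                Finset.card_le_card (Finset.subset_univ _)
            _ = n := by rw [Finset.card_univ, Fintype.card_fin]
        rw [Finset.card_union_of_disjoint hdisjSW, hFWUcard] at h1
        have h2 : FS.card = S.ncard := (Set.ncard_eq_toFinset_card _ _).symm
        omega
      have hcastS : (S.ncard : ℝ) + (t:ℝ) * m ≤ n := by exact_mod_cast hcount
      exact part2_case1_arith hα₁ hα₂ hnn htm hcastS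
end

section
/- Let k ≥ 2 and n ≥ 16k be integers. Let G be a maximal C_{2k+1}-free graph on n vertices and let T ⊆ V(G) be such that G − T is bipartite with parts X and Y and has minimum degree at least (1/2 − 1/(16k))n. Then for every pair of non-adjacent vertices x ∈ X and y ∈ Y, there is a path x, x', u_1, …, u_{2k−3}, y', y of length 2k in G from x to y such that both x' and y' lie in T. -/
open SimpleGraph

lemma chain_walk {V : Type*} {G : SimpleGraph V} :
    ∀ (m : ℕ) (c : ℕ → V), (∀ i < m, G.Adj (c i) (c (i+1))) →
    ∃ w : G.Walk (c 0) (c m), w.length = m ∧ (∀ i ≤ m, w.getVert i = c i) ∧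
      w.support = (List.range (m+1)).map c := by
  intro m
  induction m with
  | zero =>
    intro c _
    exact ⟨Walk.nil, rfl, by intro i hi; interval_cases i; rfl, by simp [List.range_succ]⟩
  | succ m ih =>
    intro c h
    obtain ⟨w, hl, hv, hs⟩ := ih (fun i => c (i+1)) (fun i hi => h (i+1) (by omega))
    refine ⟨Walk.cons (h 0 (by omega)) w, by simp [hl], ?_, ?_⟩
    · intro i hi
      cases i with
      | zero => rfl
      | succ i => simpa using hv i (by omega)
    · rw [Walk.support_cons, hs]
      conv_rhs => rw [List.range_succ_eq_map, List.map_cons, List.map_map]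
      rfl


lemma cycle_of_chain {V : Type*} {G : SimpleGraph V} {m : ℕ} (hm : 3 ≤ m) (c : ℕ → V)
    (hadj : ∀ i, i + 1 < m → G.Adj (c i) (c (i+1))) (hlast : G.Adj (c (m-1)) (c 0))
    (hinj : ∀ i < m, ∀ j < m, c i = c j → i = j) :
    HasSubCopy (cycleGraph m) G := by
  have hm0 : NeZero m := ⟨by omega⟩
  refine ⟨⟨fun i => c i.val, ?_⟩, ?_⟩
  · intro u v huv
    rw [cycleGraph_adj'] at huv
    have key : ∀ a b : Fin m, (b - a).val = 1 → G.Adj (c a.val) (c b.val) := by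
      intro a b hab
      have ha' := a.isLt
      have hb' := b.isLt
      rw [Fin.sub_def] at hab
      have hab' : (m - a.val + b.val) % m = 1 := hab
      rcases Nat.lt_or_ge (m - a.val + b.val) m with h | h
      · rw [Nat.mod_eq_of_lt h] at hab'
        have ha : a.val = m - 1 := by omega
        have hb : b.val = 0 := by omega
        rw [ha, hb]; exact hlast
      · have h2 : m - a.val + b.val - m < m := by omega
        rw [Nat.mod_eq_sub_mod h, Nat.mod_eq_of_lt h2] at hab'
        have hb : b.val = a.val + 1 := by omega
        rw [hb]; exact hadj a.val (by omega)
    rcases huv with h | h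
    · exact (key v u h).symm
    · exact key u v h
  · intro u v h
    exact Fin.ext (hinj u.val u.isLt v.val v.isLt h)


open Fin.NatCast Fin.CommRing in
lemma exists_chain {V : Type*} {G : SimpleGraph V} {k : ℕ} (hk : 1 ≤ k)
    (hfree : ¬ HasSubCopy (cycleGraph (2*k+1)) G) {x y : V} (hnadj : ¬ G.Adj x y)
    (hcopy : HasSubCopy (cycleGraph (2*k+1)) (G ⊔ fromEdgeSet {s(x,y)})) :
    ∃ c : ℕ → V, c 0 = x ∧ c (2*k) = y ∧ (∀ i < 2*k, G.Adj (c i) (c (i+1))) ∧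
      (∀ i ≤ 2*k, ∀ j ≤ 2*k, c i = c j → i = j) := by
  obtain ⟨f, finj⟩ := hcopy
  have hone : (1 : Fin (2*k+1)).val = 1 := by
    rw [Fin.val_one']
    exact Nat.mod_eq_of_lt (by omega)
  have hstep : ∀ a : Fin (2*k+1), (cycleGraph (2*k+1)).Adj a (a+1) := by
    intro a
    rw [cycleGraph_adj']
    right
    rw [add_sub_cancel_left, hone]
  -- there is a special edge
  have hspec : ∃ a : Fin (2*k+1), ¬ G.Adj (f a) (f (a+1)) := by
    by_contra hc
    push_neg at hc
    refine hfree ⟨⟨f, ?_⟩, fun u v huv => finj huv⟩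
    intro u v huv
    rw [cycleGraph_adj'] at huv
    have key : ∀ a b : Fin (2*k+1), (b - a).val = 1 → G.Adj (f a) (f b) := by
      intro a b hab
      have hb : b = a + 1 := by
        have h1 : b - a = 1 := Fin.ext (by rw [hab, hone])
        exact (sub_eq_iff_eq_add.mp h1).trans (add_comm 1 a)
      rw [hb]; exact hc a
    rcases huv with h | h
    · exact (key v u h).symm
    · exact key u v h
  obtain ⟨a, hna⟩ := hspec
  have hsup : (G ⊔ fromEdgeSet {s(x,y)}).Adj (f a) (f (a+1)) := f.map_adj (hstep a)
  rw [sup_adj, fromEdgeSet_adj] at hsup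
  have hxyedge : s(f a, f (a+1)) = s(x, y) := by tauto
  -- the vertices of the cycle, starting after the special edge
  set u : ℕ → Fin (2*k+1) := fun i => a + 1 + (i : Fin (2*k+1)) with hu
  have hcast : ∀ i : ℕ, i ≤ 2*k → ((i : Fin (2*k+1))).val = i := by
    intro i hi
    rw [Fin.val_natCast]
    exact Nat.mod_eq_of_lt (by omega)
  have huinj : ∀ i ≤ 2*k, ∀ j ≤ 2*k, u i = u j → i = j := by
    intro i hi j hj hij
    have h1 : (i : Fin (2*k+1)) = (j : Fin (2*k+1)) := by
      have := hij
      simp only [hu] at this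
      exact add_left_cancel this
    have := congrArg Fin.val h1
    rw [hcast i hi, hcast j hj] at this
    exact this
  have hu2k : u (2*k) = a := by
    simp only [hu]
    have h0 : ((2*k+1 : ℕ) : Fin (2*k+1)) = 0 := Fin.natCast_self _
    push_cast at h0 ⊢
    linear_combination h0
  have hu0 : u 0 = a + 1 := by simp [hu]
  have husucc : ∀ i : ℕ, u i + 1 = u (i+1) := by
    intro i
    simp only [hu]
    push_cast
    ring
  -- adjacency along the chain
  have hadj : ∀ i < 2*k, G.Adj (f (u i)) (f (u (i+1))) := by
    intro i hi
    have hcyc : (cycleGraph (2*k+1)).Adj (u i) (u i + 1) := hstep (u i)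
    rw [husucc] at hcyc
    have h2 := f.map_adj hcyc
    rw [sup_adj, fromEdgeSet_adj] at h2
    rcases h2 with h2 | ⟨h2, _⟩
    · exact h2
    · exfalso
      rw [Set.mem_singleton_iff] at h2
      have h2' := h2.trans hxyedge.symm
      rcases Sym2.eq_iff.mp h2' with ⟨e1, e2⟩ | ⟨e1, e2⟩
      · have : u i = a := finj e1
        rw [← hu2k] at this
        have := huinj i (by omega) (2*k) le_rfl this
        omega
      · have h3 : u i = a + 1 := finj e1
        rw [← hu0] at h3
        have hi0 := huinj i (by omega) 0 (by omega) h3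
        have h4 : u (i+1) = a := finj e2
        rw [← hu2k] at h4
        have := huinj (i+1) (by omega) (2*k) le_rfl h4
        omega
  -- orientation
  rcases Sym2.eq_iff.mp hxyedge with ⟨e1, e2⟩ | ⟨e1, e2⟩
  · -- f a = x, f (a+1) = y : chain goes from y to x; flip it
    refine ⟨fun i => f (u (2*k - i)),
      by show f (u (2*k - 0)) = x; rw [Nat.sub_zero, hu2k, e1],
      by show f (u (2*k - 2*k)) = y; rw [Nat.sub_self, hu0, e2], ?_, ?_⟩
    · intro i hi
      have h5 : 2*k - (i+1) + 1 = 2*k - i := by omega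
      have := hadj (2*k - (i+1)) (by omega)
      rw [h5] at this
      exact this.symm
    · intro i hi j hj hij
      have := huinj (2*k-i) (by omega) (2*k-j) (by omega) (finj hij)
      omega
  · -- f a = y, f (a+1) = x : chain goes from x to y
    exact ⟨fun i => f (u i), by show f (u 0) = x; rw [hu0, e2],
      by show f (u (2*k)) = y; rw [hu2k, e1], hadj,
      fun i hi j hj hij => huinj i hi j hj (finj hij)⟩


lemma exists_common {n : ℕ} {G : SimpleGraph (Fin n)} {k : ℕ} (hk : 2 ≤ k) (hn : 16*k ≤ n)
    {X Y : Set (Fin n)} (hXY : Disjoint X Y)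
    (hXind : ∀ u ∈ X, ∀ v ∈ X, ¬ G.Adj u v)
    (hYind : ∀ u ∈ Y, ∀ v ∈ Y, ¬ G.Adj u v)
    (hdeg : ∀ v ∈ X ∪ Y, (1/2 - 1/(16*(k:ℝ))) * n ≤ ((G.neighborSet v ∩ (X ∪ Y)).ncard : ℝ))
    {a b w : Fin n} (ha : a ∈ Y) (hb : b ∈ Y) (hw : w ∈ X)
    (S : Set (Fin n)) (hS : S.ncard ≤ 2*k+1) :
    ∃ z, G.Adj a z ∧ G.Adj b z ∧ z ∉ S := by
  classical
  set d : ℝ := (1/2 - 1/(16*(k:ℝ))) * n with hd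
  set A := G.neighborSet a ∩ (X ∪ Y) with hA
  set B := G.neighborSet b ∩ (X ∪ Y) with hB
  set C := G.neighborSet w ∩ (X ∪ Y) with hC
  have hAX : A ⊆ X := by
    rintro z ⟨hz1, hz2 | hz2⟩
    · exact hz2
    · exact absurd hz1 (hYind a ha z hz2)
  have hBX : B ⊆ X := by
    rintro z ⟨hz1, hz2 | hz2⟩
    · exact hz2
    · exact absurd hz1 (hYind b hb z hz2)
  have hCY : C ⊆ Y := by
    rintro z ⟨hz1, hz2 | hz2⟩
    · exact absurd hz1 (hXind w hw z hz2)
    · exact hz2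
  have hdA : d ≤ (A.ncard : ℝ) := hdeg a (Or.inr ha)
  have hdB : d ≤ (B.ncard : ℝ) := hdeg b (Or.inr hb)
  have hdC : d ≤ (C.ncard : ℝ) := hdeg w (Or.inl hw)
  -- |X| + |C| ≤ n
  have hXC : Disjoint X C := hXY.mono_right hCY
  have h1 : X.ncard + C.ncard ≤ n := by
    rw [← Set.ncard_union_eq hXC X.toFinite C.toFinite]
    calc (X ∪ C).ncard ≤ (Set.univ : Set (Fin n)).ncard :=
          Set.ncard_le_ncard (Set.subset_univ _) Set.finite_univ
      _ = n := by rw [Set.ncard_univ, Nat.card_eq_fintype_card, Fintype.card_fin]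
  -- |A| + |B| ≤ |X| + |A ∩ B|
  have h2 : A.ncard + B.ncard ≤ X.ncard + (A ∩ B).ncard := by
    rw [← Set.ncard_union_add_ncard_inter A B A.toFinite B.toFinite]
    have : (A ∪ B).ncard ≤ X.ncard :=
      Set.ncard_le_ncard (Set.union_subset hAX hBX) X.toFinite
    omega
  -- numeric: |A ∩ B| > |S|
  have hkR : (2:ℝ) ≤ (k:ℝ) := by exact_mod_cast hk
  have hnR : 16*(k:ℝ) ≤ (n:ℝ) := by exact_mod_cast hn
  have h3 : (S.ncard : ℝ) < ((A ∩ B).ncard : ℝ) := by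
    have e1 : ((A ∩ B).ncard : ℝ) ≥ (A.ncard : ℝ) + (B.ncard : ℝ) - (X.ncard : ℝ) := by
      have := (Nat.cast_le (α := ℝ)).mpr h2
      push_cast at this
      linarith
    have e2 : (X.ncard : ℝ) ≤ (n:ℝ) - (C.ncard : ℝ) := by
      have := (Nat.cast_le (α := ℝ)).mpr h1
      push_cast at this
      linarith
    have eS : (S.ncard : ℝ) ≤ 2*(k:ℝ)+1 := by exact_mod_cast hS
    have hkpos : (0:ℝ) < (k:ℝ) := by linarith
    have hdval : 3*d - (n:ℝ) > 2*(k:ℝ)+1 := by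
      set t : ℝ := 1/(16*(k:ℝ)) with htdef
      have ht0 : 0 < t := by positivity
      have ht1 : t * (16*(k:ℝ)) = 1 := by
        rw [htdef]; field_simp
      have h32 : (32:ℝ) ≤ 16*(k:ℝ) := by linarith
      have ht32 : t * 32 ≤ 1 := by
        calc t * 32 ≤ t * (16*(k:ℝ)) := by nlinarith
          _ = 1 := ht1
      have c1 : 3*d - (n:ℝ) = (1/2 - 3*t) * n := by rw [hd, htdef]; ring
      have c2 : (13/32 : ℝ) ≤ 1/2 - 3*t := by linarith
      have c3 : (13/32 : ℝ) * n ≤ (1/2 - 3*t) * n := by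
        apply mul_le_mul_of_nonneg_right c2 (Nat.cast_nonneg n)
      have c4 : (13/32 : ℝ) * (16*(k:ℝ)) ≤ (13/32 : ℝ) * n := by nlinarith
      rw [c1]
      nlinarith
    linarith
  have h4 : ¬ (A ∩ B ⊆ S) := by
    intro hsub
    have := Set.ncard_le_ncard hsub S.toFinite
    exact absurd h3 (not_lt.mpr ((Nat.cast_le (α := ℝ)).mpr this))
  obtain ⟨z, hz1, hz2⟩ := Set.not_subset.mp h4
  exact ⟨z, hz1.1.1, hz1.2.1, hz2⟩

theorem stmt_6 (k : ℕ) (hk : 2 ≤ k) (n : ℕ) (hn : 16 * k ≤ n)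
    (G : SimpleGraph (Fin n)) (hG : MaximalCycleFree (2 * k + 1) G)
    (T X Y : Set (Fin n))
    -- `G - T` is bipartite with parts `X` and `Y`
    (hXY : Disjoint X Y) (hpart : X ∪ Y = Tᶜ)
    (hXind : ∀ u ∈ X, ∀ v ∈ X, ¬ G.Adj u v)
    (hYind : ∀ u ∈ Y, ∀ v ∈ Y, ¬ G.Adj u v)
    -- `G - T` has minimum degree at least `(1/2 - 1/(16k)) n`
    (hdeg : ∀ v ∈ X ∪ Y,
      (1 / 2 - 1 / (16 * (k : ℝ))) * n ≤ ((G.neighborSet v ∩ (X ∪ Y)).ncard : ℝ)) :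
    ∀ x ∈ X, ∀ y ∈ Y, ¬ G.Adj x y →
      ∃ p : G.Walk x y, p.IsPath ∧ p.length = 2 * k ∧
        p.getVert 1 ∈ T ∧ p.getVert (2 * k - 1) ∈ T := by
  intro x hx y hy hnadj
  classical
  have hm3 : 3 ≤ 2*k+1 := by omega
  have hxyne : x ≠ y := by
    intro h
    exact Set.disjoint_left.mp hXY hx (h ▸ hy)
  obtain ⟨c, c0, c2k, cadj, cinj⟩ :=
    exists_chain (by omega : 1 ≤ k) hG.1 hnadj (hG.2 x y hxyne hnadj)
  -- the set of vertices of the chain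
  set S : Set (Fin n) := ↑((Finset.range (2*k+1)).image c) with hSdef
  have hScard : S.ncard ≤ 2*k+1 := by
    rw [hSdef, Set.ncard_coe_finset]
    calc ((Finset.range (2*k+1)).image c).card ≤ (Finset.range (2*k+1)).card :=
          Finset.card_image_le
      _ = 2*k+1 := Finset.card_range _
  have hSmem : ∀ i ≤ 2*k, c i ∈ S := by
    intro i hi
    rw [hSdef]
    exact Finset.mem_coe.mpr (Finset.mem_image.mpr ⟨i, Finset.mem_range.mpr (by omega), rfl⟩)
  -- first claim : c 1 ∈ T
  have hT1 : c 1 ∈ T := by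
    by_contra hT1
    have hmem : c 1 ∈ X ∪ Y := by
      rw [hpart]; exact hT1
    have hc1Y : c 1 ∈ Y := by
      rcases hmem with hmem | hmem
      · exact absurd (c0 ▸ cadj 0 (by omega)) (hXind x hx (c 1) hmem)
      · exact hmem
    obtain ⟨z, hz1, hz2, hz3⟩ :=
      exists_common hk hn hXY hXind hYind hdeg hc1Y hy hx S hScard
    apply hG.1
    refine cycle_of_chain hm3 (fun i => if i = 2*k then z else c (i+1)) ?_ ?_ ?_
    · intro i hi
      rcases Nat.lt_or_ge (i+1) (2*k) with h | h
      · simp only [if_neg (by omega : ¬ i = 2*k), if_neg (by omega : ¬ i + 1 = 2*k)]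
        exact cadj (i+1) (by omega)
      · have hieq : i + 1 = 2*k := by omega
        simp only [if_neg (by omega : ¬ i = 2*k), if_pos hieq, hieq, c2k]
        exact hz2
    · have h1 : 2*k+1-1 = 2*k := by omega
      simp only [h1, if_pos rfl, if_neg (by omega : ¬ (0:ℕ) = 2*k)]
      exact hz1.symm
    · intro i hi j hj hij
      have hij' : (if i = 2*k then z else c (i+1)) = (if j = 2*k then z else c (j+1)) := hij
      by_cases hi2 : i = 2*k <;> by_cases hj2 : j = 2*k
      · omega
      · rw [if_pos hi2, if_neg hj2] at hij'
        exact absurd (hij' ▸ hSmem (j+1) (by omega)) hz3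
      · rw [if_neg hi2, if_pos hj2] at hij'
        exact absurd (hij'.symm ▸ hSmem (i+1) (by omega)) hz3
      · rw [if_neg hi2, if_neg hj2] at hij'
        have := cinj (i+1) (by omega) (j+1) (by omega) hij'
        omega
  -- second claim : c (2*k-1) ∈ T
  have hT2 : c (2*k-1) ∈ T := by
    by_contra hT2
    have hmem : c (2*k-1) ∈ X ∪ Y := by
      rw [hpart]; exact hT2
    have hcX : c (2*k-1) ∈ X := by
      rcases hmem with hmem | hmem
      · exact hmem
      · exfalso
        have hadjlast : G.Adj (c (2*k-1)) y := by
          have := cadj (2*k-1) (by omega)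
          rw [(by omega : 2*k-1+1 = 2*k), c2k] at this
          exact this
        exact hYind (c (2*k-1)) hmem y hy hadjlast
    have hdeg' : ∀ v ∈ Y ∪ X, (1/2 - 1/(16*(k:ℝ))) * n ≤ ((G.neighborSet v ∩ (Y ∪ X)).ncard : ℝ) := by
      intro v hv
      rw [Set.union_comm Y X]
      exact hdeg v (Set.union_comm Y X ▸ hv)
    obtain ⟨z, hz1, hz2, hz3⟩ :=
      exists_common hk hn hXY.symm hYind hXind hdeg' hcX hx hy S hScard
    apply hG.1
    refine cycle_of_chain hm3 (fun i => if i = 2*k then z else c i) ?_ ?_ ?_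
    · intro i hi
      rcases Nat.lt_or_ge (i+1) (2*k) with h | h
      · simp only [if_neg (by omega : ¬ i = 2*k), if_neg (by omega : ¬ i + 1 = 2*k)]
        exact cadj i (by omega)
      · have hieq : i + 1 = 2*k := by omega
        show G.Adj (if i = 2*k then z else c i) (if i+1 = 2*k then z else c (i+1))
        rw [if_neg (by omega : ¬ i = 2*k), if_pos hieq, (by omega : i = 2*k-1)]
        exact hz1
    · have h1 : 2*k+1-1 = 2*k := by omega
      simp only [h1, if_pos rfl, if_neg (by omega : ¬ (0:ℕ) = 2*k), c0]
      exact hz2.symm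
    · intro i hi j hj hij
      have hij' : (if i = 2*k then z else c i) = (if j = 2*k then z else c j) := hij
      by_cases hi2 : i = 2*k <;> by_cases hj2 : j = 2*k
      · omega
      · rw [if_pos hi2, if_neg hj2] at hij'
        exact absurd (hij' ▸ hSmem j (by omega)) hz3
      · rw [if_neg hi2, if_pos hj2] at hij'
        exact absurd (hij'.symm ▸ hSmem i (by omega)) hz3
      · rw [if_neg hi2, if_neg hj2] at hij'
        have := cinj i (by omega) j (by omega) hij'
        omega
  -- build the walk
  obtain ⟨w, hwl, hwv, hws⟩ := chain_walk (2*k) c cadj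
  refine ⟨w.copy c0 c2k, ?_, ?_, ?_, ?_⟩
  · rw [Walk.isPath_def, Walk.support_copy, hws]
    refine List.Nodup.map_on ?_ List.nodup_range
    intro i hi j hj hij
    exact cinj i (by simpa using Nat.lt_succ_iff.mp (List.mem_range.mp hi))
      j (Nat.lt_succ_iff.mp (List.mem_range.mp hj)) hij
  · rw [Walk.length_copy, hwl]
  · rw [Walk.getVert_copy, hwv 1 (by omega)]
    exact hT1
  · rw [Walk.getVert_copy, hwv (2*k-1) (by omega)]
    exact hT2
end

section
/- Let k ≥ 2 be an integer and let G be a C_{2k+1}-free graph containing a cycle C = v_1 v_2 … v_{2k} v_1 of length 2k. Then the set S_odd = {u ∈ V(G) \ {v_1,…,v_{2k}} : u is adjacent to v_{2i−1} for every i = 1,…,k} is an independent set in G; likewise, the set S_even = {u ∈ V(G) \ {v_1,…,v_{2k}} : u is adjacent to v_{2i} for every i = 1,…,k} is an independent set in G. -/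
open SimpleGraph

lemma hasSubCopy_cycle {V : Type*} (G : SimpleGraph V) (n : ℕ) (u : ℕ → V)
    (hinj : ∀ i < n + 2, ∀ j < n + 2, u i = u j → i = j)
    (hadj : ∀ i < n + 2, G.Adj (u i) (u ((i + 1) % (n + 2)))) :
    HasSubCopy (cycleGraph (n + 2)) G := by
  have key : ∀ c d : Fin (n + 2), c - d = 1 → G.Adj (u c.val) (u d.val) := by
    intro c d h
    have hc : c = d + 1 := by rw [← h]; abel
    have hv : c.val = (d.val + 1) % (n + 2) := by
      rw [hc, Fin.add_def]; simp [Fin.val_one]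
    rw [hv]
    exact (hadj d.val d.isLt).symm
  refine ⟨⟨fun i => u i.val, ?_⟩, ?_⟩
  · rintro a b hab
    rw [cycleGraph_adj] at hab
    rcases hab with h | h
    · exact key a b h
    · exact (key b a h).symm
  · intro a b hab
    exact Fin.ext (hinj a.val a.isLt b.val b.isLt hab)

lemma not_adj_aux {V : Type*} (k : ℕ) (hk : 2 ≤ k) (G : SimpleGraph V)
    (hG : CycleFree (2 * k + 1) G) (v : ℕ → V)
    (hinj : ∀ i < 2 * k, ∀ j < 2 * k, v i = v j → i = j)
    (m : ℕ → ℕ)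
    (hmlt : ∀ i, 2 ≤ i → i ≤ 2 * k → m i < 2 * k)
    (hminj : ∀ i j, 2 ≤ i → i ≤ 2 * k → 2 ≤ j → j ≤ 2 * k → m i = m j → i = j)
    (x y : V) (hxy : G.Adj x y)
    (hx1 : ∀ a < 2 * k, x ≠ v a) (hy1 : ∀ a < 2 * k, y ≠ v a)
    (hy2 : G.Adj y (v (m 2)))
    (hx2 : G.Adj x (v (m (2 * k))))
    (hmid : ∀ i, 2 ≤ i → i < 2 * k → G.Adj (v (m i)) (v (m (i + 1)))) : False := by
  set u : ℕ → V := fun i => if i = 0 then x else if i = 1 then y else v (m i) with hu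
  apply hG
  rw [show 2 * k + 1 = 2 * k - 1 + 2 from by omega]
  apply hasSubCopy_cycle G (2 * k - 1) u
  · intro i hi j hj hij
    simp only [hu] at hij
    split_ifs at hij
    all_goals first
      | omega
      | exact absurd hij hxy.ne
      | exact absurd hij.symm hxy.ne
      | exact absurd hij (hx1 _ (hmlt _ (by omega) (by omega)))
      | exact absurd hij.symm (hx1 _ (hmlt _ (by omega) (by omega)))
      | exact absurd hij (hy1 _ (hmlt _ (by omega) (by omega)))
      | exact absurd hij.symm (hy1 _ (hmlt _ (by omega) (by omega)))
      | exact hminj i j (by omega) (by omega) (by omega) (by omega)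
          (hinj _ (hmlt _ (by omega) (by omega)) _ (hmlt _ (by omega) (by omega)) hij)
  · intro i hi
    by_cases hik : i = 2 * k
    · subst hik
      rw [show 2 * k + 1 = 2 * k - 1 + 2 from by omega, Nat.mod_self]
      simp only [hu]
      norm_num [show ¬ (2 * k = 0) from by omega, show ¬ (2 * k = 1) from by omega]
      exact hx2.symm
    · rw [Nat.mod_eq_of_lt (by omega)]
      by_cases hi0 : i = 0
      · subst hi0
        simp only [hu]
        norm_num
        exact hxy
      · by_cases hi1 : i = 1
        · subst hi1
          simp only [hu]
          norm_num
          exact hy2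
        · simp only [hu]
          rw [if_neg hi0, if_neg hi1, if_neg (by omega), if_neg (by omega)]
          exact hmid i (by omega) (by omega)


/-- In a `C_{2k+1}`-free graph with a cycle `v 0, v 1, …, v (2k-1), v 0` of length `2k`
(`v i` here is `v_{i+1}` in 1-indexed notation, so the odd-indexed vertices
`v_1, v_3, …, v_{2k-1}` are `v 0, v 2, …, v (2k-2)`), both
`S_odd` (the outside vertices adjacent to all of `v 0, v 2, …, v (2k-2)`) and
`S_even` (the outside vertices adjacent to all of `v 1, v 3, …, v (2k-1)`)
are independent sets. -/
theorem stmt_8 {V : Type*} (k : ℕ) (hk : 2 ≤ k)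
    (G : SimpleGraph V) (hG : CycleFree (2 * k + 1) G)
    (v : ℕ → V)
    (hinj : ∀ i < 2 * k, ∀ j < 2 * k, v i = v j → i = j)
    (hcyc : ∀ i < 2 * k, G.Adj (v i) (v ((i + 1) % (2 * k)))) :
    (∀ x ∈ {u : V | (∀ i < 2 * k, u ≠ v i) ∧ ∀ i < k, G.Adj u (v (2 * i))},
     ∀ y ∈ {u : V | (∀ i < 2 * k, u ≠ v i) ∧ ∀ i < k, G.Adj u (v (2 * i))},
       ¬ G.Adj x y) ∧
    (∀ x ∈ {u : V | (∀ i < 2 * k, u ≠ v i) ∧ ∀ i < k, G.Adj u (v (2 * i + 1))},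
     ∀ y ∈ {u : V | (∀ i < 2 * k, u ≠ v i) ∧ ∀ i < k, G.Adj u (v (2 * i + 1))},
       ¬ G.Adj x y) := by
  constructor
  · rintro x ⟨hx1, hx2⟩ y ⟨hy1, hy2⟩ hxy
    refine not_adj_aux k hk G hG v hinj (fun i => if i = 2 * k then 0 else i)
      ?_ ?_ x y hxy hx1 hy1 ?_ ?_ ?_
    · intro i h2 hle
      beta_reduce
      split_ifs <;> omega
    · intro i j h2i hlei h2j hlej h
      beta_reduce at h
      split_ifs at h <;> omega
    · simpa [show ¬ (2 = 2 * k) from by omega] using hy2 1 (by omega)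
    · simpa using hx2 0 (by omega)
    · intro i h2 hlt
      have h1 := hcyc i hlt
      by_cases h : i + 1 = 2 * k
      · rw [h, Nat.mod_self] at h1
        beta_reduce
        rw [if_neg (show ¬ i = 2 * k by omega), if_pos h]
        exact h1
      · rw [Nat.mod_eq_of_lt (by omega)] at h1
        beta_reduce
        rw [if_neg (show ¬ i = 2 * k by omega), if_neg h]
        exact h1
  · rintro x ⟨hx1, hx2⟩ y ⟨hy1, hy2⟩ hxy
    refine not_adj_aux k hk G hG v hinj
      (fun i => if i = 2 * k - 1 then 0 else if i = 2 * k then 1 else i + 1)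
      ?_ ?_ x y hxy hx1 hy1 ?_ ?_ ?_
    · intro i h2 hle
      beta_reduce
      split_ifs <;> omega
    · intro i j h2i hlei h2j hlej h
      beta_reduce at h
      split_ifs at h <;> omega
    · simpa [show ¬ (2 = 2 * k - 1) from by omega, show ¬ (2 = 2 * k) from by omega]
        using hy2 1 (by omega)
    · simpa [show ¬ (2 * k = 2 * k - 1) from by omega] using hx2 0 (by omega)
    · intro i h2 hlt
      by_cases hik : i = 2 * k - 1
      · have h1 := hcyc 0 (by omega)
        rw [Nat.mod_eq_of_lt (by omega)] at h1
        beta_reduce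
        rw [if_pos hik, if_neg (show ¬ i + 1 = 2 * k - 1 by omega),
          if_pos (show i + 1 = 2 * k by omega)]
        exact h1
      · have h1 := hcyc (i + 1) (by omega)
        beta_reduce
        rw [if_neg hik, if_neg (show ¬ i = 2 * k by omega)]
        by_cases h : i + 1 + 1 = 2 * k
        · rw [h, Nat.mod_self] at h1
          rw [if_pos (show i + 1 = 2 * k - 1 by omega)]
          exact h1
        · rw [Nat.mod_eq_of_lt (by omega)] at h1
          rw [if_neg (show ¬ i + 1 = 2 * k - 1 by omega), if_neg (show ¬ i + 1 = 2 * k by omega)]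
          exact h1
end

section
/- For all integers k ≥ 1 and n ≥ 1, every graph on n vertices containing no path with k edges (i.e., no P_{k+1}) has at most (k−1)n/2 edges; that is, ex(n, P_{k+1}) ≤ (k−1)n/2. -/
open SimpleGraph Finset

/-- A path with `ℓ` edges in `G`, as a sequence of vertices. -/
def PathIn {V : Type*} (G : SimpleGraph V) (ℓ : ℕ) (x : ℕ → V) : Prop :=
  (∀ i < ℓ, G.Adj (x i) (x (i + 1))) ∧ ∀ i ≤ ℓ, ∀ j ≤ ℓ, x i = x j → i = j

lemma PathIn.hasSubCopy {V : Type*} {G : SimpleGraph V} {k : ℕ} {x : ℕ → V}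
    (h : PathIn G k x) : HasSubCopy (pathGraph (k + 1)) G := by
  refine ⟨⟨fun i => x i.val, ?_⟩, ?_⟩
  · intro a b hab
    rw [pathGraph_adj] at hab
    have ha := a.isLt
    have hb := b.isLt
    rcases hab with hab | hab
    · have : (a : ℕ) < k := by omega
      have := h.1 a this
      rwa [hab] at this
    · have : (b : ℕ) < k := by omega
      have := h.1 b this
      rw [hab] at this
      exact this.symm
  · intro a b hab
    have := h.2 a.val (by omega) b.val (by omega) hab
    exact Fin.ext this

/-- Delete all edges at a vertex. -/
def SimpleGraph.delAt {V : Type*} (G : SimpleGraph V) (v : V) : SimpleGraph V where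
  Adj a b := G.Adj a b ∧ a ≠ v ∧ b ≠ v
  symm := by constructor; intro a b ⟨h1, h2, h3⟩; exact ⟨h1.symm, h3, h2⟩
  loopless := by constructor; intro a ⟨h1, _, _⟩; exact G.irrefl h1

instance {V : Type*} (G : SimpleGraph V) (v : V) [DecidableRel G.Adj] [DecidableEq V] :
    DecidableRel (G.delAt v).Adj := fun _ _ => instDecidableAnd

lemma delAt_edgeFinset {V : Type*} [Fintype V] [DecidableEq V] (G : SimpleGraph V)
    [DecidableRel G.Adj] (v : V) :
    (G.delAt v).edgeFinset = G.edgeFinset \ G.incidenceFinset v := by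
  ext e
  induction e with
  | _ a b =>
    simp only [mem_edgeFinset, mem_sdiff, mem_incidenceFinset, mem_edgeSet,
      SimpleGraph.incidenceSet, Set.mem_setOf_eq, mem_edgeSet, Sym2.mem_iff]
    constructor
    · rintro ⟨h1, h2, h3⟩
      refine ⟨h1, fun h => ?_⟩
      rcases h.2 with h' | h'
      · exact h2 h'.symm
      · exact h3 h'.symm
    · rintro ⟨h1, h2⟩
      refine ⟨h1, fun hh => h2 ⟨h1, Or.inl hh.symm⟩, fun hh => h2 ⟨h1, Or.inr hh.symm⟩⟩

lemma delAt_card_edgeFinset {V : Type*} [Fintype V] [DecidableEq V] (G : SimpleGraph V)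
    [DecidableRel G.Adj] (v : V) :
    G.edgeFinset.card = (G.delAt v).edgeFinset.card + G.degree v := by
  rw [delAt_edgeFinset]
  have hsub : G.incidenceFinset v ⊆ G.edgeFinset := by
    intro e he
    rw [mem_incidenceFinset] at he
    exact mem_edgeFinset.2 he.1
  rw [card_sdiff_of_subset hsub, card_incidenceFinset_eq_degree]
  have := card_le_card hsub
  rw [card_incidenceFinset_eq_degree] at this
  omega

lemma cross_walk {V : Type*} {G : SimpleGraph V} (Q : V → Prop) :
    ∀ {u y : V}, G.Walk u y → Q u → ¬ Q y → ∃ a b, Q a ∧ ¬ Q b ∧ G.Adj a b := by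
  intro u y w
  induction w with
  | nil => intro h h'; exact absurd h h'
  | @cons a c d hadj p ih =>
    intro hu hy
    by_cases hmid : Q c
    · exact ih hmid hy
    · exact ⟨a, c, hu, hmid, hadj⟩
section Big
variable {V : Type*} [Fintype V] [DecidableEq V]

lemma exists_long_path (G : SimpleGraph V) [DecidableRel G.Adj] (k : ℕ) (hk : 1 ≤ k) (v : V)
    (hdeg : ∀ w, G.Reachable v w → k ≤ 2 * G.degree w)
    (T : Finset V) (hT : ∀ w ∈ T, G.Reachable v w) (hTcard : k + 1 ≤ T.card) :
    ∃ x : ℕ → V, PathIn G k x := by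
  classical
  set P : ℕ → Prop := fun ℓ => ∃ x : ℕ → V, PathIn G ℓ x ∧ G.Reachable v (x 0) with hPdef
  have hP0 : P 0 :=
    ⟨fun _ => v, ⟨fun i hi => absurd hi (by omega), fun i hi j hj _ => by omega⟩,
      Reachable.refl v⟩
  set ℓ := Nat.findGreatest P k with hℓdef
  have hℓk : ℓ ≤ k := Nat.findGreatest_le k
  have hPℓ : P ℓ := by
    rcases Nat.eq_zero_or_pos ℓ with h | h
    · rw [h]; exact hP0
    · exact Nat.findGreatest_spec (Nat.zero_le k) hP0
  rcases eq_or_lt_of_le hℓk with heq | hlt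
  · obtain ⟨x, hx, _⟩ := hPℓ
    exact ⟨x, heq ▸ hx⟩
  exfalso
  have hmax : ¬ P (ℓ + 1) := Nat.findGreatest_is_greatest (show Nat.findGreatest P k < ℓ + 1 by omega) (by omega)
  apply hmax
  obtain ⟨x, ⟨hadj, hinj⟩, hreach0⟩ := hPℓ
  have hreachx : ∀ i, i ≤ ℓ → G.Reachable v (x i) := by
    intro i
    induction i with
    | zero => intro _; exact hreach0
    | succ m ih => intro h; exact (ih (by omega)).trans (hadj m (by omega)).reachable
  set inX : V → Prop := fun z => ∃ j, j ≤ ℓ ∧ x j = z with hinXdef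
  by_cases hfront : ∃ z, G.Adj (x 0) z ∧ ¬ inX z
  · obtain ⟨z, hz, hzX⟩ := hfront
    set y : ℕ → V := fun m => if m = 0 then z else x (m - 1) with hydef
    have hy0 : y 0 = z := if_pos rfl
    have hys : ∀ m, 1 ≤ m → y m = x (m - 1) := fun m hm => if_neg (by omega)
    refine ⟨y, ⟨?_, ?_⟩, ?_⟩
    · intro m hm
      rcases Nat.eq_zero_or_pos m with h0 | h0
      · subst h0
        rw [hy0, hys 1 le_rfl]
        exact hz.symm
      · rw [hys m h0, hys (m + 1) (by omega)]
        have e : m + 1 - 1 = (m - 1) + 1 := by omega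
        rw [e]
        exact hadj (m - 1) (by omega)
    · intro a ha b hb hab
      rcases Nat.eq_zero_or_pos a with ha0 | ha0 <;> rcases Nat.eq_zero_or_pos b with hb0 | hb0
      · omega
      · exfalso
        subst ha0
        rw [hy0, hys b hb0] at hab
        exact hzX ⟨b - 1, by omega, hab.symm⟩
      · exfalso
        subst hb0
        rw [hy0, hys a ha0] at hab
        exact hzX ⟨a - 1, by omega, hab⟩
      · rw [hys a ha0, hys b hb0] at hab
        have := hinj (a - 1) (by omega) (b - 1) (by omega) hab
        omega
    · rw [hy0]
      exact hreach0.trans hz.reachable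
  by_cases hback : ∃ z, G.Adj (x ℓ) z ∧ ¬ inX z
  · obtain ⟨z, hz, hzX⟩ := hback
    set y : ℕ → V := fun m => if m ≤ ℓ then x m else z with hydef
    have hyle : ∀ m, m ≤ ℓ → y m = x m := fun m hm => if_pos hm
    have hytop : y (ℓ + 1) = z := if_neg (by omega)
    refine ⟨y, ⟨?_, ?_⟩, ?_⟩
    · intro m hm
      rcases Nat.lt_or_ge m ℓ with h0 | h0
      · rw [hyle m (by omega), hyle (m + 1) (by omega)]
        exact hadj m h0
      · have hm' : m = ℓ := by omega
        rw [hm', hyle ℓ le_rfl, hytop]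
        exact hz
    · intro a ha b hb hab
      rcases Nat.lt_or_ge a (ℓ + 1) with ha0 | ha0 <;> rcases Nat.lt_or_ge b (ℓ + 1) with hb0 | hb0
      · rw [hyle a (by omega), hyle b (by omega)] at hab
        exact hinj a (by omega) b (by omega) hab
      · exfalso
        have hb' : b = ℓ + 1 := by omega
        subst hb'
        rw [hyle a (by omega), hytop] at hab
        exact hzX ⟨a, by omega, hab⟩
      · exfalso
        have ha' : a = ℓ + 1 := by omega
        subst ha'
        rw [hyle b (by omega), hytop] at hab
        exact hzX ⟨b, by omega, hab.symm⟩
      · omega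
    · rw [hyle 0 (by omega)]
      exact hreach0
  push_neg at hfront hback
  -- every neighbour of the endpoints is on the path
  -- first, ℓ ≥ 1
  have hdeg0 : 1 ≤ G.degree (x 0) := by
    have := hdeg (x 0) (hreachx 0 (by omega))
    omega
  have hℓ1 : 1 ≤ ℓ := by
    rw [← SimpleGraph.card_neighborFinset_eq_degree] at hdeg0
    obtain ⟨z, hzmem⟩ := Finset.card_pos.1 hdeg0
    rw [SimpleGraph.mem_neighborFinset] at hzmem
    obtain ⟨j, hjℓ, hjz⟩ := hfront z hzmem
    rcases Nat.eq_zero_or_pos j with h0 | h0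
    · subst h0; rw [hjz] at hzmem; exact absurd hzmem (G.irrefl)
    · omega
  set A : Finset ℕ := (Finset.Icc 1 ℓ).filter (fun i => G.Adj (x 0) (x i)) with hAdef
  set B : Finset ℕ := (Finset.Icc 1 ℓ).filter (fun i => G.Adj (x ℓ) (x (i - 1))) with hBdef
  have hAcard : G.degree (x 0) = A.card := by
    rw [← SimpleGraph.card_neighborFinset_eq_degree]
    have himg : G.neighborFinset (x 0) = A.image x := by
      ext z
      simp only [SimpleGraph.mem_neighborFinset, Finset.mem_image, hAdef, Finset.mem_filter,
        Finset.mem_Icc]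
      constructor
      · intro hz
        obtain ⟨j, hjℓ, hjz⟩ := hfront z hz
        have hj0 : j ≠ 0 := by
          intro h; subst h; rw [hjz] at hz; exact absurd hz (G.irrefl)
        exact ⟨j, ⟨⟨by omega, hjℓ⟩, by rw [hjz]; exact hz⟩, hjz⟩
      · rintro ⟨j, ⟨_, hj⟩, rfl⟩
        exact hj
    rw [himg, Finset.card_image_of_injOn]
    intro a haA b hbB hab
    simp only [hAdef, Finset.mem_coe, Finset.mem_filter, Finset.mem_Icc] at haA hbB
    exact hinj a (by omega) b (by omega) hab
  have hBcard : G.degree (x ℓ) = B.card := by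
    rw [← SimpleGraph.card_neighborFinset_eq_degree]
    have himg : G.neighborFinset (x ℓ) = B.image (fun i => x (i - 1)) := by
      ext z
      simp only [SimpleGraph.mem_neighborFinset, Finset.mem_image, hBdef, Finset.mem_filter,
        Finset.mem_Icc]
      constructor
      · intro hz
        obtain ⟨j, hjℓ, hjz⟩ := hback z hz
        have hjℓ' : j ≠ ℓ := by
          intro h; subst h; rw [hjz] at hz; exact absurd hz (G.irrefl)
        refine ⟨j + 1, ⟨⟨by omega, by omega⟩, ?_⟩, ?_⟩
        · have e : j + 1 - 1 = j := by omega
          rw [e, hjz]; exact hz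
        · have e : j + 1 - 1 = j := by omega
          rw [e]; exact hjz
      · rintro ⟨j, ⟨_, hj⟩, rfl⟩
        exact hj
    rw [himg, Finset.card_image_of_injOn]
    intro a haA b hbB hab
    simp only [hBdef, Finset.mem_coe, Finset.mem_filter, Finset.mem_Icc] at haA hbB
    have := hinj (a - 1) (by omega) (b - 1) (by omega) hab
    omega
  have hABsub : A ∪ B ⊆ Finset.Icc 1 ℓ := by
    intro i hi
    rcases Finset.mem_union.1 hi with h | h <;>
      [exact (Finset.mem_filter.1 h).1; exact (Finset.mem_filter.1 h).1]
  have hABnonempty : (A ∩ B).Nonempty := by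
    by_contra hempty
    rw [Finset.not_nonempty_iff_eq_empty] at hempty
    have hdisj : Disjoint A B := Finset.disjoint_iff_inter_eq_empty.2 hempty
    have h1 := Finset.card_union_of_disjoint hdisj
    have h2 := Finset.card_le_card hABsub
    rw [h1, Nat.card_Icc] at h2
    have hd1 := hdeg (x 0) (hreachx 0 (by omega))
    have hd2 := hdeg (x ℓ) (hreachx ℓ le_rfl)
    omega
  obtain ⟨i, hiAB⟩ := hABnonempty
  rw [Finset.mem_inter] at hiAB
  have hiA := Finset.mem_filter.1 hiAB.1
  have hiB := Finset.mem_filter.1 hiAB.2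
  rw [Finset.mem_Icc] at hiA
  have hi1 : 1 ≤ i := hiA.1.1
  have hiℓ : i ≤ ℓ := hiA.1.2
  have hA0 : G.Adj (x 0) (x i) := hiA.2
  have hBℓ : G.Adj (x ℓ) (x (i - 1)) := hiB.2
  -- the cycle
  set σ : ℕ → ℕ := fun j => if j < i then j else ℓ + i - j with hσdef
  set c : ℕ → V := fun j => x (σ j) with hcdef
  have hσle : ∀ j, j ≤ ℓ → σ j ≤ ℓ := by
    intro j hj; simp only [hσdef]; split <;> omega
  have hσinj : ∀ j, j ≤ ℓ → ∀ j', j' ≤ ℓ → σ j = σ j' → j = j' := by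
    intro j hj j' hj'
    simp only [hσdef]
    split <;> split <;> omega
  have hcinj : ∀ j, j ≤ ℓ → ∀ j', j' ≤ ℓ → c j = c j' → j = j' := by
    intro j hj j' hj' hc
    exact hσinj j hj j' hj' (hinj _ (hσle j hj) _ (hσle j' hj') hc)
  have hcadj : ∀ j, j < ℓ → G.Adj (c j) (c (j + 1)) := by
    intro j hj
    simp only [hcdef, hσdef]
    rcases Nat.lt_trichotomy (j + 1) i with h | h | h
    · rw [if_pos (by omega), if_pos h]
      exact hadj j hj
    · rw [if_pos (by omega), if_neg (by omega)]
      have e2 : ℓ + i - (j + 1) = ℓ := by omega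
      have e1 : j = i - 1 := by omega
      rw [e2, e1]
      exact hBℓ.symm
    · rw [if_neg (by omega), if_neg (by omega)]
      have e : ℓ + i - j = (ℓ + i - (j + 1)) + 1 := by omega
      rw [e]
      exact (hadj (ℓ + i - (j + 1)) (by omega)).symm
  have hcclose : G.Adj (c ℓ) (c 0) := by
    simp only [hcdef, hσdef]
    rw [if_neg (by omega), if_pos (by omega)]
    have e : ℓ + i - ℓ = i := by omega
    rw [e]
    exact hA0.symm
  have hcadjmod : ∀ r, G.Adj (c (r % (ℓ + 1))) (c ((r + 1) % (ℓ + 1))) := by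
    intro r
    have hq : r % (ℓ + 1) < ℓ + 1 := Nat.mod_lt _ (by omega)
    have hmod : (r + 1) % (ℓ + 1) = (r % (ℓ + 1) + 1) % (ℓ + 1) := by
      conv_lhs => rw [Nat.add_mod, Nat.mod_eq_of_lt (show 1 < ℓ + 1 by omega)]
    rcases Nat.lt_or_ge (r % (ℓ + 1)) ℓ with h | h
    · have h2 : (r % (ℓ + 1) + 1) % (ℓ + 1) = r % (ℓ + 1) + 1 := Nat.mod_eq_of_lt (by omega)
      rw [hmod, h2]
      exact hcadj _ h
    · have he : r % (ℓ + 1) = ℓ := by omega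
      rw [hmod, he, Nat.mod_self]
      exact hcclose
  -- a vertex outside the path, inside T
  have hout : ∃ yv ∈ T, ¬ inX yv := by
    by_contra hcon
    push_neg at hcon
    have hsub : T ⊆ (Finset.range (ℓ + 1)).image x := by
      intro w hw
      obtain ⟨j, hjℓ, hjw⟩ := hcon w hw
      exact Finset.mem_image.2 ⟨j, Finset.mem_range.2 (by omega), hjw⟩
    have := Finset.card_le_card hsub
    have h2 := Finset.card_image_le (s := Finset.range (ℓ + 1)) (f := x)
    rw [Finset.card_range] at h2
    omega
  obtain ⟨yv, hyT, hyX⟩ := hout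
  have hreachy : G.Reachable (x 0) yv := (hreachx 0 (by omega)).symm.trans (hT yv hyT)
  obtain ⟨w⟩ := hreachy
  have hx0X : inX (x 0) := ⟨0, by omega, rfl⟩
  obtain ⟨a, b, haX, hbX, habAdj⟩ := cross_walk inX w hx0X hyX
  obtain ⟨s, hsℓ, hsa⟩ := haX
  set t : ℕ := if s < i then s else ℓ + i - s with htdef
  have htℓ : t ≤ ℓ := by simp only [htdef]; split <;> omega
  have hct : c t = a := by
    rw [← hsa, hcdef]
    congr 1
    rcases Nat.lt_or_ge s i with h | h
    · have ht : t = s := by rw [htdef, if_pos h]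
      rw [ht]
      simp only [hσdef]
      rw [if_pos h]
    · have ht : t = ℓ + i - s := by rw [htdef, if_neg (by omega)]
      rw [ht]
      simp only [hσdef]
      rw [if_neg (by omega)]
      exact congrArg x (Nat.sub_sub_self (le_trans hsℓ (Nat.le_add_right ℓ i)))
  -- the new path of length ℓ + 1
  set y : ℕ → V := fun m => if m = 0 then b else c ((t + (m - 1)) % (ℓ + 1)) with hydef
  have hy0 : y 0 = b := if_pos rfl
  have hys : ∀ m, 1 ≤ m → y m = c ((t + (m - 1)) % (ℓ + 1)) := fun m hm => if_neg (by omega)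
  have hcXmem : ∀ r, inX (c (r % (ℓ + 1))) := by
    intro r
    have h1 : r % (ℓ + 1) ≤ ℓ := by
      have := Nat.mod_lt r (show 0 < ℓ + 1 by omega)
      omega
    exact ⟨σ (r % (ℓ + 1)), hσle _ h1, rfl⟩
  refine ⟨y, ⟨?_, ?_⟩, ?_⟩
  · intro m hm
    rcases Nat.eq_zero_or_pos m with h0 | h0
    · subst h0
      rw [hy0, hys 1 le_rfl]
      have e : t + (1 - 1) = t := by omega
      rw [e, Nat.mod_eq_of_lt (by omega)]
      rw [hct]
      exact habAdj.symm
    · rw [hys m h0, hys (m + 1) (by omega)]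
      have e1 : t + (m + 1 - 1) = (t + (m - 1)) + 1 := by omega
      rw [e1]
      exact hcadjmod (t + (m - 1))
  · intro a' ha' b' hb' hab
    rcases Nat.eq_zero_or_pos a' with ha0 | ha0 <;> rcases Nat.eq_zero_or_pos b' with hb0 | hb0
    · omega
    · exfalso
      subst ha0
      rw [hy0, hys b' hb0] at hab
      exact hbX (hab ▸ hcXmem (t + (b' - 1)))
    · exfalso
      subst hb0
      rw [hy0, hys a' ha0] at hab
      exact hbX (hab ▸ hcXmem (t + (a' - 1)))
    · rw [hys a' ha0, hys b' hb0] at hab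
      have h1 : (t + (a' - 1)) % (ℓ + 1) ≤ ℓ := by
        have := Nat.mod_lt (t + (a' - 1)) (show 0 < ℓ + 1 by omega); omega
      have h2 : (t + (b' - 1)) % (ℓ + 1) ≤ ℓ := by
        have := Nat.mod_lt (t + (b' - 1)) (show 0 < ℓ + 1 by omega); omega
      have heq := hcinj _ h1 _ h2 hab
      have hmodeq : (t + (a' - 1)) ≡ (t + (b' - 1)) [MOD (ℓ + 1)] := heq
      have hcancel : (a' - 1) ≡ (b' - 1) [MOD (ℓ + 1)] := hmodeq.add_left_cancel' t
      have := hcancel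
      unfold Nat.ModEq at this
      rw [Nat.mod_eq_of_lt (by omega), Nat.mod_eq_of_lt (by omega)] at this
      omega
  · rw [hy0]
    have hreacha : G.Reachable v a := by rw [← hsa]; exact hreachx s hsℓ
    exact hreacha.trans habAdj.reachable

end Big
lemma walk_end_adj {V : Type*} {G : SimpleGraph V} :
    ∀ {a b : V}, G.Walk a b → a ≠ b → ∃ u, G.Adj u b := by
  intro a b p
  induction p with
  | nil => intro h; exact absurd rfl h
  | @cons a c d hadj q ih =>
    intro _
    by_cases hcd : c = d
    · subst hcd; exact ⟨a, hadj⟩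
    · exact ih hcd

lemma key {V : Type*} [Fintype V] [DecidableEq V] (k : ℕ) (hk : 1 ≤ k) :
    ∀ (m : ℕ) (S : Finset V) (G : SimpleGraph V) [DecidableRel G.Adj],
      S.card ≤ m → (∀ a b, G.Adj a b → a ∈ S ∧ b ∈ S) → (∀ x : ℕ → V, ¬ PathIn G k x) →
      2 * G.edgeFinset.card ≤ (k - 1) * S.card := by
  intro m
  induction m with
  | zero =>
    intro S G _ hcard hsupp _
    have hS : S = ∅ := Finset.card_eq_zero.1 (by omega)
    have hE : G.edgeFinset = ∅ := by
      rw [Finset.eq_empty_iff_forall_notMem]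
      intro e
      refine Sym2.ind (fun a b he => ?_) e
      rw [mem_edgeFinset, mem_edgeSet] at he
      have := (hsupp a b he).1
      rw [hS] at this
      exact absurd this (Finset.notMem_empty a)
    rw [hE]
    simp
  | succ m ih =>
    intro S G _ hcard hsupp hnopath
    classical
    by_cases hA : ∃ v ∈ S, 2 * G.degree v + 1 ≤ k
    · obtain ⟨v, hvS, hvdeg⟩ := hA
      have hcard' : (S.erase v).card ≤ m := by
        rw [Finset.card_erase_of_mem hvS]
        omega
      have hsupp' : ∀ a b, (G.delAt v).Adj a b → a ∈ S.erase v ∧ b ∈ S.erase v := by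
        rintro a b ⟨hab, ha, hb⟩
        exact ⟨Finset.mem_erase.2 ⟨ha, (hsupp a b hab).1⟩,
          Finset.mem_erase.2 ⟨hb, (hsupp a b hab).2⟩⟩
      have hnopath' : ∀ x : ℕ → V, ¬ PathIn (G.delAt v) k x := by
        intro x hx
        exact hnopath x ⟨fun i hi => (hx.1 i hi).1, hx.2⟩
      have hih := ih (S.erase v) (G.delAt v) hcard' hsupp' hnopath'
      have hdel := delAt_card_edgeFinset G v
      rw [Finset.card_erase_of_mem hvS] at hih
      have hS1 : 1 ≤ S.card := Finset.card_pos.2 ⟨v, hvS⟩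
      obtain ⟨c, hc⟩ : ∃ c, S.card = c + 1 := ⟨S.card - 1, by omega⟩
      rw [hc] at hih ⊢
      have hmul : (k - 1) * (c + 1) = (k - 1) * c + (k - 1) := by ring
      have hce : c + 1 - 1 = c := by omega
      rw [hce] at hih
      omega
    · push_neg at hA
      have hB : ∀ v ∈ S, k ≤ 2 * G.degree v := by
        intro v hv
        have := hA v hv
        omega
      by_cases hB1 : ∀ v ∈ S, (Finset.univ.filter (fun w => G.Reachable v w)).card ≤ k
      · have hdegle : ∀ v ∈ S, G.degree v ≤ k - 1 := by
          intro v hv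
          have hcompcard := hB1 v hv
          have hsub : G.neighborFinset v ⊆
              (Finset.univ.filter (fun w => G.Reachable v w)).erase v := by
            intro u hu
            rw [SimpleGraph.mem_neighborFinset] at hu
            exact Finset.mem_erase.2
              ⟨hu.ne', Finset.mem_filter.2 ⟨Finset.mem_univ u, hu.reachable⟩⟩
          have hle := Finset.card_le_card hsub
          rw [Finset.card_erase_of_mem
            (Finset.mem_filter.2 ⟨Finset.mem_univ v, SimpleGraph.Reachable.refl v⟩)] at hle
          rw [← SimpleGraph.card_neighborFinset_eq_degree]
          have hfix : (Finset.univ.filter (G.Reachable v)).card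
              = (Finset.univ.filter (fun w => G.Reachable v w)).card := rfl
          omega
        have hdeg0 : ∀ v, v ∉ S → G.degree v = 0 := by
          intro v hv
          rw [← SimpleGraph.card_neighborFinset_eq_degree, Finset.card_eq_zero,
            Finset.eq_empty_iff_forall_notMem]
          intro u hu
          rw [SimpleGraph.mem_neighborFinset] at hu
          exact hv (hsupp v u hu).1
        have hsum := G.sum_degrees_eq_twice_card_edges
        have h1 : ∑ v ∈ S, G.degree v = ∑ v ∈ Finset.univ, G.degree v :=
          Finset.sum_subset (Finset.subset_univ S) (fun x _ hx => hdeg0 x hx)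
        have h2 : ∑ v ∈ S, G.degree v ≤ ∑ _v ∈ S, (k - 1) := Finset.sum_le_sum hdegle
        rw [Finset.sum_const, smul_eq_mul] at h2
        have h3 : S.card * (k - 1) = (k - 1) * S.card := Nat.mul_comm _ _
        omega
      · push_neg at hB1
        obtain ⟨v, hvS, hvcomp⟩ := hB1
        have hreachdeg : ∀ w, G.Reachable v w → k ≤ 2 * G.degree w := by
          intro w hw
          by_cases hwv : w = v
          · subst hwv; exact hB w hvS
          · obtain ⟨p⟩ := hw
            obtain ⟨u, hu⟩ := walk_end_adj p (fun h => hwv h.symm)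
            exact hB w (hsupp u w hu).2
        obtain ⟨x, hx⟩ := exists_long_path G k hk v hreachdeg
          (Finset.univ.filter (fun w => G.Reachable v w))
          (fun w hw => (Finset.mem_filter.1 hw).2) (by omega)
        exact absurd hx (hnopath x)

/-- Erdős–Gallai: every graph on `n` vertices with no path on `k+1` vertices
(i.e. no path with `k` edges) has at most `(k-1)n/2` edges. -/
theorem stmt_13 (k n : ℕ) (hk : 1 ≤ k) (hn : 1 ≤ n)
    (G : SimpleGraph (Fin n)) (hG : ¬ HasSubCopy (pathGraph (k + 1)) G) :
    (G.edgeSet.ncard : ℝ) ≤ ((k : ℝ) - 1) * n / 2 := by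
  classical
  letI : DecidableRel G.Adj := Classical.decRel _
  have hnopath : ∀ x : ℕ → Fin n, ¬ PathIn G k x := fun x hx => hG hx.hasSubCopy
  have hkey := key k hk n Finset.univ G
    (by simp)
    (fun a b _ => ⟨Finset.mem_univ a, Finset.mem_univ b⟩) hnopath
  rw [Finset.card_univ, Fintype.card_fin] at hkey
  have hE : G.edgeSet.ncard = G.edgeFinset.card := by
    rw [Set.ncard_eq_toFinset_card' G.edgeSet]
    congr 1
  rw [hE]
  have hcast : ((2 * G.edgeFinset.card : ℕ) : ℝ) ≤ (((k - 1) * n : ℕ) : ℝ) :=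
    Nat.cast_le.2 hkey
  rw [Nat.cast_mul, Nat.cast_mul, Nat.cast_sub hk, Nat.cast_ofNat, Nat.cast_one] at hcast
  linarith
end
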